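/- arXiv:0907.5273 — 8 statements merged into one kernel-verified Lean document; each statement's English description precedes it below -/
import Mathlib

section
/- Let (X, 𝒜, μ) be a finite measure space and let V ⊆ U ⊆ 𝒜 be sub-σ-algebras such that U is atomless over V. Then there exists a U-measurable function h : X → [0,1] such that for every t ∈ [0,1], μ[χ_{{h ≤ t}} | V] = t a.e. (where the right-hand side is the constant function t). -/
open MeasureTheory ENNReal

/-- `U` is atomless over `V` (both sub-σ-algebras on `X`): every `U`-measurable set `A` of
positive finite measure admits a `U`-measurable `B` such that `A ∩ B` differs from `A ∩ C`
on a set of positive measure, for every `V`-measurable `C`. -/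
def AtomlessOver {X : Type*} {_mX : MeasurableSpace X} (μ : Measure X)
    (U V : MeasurableSpace X) : Prop :=
  ∀ A : Set X, MeasurableSet[U] A → 0 < μ A → μ A < ⊤ →
    ∃ B : Set X, MeasurableSet[U] B ∧
      ∀ C : Set X, MeasurableSet[V] C → 0 < μ (symmDiff (A ∩ B) (A ∩ C))



namespace CondUnifAux

set_option linter.unusedSectionVars false

variable {X : Type*} {V : MeasurableSpace X} {mX : MeasurableSpace X} {μ : Measure X}
  [IsFiniteMeasure μ]

/-- real indicator of a set -/
noncomputable def ind (S : Set X) : X → ℝ := S.indicator fun _ => 1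

lemma ind_nonneg (S : Set X) : (0 : X → ℝ) ≤ ind S := fun x =>
  Set.indicator_nonneg (fun _ _ => zero_le_one) x

lemma ind_le_one (S : Set X) : ind S ≤ fun _ => (1:ℝ) := fun x => by
  by_cases h : x ∈ S <;> simp [ind, h]

lemma ind_mono {S T : Set X} (h : S ⊆ T) : ind S ≤ ind T := fun x =>
  Set.indicator_le_indicator_of_subset h (fun _ => zero_le_one) x

lemma integrable_ind (S : Set X) (hS : MeasurableSet[mX] S) : Integrable (ind S) μ :=
  (integrable_const (1:ℝ)).indicator hS

lemma setIntegral_ind {S C : Set X} (hS : MeasurableSet[mX] S) (hC : MeasurableSet[mX] C) :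
    ∫ x in C, ind S x ∂μ = (μ (S ∩ C)).toReal := by
  rw [ind, setIntegral_indicator hS, setIntegral_const, Set.inter_comm, smul_eq_mul, mul_one]
  rfl

lemma integral_ind {S : Set X} (hS : MeasurableSet[mX] S) :
    ∫ x, ind S x ∂μ = (μ S).toReal := integral_indicator_one hS

lemma setIntegral_condexp_ind (hV : V ≤ mX) {S C : Set X} (hS : MeasurableSet[mX] S)
    (hC : MeasurableSet[V] C) :
    ∫ x in C, (μ[ind S|V]) x ∂μ = (μ (S ∩ C)).toReal := by
  rw [setIntegral_condExp hV (integrable_ind S hS) hC, setIntegral_ind hS (hV _ hC)]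

lemma integral_condexp_ind (hV : V ≤ mX) {S : Set X} (hS : MeasurableSet[mX] S) :
    ∫ x, (μ[ind S|V]) x ∂μ = (μ S).toReal := by
  rw [integral_condExp hV, integral_ind hS]

lemma condexp_ind_nonneg (S : Set X) : 0 ≤ᵐ[μ] μ[ind S|V] :=
  condExp_nonneg (Filter.Eventually.of_forall (ind_nonneg S))

lemma condexp_ind_le_one (hV : V ≤ mX) {S : Set X} (hS : MeasurableSet[mX] S) :
    μ[ind S|V] ≤ᵐ[μ] fun _ => (1:ℝ) := by
  have := condExp_mono (μ := μ) (m := V) (integrable_ind S hS) (integrable_const (1:ℝ))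
    (Filter.Eventually.of_forall (ind_le_one S))
  rwa [condExp_const hV] at this

lemma condexp_ind_mono (hV : V ≤ mX) {S T : Set X} (hS : MeasurableSet[mX] S)
    (hT : MeasurableSet[mX] T) (h : S ⊆ T) : μ[ind S|V] ≤ᵐ[μ] μ[ind T|V] :=
  condExp_mono (μ := μ) (integrable_ind S hS) (integrable_ind T hT)
    (Filter.Eventually.of_forall (ind_mono h))

lemma ind_union {S T : Set X} (h : Disjoint S T) :
    ind (S ∪ T) = ind S + ind T := by
  rw [ind, ind, ind, Set.indicator_union_of_disjoint h]
  rfl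

lemma condexp_ind_union (hV : V ≤ mX) {S T : Set X} (hS : MeasurableSet[mX] S)
    (hT : MeasurableSet[mX] T) (h : Disjoint S T) :
    μ[ind (S ∪ T)|V] =ᵐ[μ] μ[ind S|V] + μ[ind T|V] := by
  rw [ind_union h]
  exact condExp_add (μ := μ) (integrable_ind S hS) (integrable_ind T hT) V

lemma condexp_ind_diff (hV : V ≤ mX) {S T : Set X} (hS : MeasurableSet[mX] S)
    (hT : MeasurableSet[mX] T) (h : S ⊆ T) :
    μ[ind (T \ S)|V] =ᵐ[μ] μ[ind T|V] - μ[ind S|V] := by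
  have e : ind (T \ S) = ind (X := X) T - ind S := Set.indicator_sdiff h _
  rw [e]
  exact condExp_sub (μ := μ) (integrable_ind T hT) (integrable_ind S hS) V

/-- transfer: nonnegativity from `V`-set integrals. -/
lemma ae_nonneg_of_forall_setIntegral_nonneg_V (hV : V ≤ mX) {φ : X → ℝ}
    (hφm : StronglyMeasurable[V] φ) (hφi : Integrable φ μ)
    (h : ∀ C, MeasurableSet[V] C → 0 ≤ ∫ x in C, φ x ∂μ) : 0 ≤ᵐ[μ] φ := by
  have h' : 0 ≤ᵐ[μ.trim hV] φ := by
    refine ae_nonneg_of_forall_setIntegral_nonneg (hφi.trim hV hφm) (fun s hs _ => ?_)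
    rw [← setIntegral_trim hV hφm hs]
    exact h s hs
  exact ae_le_of_ae_le_trim h'

/-- uniqueness: a `V`-measurable candidate with the right set integrals is the condexp. -/
lemma condexp_ind_unique (hV : V ≤ mX) {S : Set X} (hS : MeasurableSet[mX] S) {c : X → ℝ}
    (hcm : StronglyMeasurable[V] c) (hci : Integrable c μ)
    (h : ∀ C, MeasurableSet[V] C → ∫ x in C, c x ∂μ = (μ (S ∩ C)).toReal) :
    μ[ind S|V] =ᵐ[μ] c :=
  (ae_eq_condExp_of_forall_setIntegral_eq hV (integrable_ind S hS)
    (fun s _ _ => hci.restrict)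
    (fun s hs _ => by rw [h s hs, setIntegral_ind hS (hV _ hs)])
    hcm.aestronglyMeasurable).symm

end CondUnifAux


namespace CondUnifAux

set_option linter.unusedSectionVars false

variable {X : Type*} {U V : MeasurableSpace X} {mX : MeasurableSpace X} {μ : Measure X}
  [IsFiniteMeasure μ]

lemma lemA (hUV : _root_.AtomlessOver μ U V) (hVU : V ≤ U) (hU : U ≤ mX) {A : Set X}
    (hA : MeasurableSet[U] A) (hApos : 0 < μ A) :
    ∃ B, B ⊆ A ∧ MeasurableSet[U] B ∧ 0 < μ B ∧
      μ[ind B|V] ≤ᵐ[μ] fun x => (μ[ind A|V]) x / 2 := by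
  have hV : V ≤ mX := hVU.trans hU
  obtain ⟨B0, hB0m, hB0⟩ := hUV A hA hApos (measure_lt_top μ A)
  set c : Set X := A ∩ B0 with hc_def
  have hcU : MeasurableSet[U] c := hA.inter hB0m
  have hcA : c ⊆ A := Set.inter_subset_left
  set gc : X → ℝ := μ[ind c|V] with hgc_def
  set ga : X → ℝ := μ[ind A|V] with hga_def
  have hgcm : Measurable[V] gc := stronglyMeasurable_condExp.measurable
  have hgam : Measurable[V] ga := stronglyMeasurable_condExp.measurable
  set D : Set X := {x | 2 * gc x ≤ ga x} with hD_def
  have hDV : MeasurableSet[V] D := measurableSet_le (hgcm.const_mul 2) hgam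
  refine ⟨(c ∩ D) ∪ ((A \ c) ∩ Dᶜ), ?_, ?_, ?_, ?_⟩
  · intro x hx
    rcases hx with hx | hx
    · exact hcA hx.1
    · exact hx.1.1
  · exact (hcU.inter (hVU _ hDV)).union ((hA.diff hcU).inter (hVU _ hDV.compl))
  · -- positivity
    by_contra h0
    push_neg at h0
    have h0' : μ ((c ∩ D) ∪ ((A \ c) ∩ Dᶜ)) = 0 := le_antisymm h0 (zero_le)
    have h1 : μ (c ∩ D) = 0 := measure_mono_null Set.subset_union_left h0'
    have h2 : μ ((A \ c) ∩ Dᶜ) = 0 := measure_mono_null Set.subset_union_right h0'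
    have hpos := hB0 Dᶜ hDV.compl
    have hnull : μ (symmDiff (A ∩ B0) (A ∩ Dᶜ)) = 0 := by
      rw [symmDiff_def]
      refine measure_union_null (measure_mono_null ?_ h1) (measure_mono_null ?_ h2)
      · intro x hx
        rcases hx with ⟨hx1, hx2⟩
        refine ⟨hx1, ?_⟩
        by_contra hxD
        exact hx2 ⟨hx1.1, hxD⟩
      · intro x hx
        rcases hx with ⟨⟨hxA, hxD⟩, hxc⟩
        exact ⟨⟨hxA, hxc⟩, hxD⟩
    rw [hnull] at hpos
    exact lt_irrefl _ hpos
  · -- conditional expectation bound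
    have hdisj : Disjoint (c ∩ D) ((A \ c) ∩ Dᶜ) :=
      Set.disjoint_left.2 fun x hx hx' => hx'.2 hx.2
    have e4 := condexp_ind_union (μ := μ) hV (hU _ (hcU.inter (hVU _ hDV)))
      (hU _ ((hA.diff hcU).inter (hVU _ hDV.compl))) hdisj
    have e2 : μ[ind (c ∩ D)|V] =ᵐ[μ] D.indicator gc := by
      have e : ind (c ∩ D) = D.indicator (ind c) := by
        rw [ind, ind, Set.indicator_indicator, Set.inter_comm D c]
      rw [e]
      exact condExp_indicator (integrable_ind c (hU _ hcU)) hDV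
    have e1 : μ[ind (A \ c)|V] =ᵐ[μ] ga - gc :=
      condexp_ind_diff hV (hU _ hcU) (hU _ hA) hcA
    have e3 : μ[ind ((A \ c) ∩ Dᶜ)|V] =ᵐ[μ] Dᶜ.indicator (fun x => ga x - gc x) := by
      have e : ind ((A \ c) ∩ Dᶜ) = Dᶜ.indicator (ind (A \ c)) := by
        rw [ind, ind, Set.indicator_indicator, Set.inter_comm Dᶜ _]
      rw [e]
      refine (condExp_indicator (integrable_ind _ (hU _ (hA.diff hcU))) hDV.compl).trans ?_
      filter_upwards [e1] with x hx
      by_cases h : x ∈ Dᶜ <;> simp [Set.indicator, h, hx]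
    filter_upwards [e4, e2, e3] with x h4 h2 h3
    rw [h4]
    simp only [Pi.add_apply] at *
    rw [h2, h3]
    by_cases hx : x ∈ D
    · have hxd : 2 * gc x ≤ ga x := hx
      simp only [Set.indicator_of_mem hx, Set.indicator_of_notMem (by simp [hx] : x ∉ Dᶜ)]
      linarith
    · have hxd : ¬ (2 * gc x ≤ ga x) := hx
      simp only [Set.indicator_of_notMem hx, Set.indicator_of_mem (by simp [hx] : x ∈ Dᶜ)]
      linarith

end CondUnifAux


namespace CondUnifAux

set_option linter.unusedSectionVars false

variable {X : Type*} {U V : MeasurableSpace X} {mX : MeasurableSpace X} {μ : Measure X}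
  [IsFiniteMeasure μ]

lemma lemA' (hUV : AtomlessOver μ U V) (hVU : V ≤ U) (hU : U ≤ mX) {A : Set X}
    (hA : MeasurableSet[U] A) (hApos : 0 < μ A) (n : ℕ) :
    ∃ B, B ⊆ A ∧ MeasurableSet[U] B ∧ 0 < μ B ∧
      μ[ind B|V] ≤ᵐ[μ] fun x => (μ[ind A|V]) x / 2 ^ n := by
  induction n with
  | zero =>
    refine ⟨A, subset_rfl, hA, hApos, ?_⟩
    simp only [pow_zero, div_one]
    exact Filter.EventuallyLE.rfl
  | succ n ih =>
    obtain ⟨B, hBA, hBm, hBpos, hBle⟩ := ih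
    obtain ⟨B', hB'B, hB'm, hB'pos, hB'le⟩ := lemA hUV hVU hU hBm hBpos
    refine ⟨B', hB'B.trans hBA, hB'm, hB'pos, ?_⟩
    filter_upwards [hB'le, hBle] with x h1 h2
    rw [pow_succ]
    calc (μ[ind B'|V]) x ≤ (μ[ind B|V]) x / 2 := h1
    _ ≤ (μ[ind A|V]) x / 2 ^ n / 2 := by linarith
    _ = (μ[ind A|V]) x / (2 ^ n * 2) := by ring

lemma lemD (hUV : AtomlessOver μ U V) (hVU : V ≤ U) (hU : U ≤ mX) {A' : Set X}
    (hA' : MeasurableSet[U] A') {f' : X → ℝ} (hf'm : StronglyMeasurable[V] f')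
    (hf'i : Integrable f' μ) (hf'0 : 0 ≤ᵐ[μ] f')
    (hf'le : f' ≤ᵐ[μ] μ[ind A'|V]) (hpos : 0 < ∫ x, f' x ∂μ) :
    ∃ P, P ⊆ A' ∧ MeasurableSet[U] P ∧ 0 < μ P ∧ μ[ind P|V] ≤ᵐ[μ] f' := by
  have hV : V ≤ mX := hVU.trans hU
  -- find ε > 0 with positive measure of {ε ≤ f'}
  obtain ⟨ε, hε, hDpos⟩ : ∃ ε : ℝ, 0 < ε ∧ 0 < μ {x | ε ≤ f' x} := by
    by_contra hcon
    push_neg at hcon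
    have hnull : ∀ n : ℕ, μ {x | 1 / (n + 1) ≤ f' x} = 0 := fun n =>
      le_antisymm (hcon _ (by positivity)) (zero_le)
    have hUnull : μ (⋃ n : ℕ, {x | 1 / (n + 1 : ℝ) ≤ f' x}) = 0 :=
      measure_iUnion_null hnull
    have hsub : {x | 0 < f' x} ⊆ ⋃ n : ℕ, {x | 1 / (n + 1 : ℝ) ≤ f' x} := by
      intro x hx
      obtain ⟨n, hn⟩ := exists_nat_gt (1 / f' x)
      refine Set.mem_iUnion.2 ⟨n, ?_⟩
      have h1 : 1 / f' x < n + 1 := hn.trans (by linarith)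
      have := (div_lt_iff₀ hx).mp h1
      rw [Set.mem_setOf_eq, div_le_iff₀ (by positivity)]
      linarith
    have hle0 : f' ≤ᵐ[μ] 0 := by
      have : μ {x | 0 < f' x} = 0 := measure_mono_null hsub hUnull
      filter_upwards [measure_eq_zero_iff_ae_notMem.mp this] with x hx
      simpa using not_lt.mp hx
    have := integral_nonpos_of_ae hle0
    linarith
  set D : Set X := {x | ε ≤ f' x} with hD_def
  have hDV : MeasurableSet[V] D := measurableSet_le measurable_const hf'm.measurable
  -- A'' = A' ∩ D has positive measure
  have hA''m : MeasurableSet[U] (A' ∩ D) := hA'.inter (hVU _ hDV)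
  have hA''pos : 0 < μ (A' ∩ D) := by
    have h1 : ε * (μ D).toReal ≤ ∫ x in D, f' x ∂μ := by
      have := setIntegral_mono_on (integrableOn_const (measure_lt_top μ D).ne)
        hf'i.restrict (hV _ hDV) (fun x hx => hx)
      rwa [setIntegral_const, smul_eq_mul, mul_comm] at this
    have h2 : ∫ x in D, f' x ∂μ ≤ ∫ x in D, (μ[ind A'|V]) x ∂μ :=
      setIntegral_mono_ae hf'i.restrict integrable_condExp.restrict hf'le
    have h3 : ∫ x in D, (μ[ind A'|V]) x ∂μ = (μ (A' ∩ D)).toReal :=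
      setIntegral_condexp_ind hV (hU _ hA') hDV
    have h4 : 0 < (μ D).toReal := ENNReal.toReal_pos hDpos.ne' (measure_lt_top μ D).ne
    have : 0 < (μ (A' ∩ D)).toReal := by nlinarith
    exact ENNReal.toReal_pos_iff.mp this |>.1
  -- choose n with (1/2)^n < ε
  obtain ⟨n, hn⟩ := exists_pow_lt_of_lt_one hε (by norm_num : (1:ℝ) / 2 < 1)
  obtain ⟨P, hPA'', hPm, hPpos, hPle⟩ := lemA' hUV hVU hU hA''m hA''pos n
  refine ⟨P, hPA''.trans Set.inter_subset_left, hPm, hPpos, ?_⟩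
  have hPD : P ⊆ D := hPA''.trans Set.inter_subset_right
  have hsupp : μ[ind P|V] =ᵐ[μ] D.indicator (μ[ind P|V]) := by
    have e : ind P = D.indicator (ind P) := by
      rw [ind, Set.indicator_indicator, Set.inter_eq_right.2 hPD]
    nth_rewrite 1 [e]
    exact condExp_indicator (integrable_ind P (hU _ hPm)) hDV
  have hone := condexp_ind_le_one (μ := μ) hV (hU _ hA''m)
  filter_upwards [hsupp, hPle, hone, hf'0] with x hx1 hx2 hx3 hx4
  rw [hx1]
  by_cases hxD : x ∈ D
  · rw [Set.indicator_of_mem hxD]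
    have hc : (0:ℝ) < 2 ^ n := by positivity
    have h6 : (μ[ind (A' ∩ D)|V]) x / 2 ^ n ≤ 1 / 2 ^ n := by gcongr
    have h7 : (1:ℝ) / 2 ^ n < ε := by rwa [← one_div_pow]
    have hxε : ε ≤ f' x := hxD
    linarith [hx2]
  · rw [Set.indicator_of_notMem hxD]
    exact hx4

end CondUnifAux


namespace CondUnifAux

set_option linter.unusedSectionVars false
set_option maxHeartbeats 1000000

variable {X : Type*} {U V : MeasurableSpace X} {mX : MeasurableSpace X} {μ : Measure X}
  [IsFiniteMeasure μ]

/-- feasibility predicate for the exhaustion argument -/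
def Feas (U V : MeasurableSpace X) {mX : MeasurableSpace X} (μ : Measure X) (f : X → ℝ)
    (A B : Set X) : Prop :=
  B ⊆ A ∧ MeasurableSet[U] B ∧ μ[ind B|V] ≤ᵐ[μ] f

lemma lemE (hUV : AtomlessOver μ U V) (hVU : V ≤ U) (hU : U ≤ mX) {A : Set X}
    (hA : MeasurableSet[U] A) {f : X → ℝ} (hfm : StronglyMeasurable[V] f)
    (hfi : Integrable f μ) (hf0 : 0 ≤ᵐ[μ] f) (hfle : f ≤ᵐ[μ] μ[ind A|V]) :
    ∃ B, B ⊆ A ∧ MeasurableSet[U] B ∧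
      ∀ C, MeasurableSet[V] C → (μ (B ∩ C)).toReal = ∫ x in C, f x ∂μ := by
  classical
  have hV : V ≤ mX := hVU.trans hU
  have feas_empty : Feas U V μ f A ∅ := by
    refine ⟨Set.empty_subset _, (@MeasurableSet.empty X U), ?_⟩
    have e : ind (∅ : Set X) = (0 : X → ℝ) := by funext x; simp [ind]
    rw [e, condExp_zero]
    exact hf0
  have key : ∀ B, Feas U V μ f A B → ∃ P,
      (P ⊆ A \ B ∧ MeasurableSet[U] P ∧ Feas U V μ f A (B ∪ P)) ∧
      ∀ P', P' ⊆ A \ B → MeasurableSet[U] P' → Feas U V μ f A (B ∪ P') →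
        (μ P').toReal ≤ 2 * (μ P).toReal := by
    intro B hB
    set T : Set ℝ := {r | ∃ P', (P' ⊆ A \ B ∧ MeasurableSet[U] P' ∧ Feas U V μ f A (B ∪ P'))
      ∧ r = (μ P').toReal} with hT_def
    have hT0 : (0:ℝ) ∈ T := by
      refine ⟨∅, ⟨Set.empty_subset _, (@MeasurableSet.empty X U), by rwa [Set.union_empty]⟩, by simp⟩
    have hTbdd : BddAbove T := by
      refine ⟨(μ Set.univ).toReal, fun r hr => ?_⟩
      obtain ⟨P', _, hr'⟩ := hr
      rw [hr']
      exact ENNReal.toReal_mono (measure_ne_top μ _) (measure_mono (Set.subset_univ _))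
    have hs0 : 0 ≤ sSup T := le_csSup hTbdd hT0
    rcases eq_or_lt_of_le hs0 with hs | hs
    · refine ⟨∅, ⟨Set.empty_subset _, (@MeasurableSet.empty X U), by rwa [Set.union_empty]⟩,
        fun P' h1 h2 h3 => ?_⟩
      have h4 : (μ P').toReal ≤ sSup T := le_csSup hTbdd ⟨P', ⟨h1, h2, h3⟩, rfl⟩
      simp only [measure_empty, ENNReal.toReal_zero, mul_zero]
      linarith [hs ▸ h4]
    · obtain ⟨r, hrT, hrs⟩ := exists_lt_of_lt_csSup ⟨0, hT0⟩ (half_lt_self hs)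
      obtain ⟨P, hPprop, hPr⟩ := hrT
      refine ⟨P, hPprop, fun P' h1 h2 h3 => ?_⟩
      have h4 : (μ P').toReal ≤ sSup T := le_csSup hTbdd ⟨P', ⟨h1, h2, h3⟩, rfl⟩
      rw [hPr] at hrs
      linarith
  choose pick hpick1 hpick2 using key
  let seq : ℕ → {B : Set X // Feas U V μ f A B} := fun n =>
    Nat.rec ⟨∅, feas_empty⟩ (fun _ p => ⟨p.1 ∪ pick p.1 p.2, (hpick1 p.1 p.2).2.2⟩) n
  set Bn : ℕ → Set X := fun n => (seq n).1 with hBn_def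
  set Pn : ℕ → Set X := fun n => pick (Bn n) (seq n).2 with hPn_def
  have hseq_succ : ∀ n, Bn (n+1) = Bn n ∪ Pn n := fun n => rfl
  have hFeas : ∀ n, Feas U V μ f A (Bn n) := fun n => (seq n).2
  have hPnp : ∀ n, Pn n ⊆ A \ Bn n ∧ MeasurableSet[U] (Pn n) ∧ Feas U V μ f A (Bn n ∪ Pn n) :=
    fun n => hpick1 _ _
  have hPnmax : ∀ n P', P' ⊆ A \ Bn n → MeasurableSet[U] P' → Feas U V μ f A (Bn n ∪ P') →
      (μ P').toReal ≤ 2 * (μ (Pn n)).toReal := fun n => hpick2 _ _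
  have hmono : Monotone Bn := monotone_nat_of_le_succ (fun n => by
    rw [hseq_succ]; exact Set.subset_union_left)
  set B : Set X := ⋃ n, Bn n with hB_def
  have hBA : B ⊆ A := Set.iUnion_subset fun n => (hFeas n).1
  have hBU : MeasurableSet[U] B := MeasurableSet.iUnion fun n => (hFeas n).2.1
  have hBnB : ∀ n, Bn n ⊆ B := fun n => Set.subset_iUnion Bn n
  have claim1 : ∀ C, MeasurableSet[V] C → (μ (B ∩ C)).toReal ≤ ∫ x in C, f x ∂μ := by
    intro C hC
    have hint_n : ∀ n, (μ (Bn n ∩ C)).toReal ≤ ∫ x in C, f x ∂μ := fun n => by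
      rw [← setIntegral_condexp_ind hV (hU _ (hFeas n).2.1) hC]
      exact setIntegral_mono_ae integrable_condExp.restrict hfi.restrict (hFeas n).2.2
    have hBC : B ∩ C = ⋃ n, (Bn n ∩ C) := by rw [hB_def, Set.iUnion_inter]
    have htend : Filter.Tendsto (fun n => μ (Bn n ∩ C)) Filter.atTop
        (nhds (μ (⋃ n, Bn n ∩ C))) :=
      tendsto_measure_iUnion_atTop (fun i j hij => Set.inter_subset_inter_left _ (hmono hij))
    have hle : μ (B ∩ C) ≤ ENNReal.ofReal (∫ x in C, f x ∂μ) := by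
      rw [hBC]
      refine le_of_tendsto htend (Filter.Eventually.of_forall fun n => ?_)
      calc μ (Bn n ∩ C) = ENNReal.ofReal ((μ (Bn n ∩ C)).toReal) :=
            (ENNReal.ofReal_toReal (measure_ne_top _ _)).symm
        _ ≤ _ := ENNReal.ofReal_le_ofReal (hint_n n)
    have hnonneg : 0 ≤ ∫ x in C, f x ∂μ := integral_nonneg_of_ae (ae_restrict_of_ae hf0)
    calc (μ (B ∩ C)).toReal ≤ (ENNReal.ofReal (∫ x in C, f x ∂μ)).toReal :=
          ENNReal.toReal_mono ENNReal.ofReal_ne_top hle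
      _ = ∫ x in C, f x ∂μ := ENNReal.toReal_ofReal hnonneg
  have hgBf : μ[ind B|V] ≤ᵐ[μ] f := by
    set gB : X → ℝ := μ[ind B|V] with hgB_def
    have hφm : StronglyMeasurable[V] (f - gB) := hfm.sub stronglyMeasurable_condExp
    have hφi : Integrable (f - gB) μ := hfi.sub integrable_condExp
    have hnn := ae_nonneg_of_forall_setIntegral_nonneg_V hV hφm hφi (fun C hC => by
      have e : ∫ x in C, (f - gB) x ∂μ = (∫ x in C, f x ∂μ) - ∫ x in C, gB x ∂μ := by
        simp only [Pi.sub_apply]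
        exact integral_sub hfi.restrict integrable_condExp.restrict
      rw [e, hgB_def, setIntegral_condexp_ind hV (hU _ hBU) hC]
      linarith [claim1 C hC])
    filter_upwards [hnn] with x hx
    simp only [Pi.sub_apply, Pi.zero_apply] at hx
    linarith
  have hle' : (μ B).toReal ≤ ∫ x, f x ∂μ := by
    have := claim1 Set.univ MeasurableSet.univ
    simpa [Set.inter_univ] using this
  have hint : (μ B).toReal = ∫ x, f x ∂μ := by
    by_contra hne
    have hlt : (μ B).toReal < ∫ x, f x ∂μ := lt_of_le_of_ne hle' hne
    set f' : X → ℝ := fun x => f x - (μ[ind B|V]) x with hf'_def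
    have hf'm : StronglyMeasurable[V] f' := hfm.sub stronglyMeasurable_condExp
    have hf'i : Integrable f' μ := hfi.sub integrable_condExp
    have hf'0 : 0 ≤ᵐ[μ] f' := by
      filter_upwards [hgBf] with x hx
      simp only [hf'_def, Pi.zero_apply]
      linarith
    have hf'le : f' ≤ᵐ[μ] μ[ind (A \ B)|V] := by
      have hdiff := condexp_ind_diff (μ := μ) hV (hU _ hBU) (hU _ hA) hBA
      filter_upwards [hdiff, hfle] with x h1 h2
      rw [h1]
      simp only [Pi.sub_apply, hf'_def]
      linarith
    have hpos : 0 < ∫ x, f' x ∂μ := by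
      have : ∫ x, f' x ∂μ = (∫ x, f x ∂μ) - (μ B).toReal := by
        rw [hf'_def]
        rw [integral_sub hfi integrable_condExp, integral_condexp_ind hV (hU _ hBU)]
      linarith
    obtain ⟨P, hPAB, hPU, hPpos, hPle⟩ := lemD hUV hVU hU (hA.diff hBU) hf'm hf'i hf'0 hf'le hpos
    have hPB : Disjoint B P := by
      rw [Set.disjoint_right]
      intro x hxP hxB
      exact (hPAB hxP).2 hxB
    have hvalid : ∀ n, (μ P).toReal ≤ 2 * (μ (Pn n)).toReal := by
      intro n
      refine hPnmax n P (hPAB.trans (Set.diff_subset_diff_right (hBnB n))) hPU ?_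
      refine ⟨Set.union_subset (hFeas n).1 (hPAB.trans Set.diff_subset),
        (hFeas n).2.1.union hPU, ?_⟩
      have hdisj : Disjoint (Bn n) P := hPB.mono_left (hBnB n)
      have he := condexp_ind_union (μ := μ) hV (hU _ (hFeas n).2.1) (hU _ hPU) hdisj
      have hm := condexp_ind_mono (μ := μ) hV (hU _ (hFeas n).2.1) (hU _ hBU) (hBnB n)
      filter_upwards [he, hm, hPle] with x h1 h2 h3
      rw [h1]
      simp only [Pi.add_apply, hf'_def] at *
      linarith
    have key2 : ∀ i j, i < j → Disjoint (Pn i) (Pn j) := by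
      intro i j hij
      have h1 : Pn i ⊆ Bn j := by
        refine Set.Subset.trans ?_ (hmono hij)
        rw [hseq_succ]
        exact Set.subset_union_right
      have h2 : Disjoint (Bn j) (Pn j) := by
        rw [Set.disjoint_right]
        intro x hxP hxB
        exact ((hPnp j).1 hxP).2 hxB
      exact h2.mono_left h1
    have hPdisj : Pairwise (Function.onFun Disjoint Pn) := by
      intro i j hij
      rcases lt_or_gt_of_ne hij with h | h
      · exact key2 _ _ h
      · exact (key2 _ _ h).symm
    have hsum : ∑' n, μ (Pn n) = μ (⋃ n, Pn n) :=
      (measure_iUnion hPdisj (fun n => hU _ (hPnp n).2.1)).symm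
    have hfin : ∑' n, μ (Pn n) ≤ μ Set.univ := hsum ▸ measure_mono (Set.subset_univ _)
    set ε : ℝ≥0∞ := ENNReal.ofReal ((μ P).toReal / 2) with hε_def
    have hε0 : ε ≠ 0 := by
      rw [hε_def]
      simp only [ne_eq, ENNReal.ofReal_eq_zero, not_le]
      have : 0 < (μ P).toReal := ENNReal.toReal_pos hPpos.ne' (measure_ne_top _ _)
      linarith
    have hεle : ∀ n, ε ≤ μ (Pn n) := fun n => by
      calc ε ≤ ENNReal.ofReal ((μ (Pn n)).toReal) :=
            ENNReal.ofReal_le_ofReal (by linarith [hvalid n])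
        _ = μ (Pn n) := ENNReal.ofReal_toReal (measure_ne_top _ _)
    have htop : (⊤:ℝ≥0∞) ≤ ∑' n, μ (Pn n) := by
      rw [← ENNReal.tsum_const_eq_top_of_ne_zero (α := ℕ) hε0]
      exact ENNReal.tsum_le_tsum hεle
    exact (measure_ne_top μ Set.univ) (top_le_iff.mp (htop.trans hfin))
  refine ⟨B, hBA, hBU, fun C hC => ?_⟩
  have h1 := claim1 C hC
  have h2 := claim1 Cᶜ hC.compl
  have hadd : (μ (B ∩ C)).toReal + (μ (B ∩ Cᶜ)).toReal = (μ B).toReal := by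
    rw [← ENNReal.toReal_add (measure_ne_top _ _) (measure_ne_top _ _)]
    congr 1
    rw [← measure_inter_add_diff B (hV _ hC), Set.diff_eq]
  have hintadd : (∫ x in C, f x ∂μ) + (∫ x in Cᶜ, f x ∂μ) = ∫ x, f x ∂μ :=
    integral_add_compl (hV _ hC) hfi
  linarith

end CondUnifAux


namespace CondUnifAux

set_option linter.unusedSectionVars false
set_option maxHeartbeats 1000000

variable {X : Type*} {U V : MeasurableSpace X} {mX : MeasurableSpace X} {μ : Measure X}
  [IsFiniteMeasure μ]

lemma halve (hUV : AtomlessOver μ U V) (hVU : V ≤ U) (hU : U ≤ mX) {A : Set X}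
    (hA : MeasurableSet[U] A) {c : ℝ} (hc : 0 ≤ c)
    (htr : ∀ C, MeasurableSet[V] C → (μ (A ∩ C)).toReal = c * (μ C).toReal) :
    ∃ B, B ⊆ A ∧ MeasurableSet[U] B ∧
      ∀ C, MeasurableSet[V] C → (μ (B ∩ C)).toReal = c / 2 * (μ C).toReal := by
  have hV : V ≤ mX := hVU.trans hU
  have hgA : μ[ind A|V] =ᵐ[μ] fun _ => c :=
    condexp_ind_unique hV (hU _ hA) (@stronglyMeasurable_const _ _ V _ _) (integrable_const c)
      (fun C hC => by rw [setIntegral_const, smul_eq_mul, htr C hC, mul_comm]; rfl)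
  obtain ⟨B, hBA, hBm, hB⟩ := lemE hUV hVU hU hA
    (@stronglyMeasurable_const _ _ V _ _ : StronglyMeasurable[V] fun _ => c / 2)
    (integrable_const _)
    (Filter.Eventually.of_forall fun x => by positivity)
    (by filter_upwards [hgA] with x hx; rw [hx]; linarith)
  refine ⟨B, hBA, hBm, fun C hC => ?_⟩
  rw [hB C hC, setIntegral_const, smul_eq_mul, mul_comm]
  rfl

/-- a good partition at level `n` -/
def Good (U V : MeasurableSpace X) {mX : MeasurableSpace X} (μ : Measure X) (n : ℕ)
    (Q : ℕ → Set X) : Prop :=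
  (∀ i, MeasurableSet[U] (Q i)) ∧
  (∀ i, 2 ^ n ≤ i → Q i = ∅) ∧
  (Pairwise (Function.onFun Disjoint Q)) ∧
  ((⋃ i, Q i) = Set.univ) ∧
  (∀ i, i < 2 ^ n → ∀ C, MeasurableSet[V] C →
    (μ (Q i ∩ C)).toReal = ((2:ℝ) ^ n)⁻¹ * (μ C).toReal)

lemma good_zero : Good U V μ 0 (fun i => if i = 0 then Set.univ else (∅ : Set X)) := by
  refine ⟨fun i => ?_, fun i hi => ?_, fun i j hij => ?_, ?_, fun i hi C hC => ?_⟩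
  · by_cases h : i = 0 <;> simp [h, MeasurableSet.empty]
  · have : i ≠ 0 := by omega
    simp [this]
  · by_cases h : i = 0
    · have : j ≠ 0 := h ▸ hij.symm
      simp [Function.onFun, h, this]
    · simp [Function.onFun, h]
  · rw [Set.eq_univ_iff_forall]
    intro x
    exact Set.mem_iUnion.2 ⟨0, by simp⟩
  · have : i = 0 := by omega
    simp [this]

lemma good_step (hUV : AtomlessOver μ U V) (hVU : V ≤ U) (hU : U ≤ mX) (n : ℕ)
    (Q : ℕ → Set X) (hQ : Good U V μ n Q) :
    ∃ Q', Good U V μ (n+1) Q' ∧ ∀ i, Q' (2*i) ∪ Q' (2*i+1) = Q i := by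
  classical
  have hhalf : ∀ i, ∃ Hs, Hs ⊆ Q i ∧ MeasurableSet[U] Hs ∧ (i < 2^n →
      ∀ C, MeasurableSet[V] C →
        (μ (Hs ∩ C)).toReal = ((2:ℝ) ^ (n+1))⁻¹ * (μ C).toReal) := by
    intro i
    by_cases hi : i < 2^n
    · obtain ⟨B, h1, h2, h3⟩ := halve hUV hVU hU (hQ.1 i) (c := ((2:ℝ)^n)⁻¹)
        (by positivity) (fun C hC => hQ.2.2.2.2 i hi C hC)
      refine ⟨B, h1, h2, fun _ C hC => ?_⟩
      rw [h3 C hC]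
      congr 1
      rw [pow_succ]
      field_simp
    · exact ⟨∅, Set.empty_subset _, @MeasurableSet.empty X U, fun h => absurd h hi⟩
  choose Hf hH1 hH2 hH3 using hhalf
  set Q' : ℕ → Set X := fun j => if Even j then Hf (j/2) else Q (j/2) \ Hf (j/2) with hQ'_def
  have ev : ∀ j, Even j → Q' j = Hf (j/2) := by
    intro j h
    rw [hQ'_def]
    exact if_pos h
  have od : ∀ j, ¬ Even j → Q' j = Q (j/2) \ Hf (j/2) := by
    intro j h
    rw [hQ'_def]
    exact if_neg h
  have hQ'sub : ∀ j, Q' j ⊆ Q (j/2) := by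
    intro j
    by_cases h : Even j
    · rw [ev j h]; exact hH1 _
    · rw [od j h]; exact Set.diff_subset
  have hlink : ∀ i, Q' (2*i) ∪ Q' (2*i+1) = Q i := by
    intro i
    have he : Even (2*i) := even_two_mul i
    have ho : ¬ Even (2*i+1) := by simp [Nat.even_add_one, he]
    have h1 : 2*i/2 = i := by omega
    have h2 : (2*i+1)/2 = i := by omega
    rw [ev _ he, od _ ho, h1, h2]
    exact Set.union_diff_cancel (hH1 i)
  refine ⟨Q', ⟨fun j => ?_, fun j hj => ?_, fun j k hjk => ?_, ?_, fun j hj C hC => ?_⟩, hlink⟩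
  · by_cases h : Even j
    · rw [ev j h]; exact hH2 _
    · rw [od j h]; exact (hQ.1 _).diff (hH2 _)
  · have hj2 : 2^n ≤ j/2 := by
      have h2 : 2^(n+1) = 2*2^n := by ring
      omega
    have hQempty : Q (j/2) = ∅ := hQ.2.1 _ hj2
    have hHempty : Hf (j/2) = ∅ := Set.subset_empty_iff.mp (hQempty ▸ hH1 (j/2))
    by_cases h : Even j
    · rw [ev j h, hHempty]
    · rw [od j h, hQempty, hHempty]; simp
  · by_cases h : j/2 = k/2
    · have hpar : (Even j ∧ ¬ Even k) ∨ (¬ Even j ∧ Even k) := by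
        rw [Nat.even_iff, Nat.even_iff]
        omega
      have honf : Function.onFun Disjoint Q' j k = Disjoint (Q' j) (Q' k) := rfl
      rw [honf]
      rcases hpar with ⟨h1, h2⟩ | ⟨h1, h2⟩
      · rw [ev j h1, od k h2, ← h]
        exact disjoint_sdiff_self_right.mono_right (Set.diff_subset_diff_left (le_refl _))
      · rw [od j h1, ev k h2, h]
        exact disjoint_sdiff_self_left
    · exact (hQ.2.2.1 h).mono (hQ'sub j) (hQ'sub k)
  · rw [Set.eq_univ_iff_forall]
    intro x
    have hx : x ∈ ⋃ i, Q i := by rw [hQ.2.2.2.1]; trivial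
    obtain ⟨i, hi⟩ := Set.mem_iUnion.mp hx
    rw [← hlink i] at hi
    rcases hi with hi | hi
    · exact Set.mem_iUnion.2 ⟨2*i, hi⟩
    · exact Set.mem_iUnion.2 ⟨2*i+1, hi⟩
  · have hj2 : j/2 < 2^n := by
      have h2 : 2^(n+1) = 2*2^n := by ring
      omega
    by_cases h : Even j
    · rw [ev j h]
      exact hH3 _ hj2 C hC
    · rw [od j h]
      have hsplit : Q (j/2) ∩ C = (Hf (j/2) ∩ C) ∪ ((Q (j/2) \ Hf (j/2)) ∩ C) := by
        rw [← Set.union_inter_distrib_right, Set.union_diff_cancel (hH1 _)]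
      have hdisj : Disjoint (Hf (j/2) ∩ C) ((Q (j/2) \ Hf (j/2)) ∩ C) :=
        disjoint_sdiff_self_right.mono Set.inter_subset_left Set.inter_subset_left
      have hmeas : MeasurableSet (((Q (j/2) \ Hf (j/2)) ∩ C)) :=
        (hU _ ((hQ.1 _).diff (hH2 _))).inter (hVU.trans hU _ hC)
      have hadd : μ (Q (j/2) ∩ C) = μ (Hf (j/2) ∩ C) + μ ((Q (j/2) \ Hf (j/2)) ∩ C) := by
        rw [hsplit, measure_union hdisj hmeas]
      have h1 := hQ.2.2.2.2 (j/2) hj2 C hC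
      have h2 := hH3 (j/2) hj2 C hC
      have h3 : (μ (Q (j/2) ∩ C)).toReal
          = (μ (Hf (j/2) ∩ C)).toReal + (μ ((Q (j/2) \ Hf (j/2)) ∩ C)).toReal := by
        rw [hadd, ENNReal.toReal_add (measure_ne_top _ _) (measure_ne_top _ _)]
      have h4 : ((2:ℝ)^n)⁻¹ = 2 * ((2:ℝ)^(n+1))⁻¹ := by
        rw [pow_succ]; field_simp
      rw [h1, h2] at h3
      have h5 : (μ ((Q (j/2) \ Hf (j/2)) ∩ C)).toReal
          = ((2:ℝ)^n)⁻¹ * (μ C).toReal - ((2:ℝ)^(n+1))⁻¹ * (μ C).toReal := by linarith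
      rw [h5, h4]
      ring

end CondUnifAux


open CondUnifAux in
/-- If `U` is atomless over `V`, there is a `U`-measurable function `h` with
values in `[0,1]` that is conditionally uniformly distributed over `V`: for every `t ∈ [0,1]`,
`μ[χ_{h ≤ t} | V] = t` a.e. -/
theorem exists_cond_uniform_of_atomlessOver
    {X : Type*} {mX : MeasurableSpace X} (μ : Measure X) [IsFiniteMeasure μ]
    (U V : MeasurableSpace X) (hVU : V ≤ U) (hU : U ≤ mX)
    (hUV : AtomlessOver μ U V) :
    ∃ h : X → ℝ, Measurable[U] h ∧ (∀ x, h x ∈ Set.Icc (0 : ℝ) 1) ∧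
      ∀ t ∈ Set.Icc (0 : ℝ) 1,
        μ[Set.indicator {x | h x ≤ t} (fun _ => (1 : ℝ)) | V] =ᵐ[μ] fun _ => t := by
  classical
  have hV : V ≤ mX := hVU.trans hU
  -- build the tower of partitions
  choose stepQ hgood hlink using fun n Q hQ => good_step hUV hVU hU n Q hQ
  let T : ∀ n : ℕ, {Q : ℕ → Set X // Good U V μ n Q} := fun n =>
    Nat.rec ⟨_, good_zero⟩ (fun n p => ⟨stepQ n p.1 p.2, hgood n p.1 p.2⟩) n
  set P : ℕ → ℕ → Set X := fun n => (T n).1 with hP_def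
  have hGood : ∀ n, Good U V μ n (P n) := fun n => (T n).2
  have hTlink : ∀ n i, P (n+1) (2*i) ∪ P (n+1) (2*i+1) = P n i := fun n i =>
    hlink n (P n) (T n).2 i
  -- index function
  have hex : ∀ n x, ∃ i, x ∈ P n i ∧ ∀ j, x ∈ P n j → j = i := by
    intro n x
    have hx : x ∈ ⋃ i, P n i := by rw [(hGood n).2.2.2.1]; trivial
    obtain ⟨i, hi⟩ := Set.mem_iUnion.mp hx
    refine ⟨i, hi, fun j hj => ?_⟩
    by_contra hne
    exact Set.disjoint_left.mp ((hGood n).2.2.1 hne) hj hi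
  choose iN hiN1 hiN2 using hex
  have hiN_lt : ∀ n x, iN n x < 2^n := by
    intro n x
    by_contra hge
    push_neg at hge
    have he := (hGood n).2.1 _ hge
    exact absurd (he ▸ hiN1 n x) (Set.notMem_empty x)
  have hchain : ∀ n x, iN (n+1) x = 2 * iN n x ∨ iN (n+1) x = 2 * iN n x + 1 := by
    intro n x
    have hx : x ∈ P n (iN n x) := hiN1 n x
    rw [← hTlink n (iN n x)] at hx
    rcases hx with hx | hx
    · exact Or.inl (hiN2 (n+1) x _ hx).symm
    · exact Or.inr (hiN2 (n+1) x _ hx).symm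
  -- dyadic approximations
  set a : ℕ → X → ℝ := fun n x => (iN n x : ℝ) / 2^n with ha_def
  set b : ℕ → X → ℝ := fun n x => ((iN n x : ℝ) + 1) / 2^n with hb_def
  have ha_nonneg : ∀ n x, 0 ≤ a n x := fun n x => by positivity
  have hab : ∀ n x, a n x ≤ b n x := fun n x => by
    rw [ha_def, hb_def, div_le_div_iff₀ (by positivity) (by positivity)]
    nlinarith [pow_pos (by norm_num : (0:ℝ) < 2) n]
  have ha_mono : ∀ x, Monotone (fun n => a n x) := by
    intro x
    refine monotone_nat_of_le_succ (fun n => ?_)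
    have hpos := pow_pos (by norm_num : (0:ℝ) < 2) n
    rcases hchain n x with hc | hc <;>
      · simp only [ha_def, hc]
        rw [pow_succ, div_le_div_iff₀ (by positivity) (by positivity)]
        push_cast
        nlinarith
  have hb_anti : ∀ x, Antitone (fun n => b n x) := by
    intro x
    refine antitone_nat_of_succ_le (fun n => ?_)
    have hpos := pow_pos (by norm_num : (0:ℝ) < 2) n
    rcases hchain n x with hc | hc <;>
      · simp only [hb_def, hc]
        rw [pow_succ, div_le_div_iff₀ (by positivity) (by positivity)]
        push_cast
        nlinarith
  have hable : ∀ n m x, a n x ≤ b m x := by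
    intro n m x
    rcases le_total n m with hnm | hnm
    · exact (ha_mono x hnm).trans (hab m x)
    · exact (hab n x).trans (hb_anti x hnm)
  have ha_le_one : ∀ n x, a n x ≤ 1 := by
    intro n x
    rw [ha_def, div_le_one (by positivity)]
    have h1 := hiN_lt n x
    calc (iN n x : ℝ) ≤ ((2^n : ℕ) : ℝ) := by exact_mod_cast h1.le
      _ = 2^n := by push_cast; ring
  -- the function h
  set h : X → ℝ := fun x => (⨆ n, ENNReal.ofReal (a n x)).toReal with hh_def
  have hsup_ne_top : ∀ x, (⨆ n, ENNReal.ofReal (a n x)) ≠ ⊤ := by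
    intro x
    refine ((iSup_le fun n => ?_).trans_lt ENNReal.one_lt_top).ne
    exact ENNReal.ofReal_le_one.mpr (ha_le_one n x)
  have ha_le_h : ∀ n x, a n x ≤ h x := by
    intro n x
    rw [hh_def, ← ENNReal.toReal_ofReal (ha_nonneg n x)]
    exact ENNReal.toReal_mono (hsup_ne_top x) (le_iSup (fun n => ENNReal.ofReal (a n x)) n)
  have hh_le_b : ∀ m x, h x ≤ b m x := by
    intro m x
    have hb0 : 0 ≤ b m x := le_trans (ha_nonneg m x) (hab m x)
    rw [hh_def, ← ENNReal.toReal_ofReal hb0]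
    exact ENNReal.toReal_mono ENNReal.ofReal_ne_top
      (iSup_le fun n => ENNReal.ofReal_le_ofReal (hable n m x))
  have hrange : ∀ x, h x ∈ Set.Icc (0:ℝ) 1 := by
    intro x
    refine ⟨ENNReal.toReal_nonneg, (hh_le_b 0 x).trans ?_⟩
    have h0 : iN 0 x = 0 := by have := hiN_lt 0 x; omega
    rw [hb_def]
    simp [h0]
  -- measurability
  have hiNmeas : ∀ n, Measurable[U] (iN n) := by
    intro n
    refine @measurable_to_countable' ℕ X _ _ U (iN n) (fun i => ?_)
    have he : iN n ⁻¹' {i} = P n i := by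
      ext x
      simp only [Set.mem_preimage, Set.mem_singleton_iff]
      constructor
      · rintro rfl; exact hiN1 n x
      · intro hx; exact (hiN2 n x i hx).symm
    rw [he]
    exact (hGood n).1 i
  have hameas : ∀ n, Measurable[U] (a n) := fun n => by
    rw [ha_def]
    exact (measurable_from_nat.comp (hiNmeas n)).div_const _
  have hmeas : Measurable[U] h := by
    rw [hh_def]
    exact ENNReal.measurable_toReal.comp
      (Measurable.iSup fun n => ENNReal.measurable_ofReal.comp (hameas n))
  -- the B sets
  set Bk : ℕ → ℕ → Set X := fun n k => ⋃ i ∈ Finset.range k, P n i with hBk_def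
  have hBkmem : ∀ n k x, x ∈ Bk n k ↔ iN n x < k := by
    intro n k x
    rw [hBk_def]
    simp only [Set.mem_iUnion, Finset.mem_range, exists_prop]
    constructor
    · rintro ⟨i, hik, hx⟩
      rw [← hiN2 n x i hx]
      exact hik
    · intro hk
      exact ⟨iN n x, hk, hiN1 n x⟩
  have hBkU : ∀ n k, MeasurableSet[U] (Bk n k) := fun n k =>
    MeasurableSet.biUnion (Finset.range k).countable_toSet (fun i _ => (hGood n).1 i)
  have htrace : ∀ n k, k ≤ 2^n → ∀ C, MeasurableSet[V] C →
      (μ (Bk n k ∩ C)).toReal = (k : ℝ) * ((2:ℝ)^n)⁻¹ * (μ C).toReal := by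
    intro n k
    induction k with
    | zero => intro _ C hC; simp [hBk_def]
    | succ k ih =>
      intro hk C hC
      have hsplit : Bk n (k+1) = Bk n k ∪ P n k := by
        rw [hBk_def]
        simp only [Finset.range_add_one, Finset.set_biUnion_insert]
        rw [Set.union_comm]
      have hdisj : Disjoint (Bk n k) (P n k) := by
        rw [Set.disjoint_left]
        intro x hx1 hx2
        rw [hBkmem n k x] at hx1
        rw [hiN2 n x k hx2] at hx1
        exact lt_irrefl _ hx1
      have hmeasP : MeasurableSet[mX] (P n k ∩ C) := (hU _ ((hGood n).1 k)).inter (hV _ hC)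
      have hadd : μ (Bk n (k+1) ∩ C) = μ (Bk n k ∩ C) + μ (P n k ∩ C) := by
        rw [hsplit, Set.union_inter_distrib_right]
        exact measure_union (hdisj.mono Set.inter_subset_left Set.inter_subset_left) hmeasP
      have h1 := ih (by omega) C hC
      have h2 := (hGood n).2.2.2.2 k (by omega) C hC
      rw [hadd, ENNReal.toReal_add (measure_ne_top _ _) (measure_ne_top _ _), h1, h2]
      push_cast
      ring
  have hBfull : ∀ n k, 2^n ≤ k → Bk n k = Set.univ := by
    intro n k hk
    rw [Set.eq_univ_iff_forall]
    intro x
    rw [hBkmem]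
    exact lt_of_lt_of_le (hiN_lt n x) hk
  -- conclusion
  refine ⟨h, hmeas, hrange, fun t ht => ?_⟩
  have hSU : MeasurableSet[U] {x | h x ≤ t} := hmeas measurableSet_Iic
  have hgoal : ∀ C, MeasurableSet[V] C →
      (μ ({x | h x ≤ t} ∩ C)).toReal = t * (μ C).toReal := by
    intro C hC
    set r : ℝ := (μ ({x | h x ≤ t} ∩ C)).toReal with hr_def
    set m : ℝ := (μ C).toReal with hm_def
    have hm0 : 0 ≤ m := ENNReal.toReal_nonneg
    have hlow : ∀ n : ℕ, t * m - ((2:ℝ)^n)⁻¹ * m ≤ r := by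
      intro n
      set k : ℕ := ⌊t * 2^n⌋₊ with hk_def
      have hkle : k ≤ 2^n := by
        rw [hk_def]
        have : t * 2^n ≤ ((2^n : ℕ) : ℝ) := by
          push_cast
          nlinarith [pow_pos (by norm_num : (0:ℝ) < 2) n, ht.2]
        have h7 : ⌊t * 2^n⌋₊ ≤ ⌊((2^n : ℕ) : ℝ)⌋₊ := Nat.floor_le_floor this
        rw [Nat.floor_natCast] at h7
        exact h7
      have hsub : Bk n k ⊆ {x | h x ≤ t} := by
        intro x hx
        rw [hBkmem] at hx
        have hb : h x ≤ b n x := hh_le_b n x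
        have : b n x ≤ t := by
          rw [hb_def]
          rw [div_le_iff₀ (by positivity)]
          have h1 : (iN n x : ℝ) + 1 ≤ (k : ℝ) := by exact_mod_cast hx
          have h2 : (k:ℝ) ≤ t * 2^n :=
            Nat.floor_le (mul_nonneg ht.1 (by positivity))
          linarith
        exact Set.mem_setOf_eq ▸ (hb.trans this)
      have hmono : (μ (Bk n k ∩ C)).toReal ≤ r :=
        ENNReal.toReal_mono (measure_ne_top _ _)
          (measure_mono (Set.inter_subset_inter_left _ hsub))
      rw [htrace n k hkle C hC] at hmono
      have hfl : t * 2^n - 1 ≤ (k:ℝ) := by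
        rw [hk_def]
        have h8 := Nat.sub_one_lt_floor (t * 2^n)
        linarith [h8]
      have hpos := pow_pos (by norm_num : (0:ℝ) < 2) n
      have : (t * 2^n - 1) * ((2:ℝ)^n)⁻¹ * m ≤ (k:ℝ) * ((2:ℝ)^n)⁻¹ * m := by
        have h2 : (0:ℝ) ≤ ((2:ℝ)^n)⁻¹ * m := by positivity
        nlinarith
      have heq : (t * 2^n - 1) * ((2:ℝ)^n)⁻¹ * m = t * m - ((2:ℝ)^n)⁻¹ * m := by
        field_simp
      linarith
    have hhigh : ∀ n : ℕ, r ≤ t * m + ((2:ℝ)^n)⁻¹ * m := by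
      intro n
      set k : ℕ := ⌊t * 2^n⌋₊ with hk_def
      have hpos := pow_pos (by norm_num : (0:ℝ) < 2) n
      have hsub : {x | h x ≤ t} ⊆ Bk n (k+1) := by
        intro x hx
        rw [hBkmem]
        have hax : a n x ≤ t := (ha_le_h n x).trans hx
        have h1 : (iN n x : ℝ) ≤ t * 2^n := by
          rw [ha_def] at hax
          rw [div_le_iff₀ hpos] at hax
          exact hax
        have h2 : iN n x ≤ k := Nat.le_floor (by exact_mod_cast h1)
        omega
      have hfl : (k : ℝ) ≤ t * 2^n := Nat.floor_le (mul_nonneg ht.1 (by positivity))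
      by_cases hcase : k + 1 ≤ 2^n
      · have hmono : r ≤ (μ (Bk n (k+1) ∩ C)).toReal :=
          ENNReal.toReal_mono (measure_ne_top _ _)
            (measure_mono (Set.inter_subset_inter_left _ hsub))
        rw [htrace n (k+1) hcase C hC] at hmono
        have heq : ((k+1 : ℕ) : ℝ) * ((2:ℝ)^n)⁻¹ * m ≤ (t * 2^n + 1) * ((2:ℝ)^n)⁻¹ * m := by
          have h2 : (0:ℝ) ≤ ((2:ℝ)^n)⁻¹ * m := by positivity
          push_cast
          nlinarith
        have heq2 : (t * 2^n + 1) * ((2:ℝ)^n)⁻¹ * m = t * m + ((2:ℝ)^n)⁻¹ * m := by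
          field_simp
        linarith
      · -- k + 1 > 2^n : use r ≤ m
        have hrm : r ≤ m :=
          ENNReal.toReal_mono (measure_ne_top _ _) (measure_mono Set.inter_subset_right)
        have hk2 : ((2:ℝ)^n) ≤ (k : ℝ) + 1 := by
          have : (2^n : ℕ) ≤ k + 1 := by omega
          exact_mod_cast this
        -- t * 2^n ≥ k ≥ 2^n - 1, so t ≥ 1 - 2⁻ⁿ, i.e. t*m + 2⁻ⁿ*m ≥ m ≥ r
        have : m ≤ t * m + ((2:ℝ)^n)⁻¹ * m := by
          have h3 : (1 - ((2:ℝ)^n)⁻¹) * m ≤ t * m := by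
            have h4 : 1 - ((2:ℝ)^n)⁻¹ ≤ t := by
              rw [← div_le_iff₀ hpos] at hfl
              have h5 : ((2:ℝ)^n - 1) / 2^n ≤ (k:ℝ) / 2^n := by gcongr; linarith
              have h6 : ((2:ℝ)^n - 1) / 2^n = 1 - ((2:ℝ)^n)⁻¹ := by
                field_simp
              linarith [h6 ▸ h5, hfl]
            nlinarith
          linarith [h3]
        linarith
    -- squeeze
    by_contra hne
    set ε : ℝ := |r - t * m| with hε_def
    have hε : 0 < ε := abs_pos.2 (sub_ne_zero.2 hne)
    obtain ⟨n, hn⟩ := exists_pow_lt_of_lt_one (div_pos hε (by linarith : (0:ℝ) < m + 1))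
      (by norm_num : (1:ℝ)/2 < 1)
    have hb1 : ((2:ℝ)^n)⁻¹ * m < ε := by
      have he : ((2:ℝ)^n)⁻¹ = ((1:ℝ)/2)^n := by
        rw [div_pow, one_pow, one_div]
      rw [he]
      calc ((1:ℝ)/2)^n * m ≤ ((1:ℝ)/2)^n * (m+1) := by
            have : (0:ℝ) ≤ ((1:ℝ)/2)^n := by positivity
            nlinarith
        _ < ε / (m+1) * (m+1) := by
            have : (0:ℝ) < m + 1 := by linarith
            nlinarith
        _ = ε := by field_simp
    have habs : ε ≤ ((2:ℝ)^n)⁻¹ * m := by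
      rw [hε_def, abs_le]
      constructor <;> [linarith [hlow n]; linarith [hhigh n]]
    linarith
  -- conclude via uniqueness of conditional expectation
  show μ[ind {x | h x ≤ t}|V] =ᵐ[μ] fun _ => t
  have hconst : StronglyMeasurable[V] (fun _ : X => t) := @stronglyMeasurable_const _ _ V _ _
  have hci : Integrable (fun _ : X => t) μ := by exact integrable_const t
  have hsets : ∀ C, MeasurableSet[V] C →
      ∫ x in C, (fun _ : X => t) x ∂μ = (μ ({x | h x ≤ t} ∩ C)).toReal := by
    intro C hC
    simp only [MeasureTheory.integral_const, smul_eq_mul, MeasureTheory.Measure.real,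
      MeasureTheory.Measure.restrict_apply_univ]
    rw [hgoal C hC]
    ring
  exact @condexp_ind_unique X V mX μ _ hV _ (hU _ hSU) _ hconst hci hsets
end

section
/- Fix 1 ≤ p < ∞. Let (X, 𝒜, μ) be a probability space and let A, B, C ⊆ 𝒜 be sub-σ-algebras with C ⊆ B. If μ[f|B] = μ[f|C] a.e. for every f ∈ Lp(μ) that is a.e. equal to an A-measurable function, then μ[f|B] = μ[f|C] a.e. for every f ∈ Lp(μ) that is a.e. equal to a function measurable with respect to the σ-algebra generated by A ∪ C. -/
open MeasureTheory ENNReal Filter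

/-- Auxiliary limit lemma: if `μ[φ n|B] =ᵐ μ[φ n|C]` for every `n` and `φ n → f` in `L¹`,
then `μ[f|B] =ᵐ μ[f|C]`. -/
lemma condexp_eq_of_tendsto_aux {X : Type*} {mX : MeasurableSpace X} {μ : Measure X}
    {B C : MeasurableSpace X} (hB : B ≤ mX) (hC : C ≤ mX)
    {f : X → ℝ} {φ : ℕ → X → ℝ} (hf : Integrable f μ) (hφ : ∀ n, Integrable (φ n) μ)
    (hQ : ∀ n, μ[φ n|B] =ᵐ[μ] μ[φ n|C])
    (hlim : Tendsto (fun n => eLpNorm (f - φ n) 1 μ) atTop (nhds 0)) :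
    μ[f|B] =ᵐ[μ] μ[f|C] := by
  have hkey : ∀ n, eLpNorm (μ[f|B] - μ[f|C]) 1 μ ≤ 2 * eLpNorm (f - φ n) 1 μ := by
    intro n
    have h1 : μ[f|B] - μ[f|C] =ᵐ[μ] (μ[f - φ n|B]) + (μ[φ n - f|C]) := by
      have e1 := condExp_sub (μ := μ) (m := B) hf (hφ n)
      have e2 := condExp_sub (μ := μ) (m := C) (hφ n) hf
      filter_upwards [e1, e2, hQ n] with x h1 h2 h3
      simp only [Pi.add_apply, Pi.sub_apply] at *
      rw [h1, h2, h3]; ring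
    have hm1 : AEStronglyMeasurable[mX] (μ[f - φ n|B]) μ :=
      (stronglyMeasurable_condExp.mono hB).aestronglyMeasurable
    have hm2 : AEStronglyMeasurable[mX] (μ[φ n - f|C]) μ :=
      (stronglyMeasurable_condExp.mono hC).aestronglyMeasurable
    calc eLpNorm (μ[f|B] - μ[f|C]) 1 μ
        = eLpNorm ((μ[f - φ n|B]) + (μ[φ n - f|C])) 1 μ := eLpNorm_congr_ae h1
      _ ≤ eLpNorm (μ[f - φ n|B]) 1 μ + eLpNorm (μ[φ n - f|C]) 1 μ :=
          eLpNorm_add_le hm1 hm2 le_rfl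
      _ ≤ eLpNorm (f - φ n) 1 μ + eLpNorm (φ n - f) 1 μ :=
          add_le_add (eLpNorm_one_condExp_le_eLpNorm _) (eLpNorm_one_condExp_le_eLpNorm _)
      _ = 2 * eLpNorm (f - φ n) 1 μ := by
          rw [← neg_sub f (φ n), eLpNorm_neg, two_mul]
  have h2 : Tendsto (fun n => 2 * eLpNorm (f - φ n) 1 μ) atTop (nhds 0) := by
    have := ENNReal.Tendsto.const_mul hlim (Or.inr (ENNReal.ofNat_ne_top (n := 2)))
    simpa using this
  have h0 : eLpNorm (μ[f|B] - μ[f|C]) 1 μ = 0 :=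
    nonpos_iff_eq_zero.mp (ge_of_tendsto' h2 hkey)
  have hmeas : AEStronglyMeasurable[mX] (μ[f|B] - μ[f|C]) μ :=
    ((stronglyMeasurable_condExp.mono hB).aestronglyMeasurable).sub
      ((stronglyMeasurable_condExp.mono hC).aestronglyMeasurable)
  have := (eLpNorm_eq_zero_iff hmeas one_ne_zero).mp h0
  filter_upwards [this] with x hx
  have hx' : (μ[f|B]) x - (μ[f|C]) x = 0 := hx
  linarith

set_option maxHeartbeats 1000000 in
set_option synthInstance.maxHeartbeats 500000 in
/-- If the conditional expectations over `B` and over `C ⊆ B` agree on every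
`Lp` function that is a.e. `A`-measurable, then they agree on every `Lp` function that is a.e.
measurable with respect to the σ-algebra generated by `A ∪ C` (i.e. `A ⊔ C`). -/
theorem condexp_eq_of_generated_sup
    {X : Type*} {mX : MeasurableSpace X} (μ : Measure X) [IsProbabilityMeasure μ]
    (p : ℝ≥0∞) (hp : 1 ≤ p) (hp' : p ≠ ⊤)
    (A B C : MeasurableSpace X) (hA : A ≤ mX) (hB : B ≤ mX) (hCB : C ≤ B)
    (H : ∀ f : X → ℝ, MemLp f p μ → AEStronglyMeasurable[A] f μ →
      μ[f | B] =ᵐ[μ] μ[f | C]) :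
    ∀ f : X → ℝ, MemLp f p μ → AEStronglyMeasurable[A ⊔ C] f μ →
      μ[f | B] =ᵐ[μ] μ[f | C] := by
  letI : MeasurableSpace X := mX
  have hC : C ≤ mX := hCB.trans hB
  have hAC : A ⊔ C ≤ mX := sup_le hA hC
  haveI : Fact (1 ≤ p) := ⟨hp⟩
  -- the π-system of intersections of `A`-sets and `C`-sets
  set π : Set (Set X) := {s | ∃ a, MeasurableSet[A] a ∧ ∃ c, MeasurableSet[C] c ∧ s = a ∩ c}
    with hπ_def
  have h_gen : (A ⊔ C : MeasurableSpace X) = MeasurableSpace.generateFrom π := by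
    refine le_antisymm (sup_le ?_ ?_) (MeasurableSpace.generateFrom_le ?_)
    · intro s hs
      exact MeasurableSpace.measurableSet_generateFrom
        ⟨s, hs, Set.univ, MeasurableSet.univ, (Set.inter_univ s).symm⟩
    · intro s hs
      exact MeasurableSpace.measurableSet_generateFrom
        ⟨Set.univ, MeasurableSet.univ, s, hs, (Set.univ_inter s).symm⟩
    · rintro t ⟨a, ha, c, hc, rfl⟩
      exact MeasurableSet.inter ((le_sup_left : A ≤ A ⊔ C) a ha)
        ((le_sup_right : C ≤ A ⊔ C) c hc)
  have h_pi : IsPiSystem π := by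
    rintro s ⟨a₁, ha₁, c₁, hc₁, rfl⟩ t ⟨a₂, ha₂, c₂, hc₂, rfl⟩ -
    refine ⟨a₁ ∩ a₂, ha₁.inter ha₂, c₁ ∩ c₂, hc₁.inter hc₂, ?_⟩
    ext x; simp only [Set.mem_inter_iff]; tauto
  -- Step 1: the claim for indicator functions of `A ⊔ C`-measurable sets
  have key : ∀ s : Set X, MeasurableSet[A ⊔ C] s →
      μ[s.indicator (fun _ => (1:ℝ)) | B] =ᵐ[μ] μ[s.indicator (fun _ => (1:ℝ)) | C] := by
    have h_empty : μ[(∅ : Set X).indicator (fun _ => (1:ℝ)) | B] =ᵐ[μ]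
        μ[(∅ : Set X).indicator (fun _ => (1:ℝ)) | C] := by
      simp only [Set.indicator_empty]
      rw [show (fun _ : X => (0:ℝ)) = (0 : X → ℝ) from rfl, condExp_zero, condExp_zero]
    have h_basic : ∀ t ∈ π, μ[t.indicator (fun _ => (1:ℝ)) | B] =ᵐ[μ]
        μ[t.indicator (fun _ => (1:ℝ)) | C] := by
      rintro t ⟨a, ha, c, hc, rfl⟩
      have h1 : (a ∩ c).indicator (fun _ => (1:ℝ)) =
          c.indicator (fun _ => (1:ℝ)) * a.indicator (fun _ => (1:ℝ)) := by
        funext x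
        by_cases hx : x ∈ a <;> by_cases hy : x ∈ c <;>
          simp [Set.indicator, hx, hy, Set.mem_inter_iff]
      have hint_a : Integrable (a.indicator (fun _ => (1:ℝ))) μ :=
        (integrable_const (1:ℝ)).indicator (hA a ha)
      have hint_mul : Integrable
          (c.indicator (fun _ => (1:ℝ)) * a.indicator (fun _ => (1:ℝ))) μ := by
        rw [← h1]
        exact (integrable_const (1:ℝ)).indicator ((hA a ha).inter (hC c hc))
      have hcB : StronglyMeasurable[B] (c.indicator (fun _ => (1:ℝ))) :=
        (@stronglyMeasurable_const X ℝ B _ _).indicator (hCB c hc)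
      have hcC : StronglyMeasurable[C] (c.indicator (fun _ => (1:ℝ))) :=
        (@stronglyMeasurable_const X ℝ C _ _).indicator hc
      have hH : μ[a.indicator (fun _ => (1:ℝ))|B] =ᵐ[μ] μ[a.indicator (fun _ => (1:ℝ))|C] := by
        refine H _ (memLp_indicator_const p (hA a ha) (1:ℝ) (Or.inr (measure_ne_top μ a))) ?_
        exact ⟨a.indicator (fun _ => (1:ℝ)),
          (@stronglyMeasurable_const X ℝ A _ _).indicator ha, EventuallyEq.rfl⟩
      rw [h1]
      have eB := condExp_mul_of_stronglyMeasurable_left hcB hint_mul hint_a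
      have eC := condExp_mul_of_stronglyMeasurable_left hcC hint_mul hint_a
      filter_upwards [eB, eC, hH] with x hxB hxC hxH
      rw [hxB, hxC, Pi.mul_apply, Pi.mul_apply, hxH]
    have h_compl : ∀ t, MeasurableSet[A ⊔ C] t →
        (μ[t.indicator (fun _ => (1:ℝ)) | B] =ᵐ[μ] μ[t.indicator (fun _ => (1:ℝ)) | C]) →
        μ[tᶜ.indicator (fun _ => (1:ℝ)) | B] =ᵐ[μ] μ[tᶜ.indicator (fun _ => (1:ℝ)) | C] := by
      intro t ht hQt
      have h1 : tᶜ.indicator (fun _ => (1:ℝ)) =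
          (fun _ => (1:ℝ)) - t.indicator (fun _ => (1:ℝ)) := by
        funext x
        by_cases hx : x ∈ t <;> simp [Set.indicator, hx]
      have hint : Integrable (t.indicator (fun _ => (1:ℝ))) μ :=
        (integrable_const (1:ℝ)).indicator (hAC t ht)
      rw [h1]
      have eB := condExp_sub (μ := μ) (m := B) (integrable_const (1:ℝ)) hint
      have eC := condExp_sub (μ := μ) (m := C) (integrable_const (1:ℝ)) hint
      have hcB : μ[(fun _ => (1:ℝ))|B] = fun _ => (1:ℝ) := condExp_const hB (1:ℝ)
      have hcC : μ[(fun _ => (1:ℝ))|C] = fun _ => (1:ℝ) := condExp_const hC (1:ℝ)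
      filter_upwards [eB, eC, hQt] with x hxB hxC hxQ
      rw [hxB, hxC, Pi.sub_apply, Pi.sub_apply, hxQ, hcB, hcC]
    have h_union : ∀ g : ℕ → Set X, Pairwise (Function.onFun Disjoint g) →
        (∀ i, MeasurableSet[A ⊔ C] (g i)) →
        (∀ i, μ[(g i).indicator (fun _ => (1:ℝ)) | B] =ᵐ[μ]
          μ[(g i).indicator (fun _ => (1:ℝ)) | C]) →
        μ[(⋃ i, g i).indicator (fun _ => (1:ℝ)) | B] =ᵐ[μ]
          μ[(⋃ i, g i).indicator (fun _ => (1:ℝ)) | C] := by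
      intro g hdisj hmeas hQ
      set U : Set X := ⋃ i, g i with hU
      set Un : ℕ → Set X := fun n => ⋃ i ∈ Finset.range n, g i with hUn
      have hUn_meas : ∀ n, MeasurableSet[mX] (Un n) := fun n =>
        MeasurableSet.biUnion (Finset.range n).countable_toSet fun i _ => hAC _ (hmeas i)
      have hU_meas : MeasurableSet[mX] U := MeasurableSet.iUnion fun i => hAC _ (hmeas i)
      have hUn_sub : ∀ n, Un n ⊆ U := fun n =>
        Set.iUnion₂_subset fun i _ => Set.subset_iUnion g i
      -- each partial union satisfies the property
      have hQn : ∀ n, μ[(Un n).indicator (fun _ => (1:ℝ)) | B] =ᵐ[μ]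
          μ[(Un n).indicator (fun _ => (1:ℝ)) | C] := by
        intro n
        induction n with
        | zero => simpa [hUn] using h_empty
        | succ n ih =>
          have hstep : Un (n + 1) = g n ∪ Un n := by
            simp only [hUn, Finset.range_add_one, Finset.set_biUnion_insert]
          have hdj : Disjoint (g n) (Un n) := by
            rw [hUn]
            refine Set.disjoint_iUnion₂_right.mpr fun i hi => ?_
            exact hdisj (Finset.mem_range.mp hi).ne'
          have hind : (Un (n+1)).indicator (fun _ => (1:ℝ)) =
              (g n).indicator (fun _ => (1:ℝ)) + (Un n).indicator (fun _ => (1:ℝ)) := by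
            rw [hstep, Set.indicator_union_of_disjoint hdj]
            exact funext fun x => rfl
          have i₁ : Integrable ((g n).indicator (fun _ => (1:ℝ))) μ :=
            (integrable_const (1:ℝ)).indicator (hAC _ (hmeas n))
          have i₂ : Integrable ((Un n).indicator (fun _ => (1:ℝ))) μ :=
            (integrable_const (1:ℝ)).indicator (hUn_meas n)
          rw [hind]
          calc μ[(g n).indicator (fun _ => (1:ℝ)) + (Un n).indicator (fun _ => (1:ℝ))|B]
              =ᵐ[μ] μ[(g n).indicator (fun _ => (1:ℝ))|B] + μ[(Un n).indicator (fun _ => (1:ℝ))|B] :=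
                condExp_add i₁ i₂ _
            _ =ᵐ[μ] μ[(g n).indicator (fun _ => (1:ℝ))|C] + μ[(Un n).indicator (fun _ => (1:ℝ))|C] :=
                (hQ n).add ih
            _ =ᵐ[μ] μ[(g n).indicator (fun _ => (1:ℝ)) + (Un n).indicator (fun _ => (1:ℝ))|C] :=
                (condExp_add i₁ i₂ _).symm
      -- now pass to the limit
      refine condexp_eq_of_tendsto_aux hB hC
        ((integrable_const (1:ℝ)).indicator hU_meas)
        (fun n => (integrable_const (1:ℝ)).indicator (hUn_meas n)) hQn ?_
      have hsum : ∑' i, μ (g i) ≠ ∞ := by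
        rw [← measure_iUnion hdisj fun i => hAC _ (hmeas i)]
        exact measure_ne_top μ _
      have htail := ENNReal.tendsto_sum_nat_add (fun i => μ (g i)) hsum
      refine tendsto_of_tendsto_of_tendsto_of_le_of_le tendsto_const_nhds htail
        (fun n => zero_le) fun n => ?_
      have hμle : μ (U \ Un n) ≤ ∑' k, μ (g (k + n)) := by
        refine le_trans (measure_mono ?_) (measure_iUnion_le _)
        rintro x ⟨hxU, hxn⟩
        obtain ⟨j, hj⟩ := Set.mem_iUnion.mp hxU
        have hjn : n ≤ j := by
          by_contra hlt
          exact hxn (Set.mem_biUnion (Finset.mem_range.mpr (Nat.lt_of_not_le hlt)) hj)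
        exact Set.mem_iUnion.mpr ⟨j - n, by rwa [Nat.sub_add_cancel hjn]⟩
      have hdiff : U.indicator (fun _ => (1:ℝ)) - (Un n).indicator (fun _ => (1:ℝ)) =
          (U \ Un n).indicator (fun _ => (1:ℝ)) :=
        (Set.indicator_sdiff (hUn_sub n) _).symm
      rw [hdiff, eLpNorm_indicator_const (hU_meas.diff (hUn_meas n)) one_ne_zero one_ne_top]
      simpa using hμle
    exact fun s hs => @MeasurableSpace.induction_on_inter X (A ⊔ C)
      (fun t _ => μ[t.indicator (fun _ => (1:ℝ)) | B] =ᵐ[μ] μ[t.indicator (fun _ => (1:ℝ)) | C])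
      π h_gen h_pi h_empty h_basic h_compl h_union s hs
  -- Step 2: extend by `Memℒp.induction_stronglyMeasurable`
  intro f hf hfm
  refine MemLp.induction_stronglyMeasurable hAC hp'
    (P := fun g : X → ℝ => μ[g|B] =ᵐ[μ] μ[g|C]) ?_ ?_ ?_ ?_ hf hfm
  · -- indicators
    intro c s hs _
    have hsc : s.indicator (fun _ => c) = c • s.indicator (fun _ => (1:ℝ)) := by
      funext x
      by_cases hx : x ∈ s <;> simp [Set.indicator, hx]
    rw [hsc]
    calc μ[c • s.indicator (fun _ => (1:ℝ))|B]
        =ᵐ[μ] c • μ[s.indicator (fun _ => (1:ℝ))|B] := condExp_smul c _ _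
      _ =ᵐ[μ] c • μ[s.indicator (fun _ => (1:ℝ))|C] := by
          filter_upwards [key s hs] with x hx
          simp [hx]
      _ =ᵐ[μ] μ[c • s.indicator (fun _ => (1:ℝ))|C] := (condExp_smul c _ _).symm
  · -- additivity
    intro g₁ g₂ _ hg₁ hg₂ _ _ hP₁ hP₂
    have i₁ : Integrable g₁ μ := hg₁.integrable hp
    have i₂ : Integrable g₂ μ := hg₂.integrable hp
    calc μ[g₁ + g₂|B] =ᵐ[μ] μ[g₁|B] + μ[g₂|B] := condExp_add i₁ i₂ _
      _ =ᵐ[μ] μ[g₁|C] + μ[g₂|C] := hP₁.add hP₂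
      _ =ᵐ[μ] μ[g₁ + g₂|C] := (condExp_add i₁ i₂ _).symm
  · -- closedness
    refine IsSeqClosed.isClosed ?_
    intro g flim hg hgf
    have h1 : Tendsto (fun n => ((g n : Lp ℝ p μ))) atTop (nhds (flim : Lp ℝ p μ)) :=
      (continuous_subtype_val.tendsto _).comp hgf
    have h2 : Tendsto (fun n => eLpNorm (((g n : Lp ℝ p μ) : X → ℝ) - ((flim : Lp ℝ p μ) : X → ℝ)) p μ)
        atTop (nhds 0) := (Lp.tendsto_Lp_iff_tendsto_eLpNorm' _ _).mp h1
    have h3 : Tendsto (fun n => eLpNorm ((((flim : Lp ℝ p μ) : X → ℝ)) - ((g n : Lp ℝ p μ) : X → ℝ)) 1 μ)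
        atTop (nhds 0) := by
      refine tendsto_of_tendsto_of_tendsto_of_le_of_le tendsto_const_nhds h2
        (fun n => zero_le) fun n => ?_
      rw [eLpNorm_sub_comm]
      exact eLpNorm_le_eLpNorm_of_exponent_le hp
        ((Lp.aestronglyMeasurable _).sub (Lp.aestronglyMeasurable _))
    exact condexp_eq_of_tendsto_aux hB hC ((Lp.memLp _).integrable hp)
      (fun n => (Lp.memLp _).integrable hp) (fun n => hg n) h3
  · -- a.e. invariance
    intro g₁ g₂ hae _ hP
    exact ((condExp_congr_ae hae).symm.trans hP).trans (condExp_congr_ae hae)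
end

section
/- Fix 1 ≤ p < ∞. Let (X, 𝒜, μ) be a probability space, let A ⊆ 𝒜 be a sub-σ-algebra, and let B ⊆ C ⊆ D ⊆ 𝒜 be sub-σ-algebras. Then A ⫫*_B D if and only if both A ⫫*_B C and A ⫫*_C D. -/
open MeasureTheory ENNReal

/-- `A` is *-independent from `E` over `C` (for `C ⊆ E`): the conditional expectations over
`E` and over `C` agree a.e. on every `Lp` function that is a.e. measurable with respect to the
σ-algebra generated by `A ∪ C` (i.e. `A ⊔ C`). -/
def StarIndep {X : Type*} {_mX : MeasurableSpace X} (μ : Measure X) (p : ℝ≥0∞)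
    (A C E : MeasurableSpace X) : Prop :=
  ∀ f : X → ℝ, MemLp f p μ → AEStronglyMeasurable[A ⊔ C] f μ →
    μ[f | E] =ᵐ[μ] μ[f | C]

namespace StarIndepAux

variable {X : Type*} {mX : MeasurableSpace X} {μ : Measure X} [IsProbabilityMeasure μ]

/-- The real-valued indicator of a set. -/
noncomputable def ind (s : Set X) : X → ℝ := s.indicator 1

lemma ind_integrable {s : Set X} (hs : MeasurableSet s) : Integrable (ind s) μ :=
  (integrable_const (1 : ℝ)).indicator hs

lemma ind_memℒp (p : ℝ≥0∞) {s : Set X} (hs : MeasurableSet s) : MemLp (ind s) p μ :=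
  memLp_indicator_const p hs 1 (Or.inr (measure_ne_top μ s))

lemma ind_sm {m : MeasurableSpace X} {s : Set X} (hs : MeasurableSet[m] s) :
    StronglyMeasurable[m] (ind s) :=
  stronglyMeasurable_const.indicator hs

lemma ind_nonneg (s : Set X) (x : X) : 0 ≤ ind s x := by
  by_cases h : x ∈ s <;> simp [ind, Set.indicator_apply, h]

lemma ind_bdd (s : Set X) (x : X) : ‖ind s x‖ ≤ 1 := by
  by_cases h : x ∈ s <;> simp [ind, Set.indicator_apply, h]

lemma ind_le_one (s : Set X) (x : X) : ind s x ≤ (fun _ => (1:ℝ)) x := by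
  by_cases h : x ∈ s <;> simp [ind, Set.indicator_apply, h]

lemma setIntegral_eq (g : X → ℝ) {t : Set X} (ht : MeasurableSet t) :
    ∫ x in t, g x ∂μ = ∫ x, (ind t * g) x ∂μ := by
  rw [← integral_indicator ht]
  refine integral_congr_ae (Filter.Eventually.of_forall fun x => ?_)
  by_cases h : x ∈ t <;> simp [ind, Set.indicator_apply, h]

lemma integral_ind_ind {s t : Set X} (hs : MeasurableSet s) (ht : MeasurableSet t) :
    ∫ x in s, ind t x ∂μ = ∫ x in t, ind s x ∂μ := by
  simp only [ind]
  rw [setIntegral_indicator ht, setIntegral_indicator hs, Set.inter_comm]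

lemma condexp_ind_bdd {m : MeasurableSpace X} (hm : m ≤ mX) {s : Set X}
    (hs : MeasurableSet[mX] s) : ∀ᵐ x ∂μ, ‖(μ[ind s|m]) x‖ ≤ 1 := by
  have h0 : 0 ≤ᵐ[μ] μ[ind s|m] :=
    condExp_nonneg (Filter.Eventually.of_forall (ind_nonneg s))
  have h1 : μ[ind s|m] ≤ᵐ[μ] μ[(fun _ => (1:ℝ))|m] :=
    condExp_mono (ind_integrable hs) (integrable_const 1)
      (Filter.Eventually.of_forall (ind_le_one s))
  rw [condExp_const hm] at h1
  filter_upwards [h0, h1] with x hx0 hx1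
  simp only [Pi.zero_apply] at hx0
  rw [Real.norm_eq_abs, abs_le]
  exact ⟨by linarith, hx1⟩

lemma integrable_mul_ind {g : X → ℝ} (hg : Integrable g μ) {t : Set X}
    (ht : MeasurableSet[mX] t) : Integrable (g * ind t) μ := by
  have h := Integrable.bdd_mul (c := 1) hg ((ind_sm ht).aestronglyMeasurable)
    (Filter.Eventually.of_forall (ind_bdd t))
  exact h.congr (Filter.Eventually.of_forall fun x => mul_comm _ _)

lemma integrable_condExp_ind_mul {m : MeasurableSpace X} (hm : m ≤ mX) {s : Set X}
    (hs : MeasurableSet[mX] s) {g : X → ℝ} (hg : Integrable g μ) :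
    Integrable (μ[ind s|m] * g) μ :=
  Integrable.bdd_mul hg (stronglyMeasurable_condExp.mono hm).aestronglyMeasurable
    (condexp_ind_bdd hm hs)

/-- Key computation: the integral of `μ[g|m] * 1_t` equals that of `μ[g|m] * μ[1_t|m]`. -/
lemma integral_mul_condexp_eq {m : MeasurableSpace X} (hm : m ≤ mX) {g : X → ℝ}
    (hg : Integrable g μ) {t : Set X} (ht : MeasurableSet[mX] t) :
    ∫ x, (μ[g|m] * ind t) x ∂μ = ∫ x, (μ[g|m] * μ[ind t|m]) x ∂μ := by
  have hint : Integrable (μ[g|m] * ind t) μ :=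
    integrable_mul_ind integrable_condExp ht
  calc ∫ x, (μ[g|m] * ind t) x ∂μ
      = ∫ x, (μ[μ[g|m] * ind t|m]) x ∂μ := (integral_condExp hm).symm
    _ = ∫ x, (μ[g|m] * μ[ind t|m]) x ∂μ :=
        integral_congr_ae
          (condExp_mul_of_stronglyMeasurable_left stronglyMeasurable_condExp hint
            (ind_integrable ht))

/-- Self-adjointness of conditional expectation on indicators. -/
lemma setIntegral_condexp_symm {m : MeasurableSpace X} (hm : m ≤ mX) {s t : Set X}
    (hs : MeasurableSet[mX] s) (ht : MeasurableSet[mX] t) :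
    ∫ x in t, (μ[ind s|m]) x ∂μ = ∫ x in s, (μ[ind t|m]) x ∂μ := by
  rw [setIntegral_eq _ ht, setIntegral_eq _ hs]
  have h1 : ∫ x, (ind t * μ[ind s|m]) x ∂μ = ∫ x, (μ[ind s|m] * μ[ind t|m]) x ∂μ := by
    rw [show ind t * μ[ind s|m] = μ[ind s|m] * ind t from mul_comm _ _]
    exact integral_mul_condexp_eq hm (ind_integrable hs) ht
  have h2 : ∫ x, (ind s * μ[ind t|m]) x ∂μ = ∫ x, (μ[ind t|m] * μ[ind s|m]) x ∂μ := by
    rw [show ind s * μ[ind t|m] = μ[ind t|m] * ind s from mul_comm _ _]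
    exact integral_mul_condexp_eq hm (ind_integrable ht) hs
  rw [h1, h2]
  exact integral_congr_ae (Filter.Eventually.of_forall fun x => mul_comm _ _)

end StarIndepAux

open StarIndepAux

section Main

variable {X : Type*} {mX : MeasurableSpace X} {μ : Measure X} [IsProbabilityMeasure μ]
  {p : ℝ≥0∞} {A B C D : MeasurableSpace X}

/-- Dualization of `StarIndep`: indicators of `D`-measurable sets have the same conditional
expectation with respect to `A ⊔ B` and `B`. -/
lemma StarIndep.condexp_ind (H : StarIndep μ p A B D) (hp : 1 ≤ p)
    (hA : A ≤ mX) (hBD : B ≤ D) (hD : D ≤ mX) {s : Set X} (hs : MeasurableSet[D] s) :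
    μ[ind s|A ⊔ B] =ᵐ[μ] μ[ind s|B] := by
  letI : MeasurableSpace X := mX
  have hB : B ≤ mX := hBD.trans hD
  have hAB : A ⊔ B ≤ mX := sup_le hA hB
  have hsX : MeasurableSet[mX] s := hD s hs
  refine (ae_eq_condExp_of_forall_setIntegral_eq hAB (ind_integrable hsX)
    (fun t _ _ => integrable_condExp.integrableOn) (fun t ht _ => ?_)
    ((stronglyMeasurable_condExp.mono (le_sup_right : B ≤ A ⊔ B)).aestronglyMeasurable)).symm
  have htX : MeasurableSet[mX] t := hAB t ht
  have hH : μ[ind t|D] =ᵐ[μ] μ[ind t|B] :=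
    H (ind t) (ind_memℒp p htX) ((ind_sm ht).aestronglyMeasurable)
  calc ∫ x in t, (μ[ind s|B]) x ∂μ
      = ∫ x in s, (μ[ind t|B]) x ∂μ := setIntegral_condexp_symm hB hsX htX
    _ = ∫ x in s, (μ[ind t|D]) x ∂μ := (integral_congr_ae (ae_restrict_of_ae hH)).symm
    _ = ∫ x in s, ind t x ∂μ := setIntegral_condExp hD (ind_integrable htX) hs
    _ = ∫ x in t, ind s x ∂μ := integral_ind_ind hsX htX

/-- First component of the forward direction. -/
lemma StarIndep.restrict (H : StarIndep μ p A B D) (hp : 1 ≤ p)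
    (hBC : B ≤ C) (hCD : C ≤ D) (hD : D ≤ mX) :
    StarIndep μ p A B C := by
  letI : MeasurableSpace X := mX
  intro f hf hfm
  have hC : C ≤ mX := hCD.trans hD
  calc μ[f|C] =ᵐ[μ] μ[μ[f|D]|C] := (condExp_condExp_of_le hCD hD).symm
    _ =ᵐ[μ] μ[μ[f|B]|C] := condExp_congr_ae (H f hf hfm)
    _ =ᵐ[μ] μ[f|B] := by
        rw [condExp_of_stronglyMeasurable hC (stronglyMeasurable_condExp.mono hBC)
          integrable_condExp]

/-- Dualization with `A ⊔ C`: indicators of `D`-measurable sets have the same conditional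
expectation with respect to `A ⊔ C` and `C`. -/
lemma StarIndep.condexp_ind' (H : StarIndep μ p A B D) (hp : 1 ≤ p)
    (hA : A ≤ mX) (hBC : B ≤ C) (hCD : C ≤ D) (hD : D ≤ mX) {s : Set X}
    (hs : MeasurableSet[D] s) :
    μ[ind s|A ⊔ C] =ᵐ[μ] μ[ind s|C] := by
  letI : MeasurableSpace X := mX
  have hC : C ≤ mX := hCD.trans hD
  have hB : B ≤ mX := hBC.trans hC
  have hAC : A ⊔ C ≤ mX := sup_le hA hC
  have hsX : MeasurableSet[mX] s := hD s hs
  have hP1 : StarIndep μ p A B C := H.restrict hp hBC hCD hD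
  -- the π-system of intersections `a ∩ c`
  set P : Set (Set X) :=
    {u : Set X | ∃ a, MeasurableSet[A] a ∧ ∃ c, MeasurableSet[C] c ∧ u = a ∩ c} with hP
  have h_eq : (A ⊔ C : MeasurableSpace X) = MeasurableSpace.generateFrom P := by
    refine le_antisymm (sup_le ?_ ?_) (MeasurableSpace.generateFrom_le ?_)
    · intro a ha
      exact MeasurableSpace.measurableSet_generateFrom
        ⟨a, ha, Set.univ, MeasurableSet.univ, (Set.inter_univ a).symm⟩
    · intro c hc
      exact MeasurableSpace.measurableSet_generateFrom
        ⟨Set.univ, MeasurableSet.univ, c, hc, (Set.univ_inter c).symm⟩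
    · rintro u ⟨a, ha, c, hc, rfl⟩
      exact ((le_sup_left : A ≤ A ⊔ C) a ha).inter ((le_sup_right : C ≤ A ⊔ C) c hc)
  have h_pi : IsPiSystem P := by
    rintro u ⟨a, ha, c, hc, rfl⟩ v ⟨a', ha', c', hc', rfl⟩ -
    exact ⟨a ∩ a', ha.inter ha', c ∩ c', hc.inter hc', Set.inter_inter_inter_comm a c a' c'⟩
  -- key set-integral identity on all of `A ⊔ C`
  have key : ∀ t : Set X, MeasurableSet[A ⊔ C] t →
      ∫ x in t, (μ[ind s|C]) x ∂μ = ∫ x in t, ind s x ∂μ := by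
    intro t ht
    refine MeasurableSpace.induction_on_inter (m := A ⊔ C)
      (C := fun t _ => ∫ x in t, (μ[ind s|C]) x ∂μ = ∫ x in t, ind s x ∂μ)
      h_eq h_pi (by simp) ?_ ?_ ?_ t ht
    · -- base case: t = a ∩ c
      rintro u ⟨a, ha, c, hc, rfl⟩
      have haX : MeasurableSet[mX] a := hA a ha
      have hcX : MeasurableSet[mX] c := hC c hc
      have hacX : MeasurableSet[mX] (a ∩ c) := haX.inter hcX
      have hsplit : ind (a ∩ c) = ind c * ind a := by
        rw [ind, ind, ind, Set.inter_indicator_one, mul_comm]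
      have hint : Integrable (ind c * ind a) μ :=
        integrable_mul_ind (ind_integrable hcX) haX
      have hae : μ[ind a|C] =ᵐ[μ] μ[ind a|D] := by
        refine (hP1 (ind a) (ind_memℒp p haX) ?_).trans
          (H (ind a) (ind_memℒp p haX) ?_).symm
        · exact (ind_sm ((le_sup_left : A ≤ A ⊔ B) a ha)).aestronglyMeasurable
        · exact (ind_sm ((le_sup_left : A ≤ A ⊔ B) a ha)).aestronglyMeasurable
      have hkey : μ[ind (a ∩ c)|C] =ᵐ[μ] μ[ind (a ∩ c)|D] := by
        rw [hsplit]
        calc μ[ind c * ind a|C]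
            =ᵐ[μ] ind c * μ[ind a|C] :=
              condExp_mul_of_stronglyMeasurable_left (ind_sm hc) hint (ind_integrable haX)
          _ =ᵐ[μ] ind c * μ[ind a|D] :=
              Filter.EventuallyEq.mul (Filter.EventuallyEq.refl _ _) hae
          _ =ᵐ[μ] μ[ind c * ind a|D] :=
              (condExp_mul_of_stronglyMeasurable_left (ind_sm (hCD c hc)) hint
                (ind_integrable haX)).symm
      calc ∫ x in a ∩ c, (μ[ind s|C]) x ∂μ
          = ∫ x in s, (μ[ind (a ∩ c)|C]) x ∂μ := setIntegral_condexp_symm hC hsX hacX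
        _ = ∫ x in s, (μ[ind (a ∩ c)|D]) x ∂μ := integral_congr_ae (ae_restrict_of_ae hkey)
        _ = ∫ x in s, ind (a ∩ c) x ∂μ := setIntegral_condExp hD (ind_integrable hacX) hs
        _ = ∫ x in a ∩ c, ind s x ∂μ := integral_ind_ind hsX hacX
    · -- complements
      intro u hu hQ
      have huX : MeasurableSet[mX] u := hAC u hu
      have e1 := integral_add_compl huX (integrable_condExp (f := ind s) (m := C) (μ := μ))
      have e2 := integral_add_compl huX (ind_integrable hsX (μ := μ))
      have e3 : ∫ x, (μ[ind s|C]) x ∂μ = ∫ x, ind s x ∂μ := integral_condExp hC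
      linarith
    · -- disjoint unions
      intro g hdisj hgm hQ
      have hgX : ∀ i, MeasurableSet[mX] (g i) := fun i => hAC _ (hgm i)
      rw [integral_iUnion hgX hdisj integrable_condExp.integrableOn,
        integral_iUnion hgX hdisj (ind_integrable hsX).integrableOn]
      exact tsum_congr hQ
  exact (ae_eq_condExp_of_forall_setIntegral_eq hAC (ind_integrable hsX)
    (fun t _ _ => integrable_condExp.integrableOn) (fun t ht _ => key t ht)
    ((stronglyMeasurable_condExp.mono (le_sup_right : C ≤ A ⊔ C)).aestronglyMeasurable)).symm

/-- Second component of the forward direction. -/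
lemma StarIndep.lift (H : StarIndep μ p A B D) (hp : 1 ≤ p)
    (hA : A ≤ mX) (hBC : B ≤ C) (hCD : C ≤ D) (hD : D ≤ mX) :
    StarIndep μ p A C D := by
  letI : MeasurableSpace X := mX
  have hC : C ≤ mX := hCD.trans hD
  have hAC : A ⊔ C ≤ mX := sup_le hA hC
  intro f hf hfm
  have hfi : Integrable f μ := hf.integrable hp
  refine (ae_eq_condExp_of_forall_setIntegral_eq hD hfi
    (fun s _ _ => integrable_condExp.integrableOn) (fun s hs _ => ?_)
    ((stronglyMeasurable_condExp.mono hCD).aestronglyMeasurable)).symm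
  have hsX : MeasurableSet[mX] s := hD s hs
  have hdual : μ[ind s|A ⊔ C] =ᵐ[μ] μ[ind s|C] := H.condexp_ind' hp hA hBC hCD hD hs
  have hLHS : ∫ x in s, (μ[f|C]) x ∂μ = ∫ x, (μ[f|C] * μ[ind s|C]) x ∂μ := by
    rw [setIntegral_eq _ hsX,
      show ind s * μ[f|C] = μ[f|C] * ind s from mul_comm _ _]
    exact integral_mul_condexp_eq hC hfi hsX
  have hfind : Integrable (f * ind s) μ := integrable_mul_ind hfi hsX
  have hcf : Integrable (μ[ind s|C] * f) μ := integrable_condExp_ind_mul hC hsX hfi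
  have hRHS : ∫ x in s, f x ∂μ = ∫ x, (μ[ind s|C] * μ[f|C]) x ∂μ := by
    calc ∫ x in s, f x ∂μ
        = ∫ x, (ind s * f) x ∂μ := setIntegral_eq f hsX
      _ = ∫ x, (f * ind s) x ∂μ :=
          integral_congr_ae (Filter.Eventually.of_forall fun x => mul_comm _ _)
      _ = ∫ x, (μ[f * ind s|A ⊔ C]) x ∂μ := (integral_condExp hAC).symm
      _ = ∫ x, (f * μ[ind s|A ⊔ C]) x ∂μ :=
          integral_congr_ae (condExp_mul_of_aestronglyMeasurable_left hfm hfind (ind_integrable hsX))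
      _ = ∫ x, (f * μ[ind s|C]) x ∂μ :=
          integral_congr_ae (Filter.EventuallyEq.mul (Filter.EventuallyEq.refl _ _) hdual)
      _ = ∫ x, (μ[ind s|C] * f) x ∂μ :=
          integral_congr_ae (Filter.Eventually.of_forall fun x => mul_comm _ _)
      _ = ∫ x, (μ[μ[ind s|C] * f|C]) x ∂μ := (integral_condExp hC).symm
      _ = ∫ x, (μ[ind s|C] * μ[f|C]) x ∂μ :=
          integral_congr_ae (condExp_mul_of_stronglyMeasurable_left stronglyMeasurable_condExp hcf hfi)
  rw [hLHS, hRHS]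
  exact integral_congr_ae (Filter.Eventually.of_forall fun x => mul_comm _ _)

end Main

/-- Transitivity of *-independence. For sub-σ-algebras `B ⊆ C ⊆ D`,
`A ⫫*_B D` iff `A ⫫*_B C` and `A ⫫*_C D`. -/
theorem starIndep_trans_iff
    {X : Type*} {mX : MeasurableSpace X} (μ : Measure X) [IsProbabilityMeasure μ]
    (p : ℝ≥0∞) (hp : 1 ≤ p) (hp' : p ≠ ⊤)
    (A B C D : MeasurableSpace X) (hA : A ≤ mX)
    (hBC : B ≤ C) (hCD : C ≤ D) (hD : D ≤ mX) :
    StarIndep μ p A B D ↔ StarIndep μ p A B C ∧ StarIndep μ p A C D := by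
  constructor
  · intro H
    exact ⟨H.restrict hp hBC hCD hD, H.lift hp hA hBC hCD hD⟩
  · rintro ⟨h1, h2⟩ f hf hfm
    exact (h2 f hf (hfm.mono (sup_le_sup_left hBC A))).trans (h1 f hf hfm)
end

section
/- Fix 1 ≤ p < ∞. Let (X, 𝒜, μ) be a probability space and let V ⊆ W₀ ⊆ 𝒜 and V ⊆ W₁ ⊆ 𝒜 be sub-σ-algebras. Then the following are equivalent: (i) μ[f|W₁] = μ[f|V] a.e. for every f ∈ Lp(μ) that is a.e. equal to a W₀-measurable function; (ii) for every P₀ ∈ W₀ and P₁ ∈ W₁, μ[χ_{P₀ ∩ P₁} | V] = μ[χ_{P₀} | V] · μ[χ_{P₁} | V] a.e. -/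
open MeasureTheory ENNReal

namespace CondexpStmt6Aux

variable {X : Type*}

lemma mul_indicator_one (s : Set X) (h : X → ℝ) :
    h * s.indicator (fun _ => (1 : ℝ)) = s.indicator h := by
  funext x
  by_cases hx : x ∈ s <;> simp [hx]

lemma indicator_inter_eq (s t : Set X) :
    (s ∩ t).indicator (fun _ => (1 : ℝ)) =
      t.indicator (fun _ => (1 : ℝ)) * s.indicator (fun _ => (1 : ℝ)) := by
  funext x
  by_cases hs : x ∈ s <;> by_cases ht : x ∈ t <;> simp [hs, ht]

lemma indicator_inter_eq' (s t : Set X) :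
    (s ∩ t).indicator (fun _ => (1 : ℝ)) =
      t.indicator (s.indicator (fun _ => (1 : ℝ))) := by
  funext x
  by_cases hs : x ∈ s <;> by_cases ht : x ∈ t <;> simp [hs, ht]

/-- Forward direction. -/
lemma forward (p : ℝ≥0∞) (V W₀ W₁ : MeasurableSpace X) {mX : MeasurableSpace X}
    (μ : Measure X) [IsProbabilityMeasure μ] (hVW₁ : V ≤ W₁)
    (hW₀ : W₀ ≤ mX) (hW₁ : W₁ ≤ mX)
    (h : ∀ f : X → ℝ, MemLp f p μ → AEStronglyMeasurable[W₀] f μ →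
        μ[f | W₁] =ᵐ[μ] μ[f | V])
    {P₀ P₁ : Set X} (hP₀ : MeasurableSet[W₀] P₀) (hP₁ : MeasurableSet[W₁] P₁) :
    μ[Set.indicator (P₀ ∩ P₁) (fun _ => (1 : ℝ)) | V]
      =ᵐ[μ] μ[Set.indicator P₀ (fun _ => (1 : ℝ)) | V]
        * μ[Set.indicator P₁ (fun _ => (1 : ℝ)) | V] := by
  set g₀ := P₀.indicator (fun _ => (1 : ℝ)) with hg₀
  set g₁ := P₁.indicator (fun _ => (1 : ℝ)) with hg₁
  have hg₀int : Integrable g₀ μ := Integrable.indicator (μ := μ) (integrable_const (μ := μ) (1 : ℝ)) (hW₀ _ hP₀)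
  have hg₁int : Integrable g₁ μ := Integrable.indicator (μ := μ) (integrable_const (μ := μ) (1 : ℝ)) (hW₁ _ hP₁)
  have hmem : MemLp g₀ p μ :=
    memLp_indicator_const (μ := μ) p (hW₀ _ hP₀) 1 (Or.inr (measure_ne_top μ _))
  have hmeas0 : AEStronglyMeasurable[W₀] g₀ μ :=
    ((@stronglyMeasurable_const X ℝ W₀ _ 1).indicator hP₀).aestronglyMeasurable
  have h₁ : μ[g₀|W₁] =ᵐ[μ] μ[g₀|V] := h g₀ hmem hmeas0
  have hinter : (P₀ ∩ P₁).indicator (fun _ => (1 : ℝ)) = g₁ * g₀ := indicator_inter_eq P₀ P₁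
  have hintint : Integrable ((P₀ ∩ P₁).indicator (fun _ => (1 : ℝ))) μ :=
    Integrable.indicator (μ := μ) (integrable_const (μ := μ) (1 : ℝ)) ((hW₀ _ hP₀).inter (hW₁ _ hP₁))
  have hfg : Integrable (g₁ * g₀) μ := hinter ▸ hintint
  have step1 : μ[(P₀ ∩ P₁).indicator (fun _ => (1 : ℝ))|V]
      =ᵐ[μ] μ[μ[(P₀ ∩ P₁).indicator (fun _ => (1 : ℝ))|W₁]|V] :=
    (condExp_condExp_of_le hVW₁ hW₁).symm
  have hg₁measW₁ : StronglyMeasurable[W₁] g₁ :=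
    (@stronglyMeasurable_const X ℝ W₁ _ 1).indicator hP₁
  have step2 : μ[(P₀ ∩ P₁).indicator (fun _ => (1 : ℝ))|W₁] =ᵐ[μ] g₁ * μ[g₀|V] := by
    rw [hinter]
    exact (condExp_mul_of_stronglyMeasurable_left hg₁measW₁ hfg hg₀int).trans
      (Filter.EventuallyEq.rfl.mul h₁)
  have hprodint : Integrable (μ[g₀|V] * g₁) μ := by
    have hi : Integrable (P₁.indicator (μ[g₀|V])) μ :=
      Integrable.indicator (μ := μ) (integrable_condExp : Integrable (μ[g₀|V]) μ) (hW₁ _ hP₁)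
    exact hi.congr (by rw [← mul_indicator_one P₁ (μ[g₀|V])])
  have step3 : μ[g₁ * μ[g₀|V]|V] =ᵐ[μ] μ[g₀|V] * μ[g₁|V] := by
    rw [mul_comm]
    exact condExp_mul_of_aestronglyMeasurable_left stronglyMeasurable_condExp.aestronglyMeasurable
      hprodint hg₁int
  exact step1.trans ((condExp_congr_ae step2).trans step3)

namespace Backward

variable (V W₀ W₁ : MeasurableSpace X) {mX : MeasurableSpace X}
  (μ : Measure X) [IsProbabilityMeasure μ]

/-- Key set-integral identity for indicators. -/
lemma key (hVW₀ : V ≤ W₀) (hVW₁ : V ≤ W₁) (hW₀ : W₀ ≤ mX) (hW₁ : W₁ ≤ mX)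
    (h : ∀ P₀ P₁ : Set X, MeasurableSet[W₀] P₀ → MeasurableSet[W₁] P₁ →
        μ[Set.indicator (P₀ ∩ P₁) (fun _ => (1 : ℝ)) | V]
          =ᵐ[μ] μ[Set.indicator P₀ (fun _ => (1 : ℝ)) | V]
            * μ[Set.indicator P₁ (fun _ => (1 : ℝ)) | V])
    {P₀ P₁ : Set X} (hP₀ : MeasurableSet[W₀] P₀) (hP₁ : MeasurableSet[W₁] P₁) :
    ∫ x in P₁, (μ[P₀.indicator (fun _ => (1 : ℝ))|V]) x ∂μ
      = ∫ x in P₁, P₀.indicator (fun _ => (1 : ℝ)) x ∂μ := by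
  have hV : V ≤ mX := hVW₀.trans hW₀
  set g₀ := P₀.indicator (fun _ => (1 : ℝ)) with hg₀
  set g₁ := P₁.indicator (fun _ => (1 : ℝ)) with hg₁
  have hg₁int : Integrable g₁ μ := Integrable.indicator (μ := μ) (integrable_const (1 : ℝ)) (hW₁ _ hP₁)
  have hprodint : Integrable (μ[g₀|V] * g₁) μ := by
    have hi : Integrable (P₁.indicator (μ[g₀|V])) μ :=
      Integrable.indicator (μ := μ) (integrable_condExp : Integrable (μ[g₀|V]) μ) (hW₁ _ hP₁)
    exact hi.congr (by rw [← mul_indicator_one P₁ (μ[g₀|V])])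
  calc ∫ x in P₁, (μ[g₀|V]) x ∂μ
      = ∫ x, P₁.indicator (μ[g₀|V]) x ∂μ := (integral_indicator (hW₁ _ hP₁)).symm
    _ = ∫ x, (μ[g₀|V] * g₁) x ∂μ := by rw [← mul_indicator_one P₁ (μ[g₀|V])]
    _ = ∫ x, (μ[μ[g₀|V] * g₁|V]) x ∂μ := (integral_condExp hV).symm
    _ = ∫ x, (μ[g₀|V] * μ[g₁|V]) x ∂μ :=
        integral_congr_ae (condExp_mul_of_aestronglyMeasurable_left
          stronglyMeasurable_condExp.aestronglyMeasurable hprodint hg₁int)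
    _ = ∫ x, (μ[(P₀ ∩ P₁).indicator (fun _ => (1 : ℝ))|V]) x ∂μ :=
        integral_congr_ae (h P₀ P₁ hP₀ hP₁).symm
    _ = ∫ x, (P₀ ∩ P₁).indicator (fun _ => (1 : ℝ)) x ∂μ := integral_condExp hV
    _ = ∫ x, P₁.indicator g₀ x ∂μ := by rw [← indicator_inter_eq' P₀ P₁]
    _ = ∫ x in P₁, g₀ x ∂μ := integral_indicator (hW₁ _ hP₁)

/-- The set-integral identity for all integrable a.e. `W₀`-measurable functions. -/
lemma main (hVW₀ : V ≤ W₀) (hVW₁ : V ≤ W₁) (hW₀ : W₀ ≤ mX) (hW₁ : W₁ ≤ mX)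
    (h : ∀ P₀ P₁ : Set X, MeasurableSet[W₀] P₀ → MeasurableSet[W₁] P₁ →
        μ[Set.indicator (P₀ ∩ P₁) (fun _ => (1 : ℝ)) | V]
          =ᵐ[μ] μ[Set.indicator P₀ (fun _ => (1 : ℝ)) | V]
            * μ[Set.indicator P₁ (fun _ => (1 : ℝ)) | V])
    {g : X → ℝ} (hg : Integrable g (μ.trim hW₀)) :
    ∀ s : Set X, MeasurableSet[W₁] s →
      ∫ x in s, (μ[g|V]) x ∂μ = ∫ x in s, g x ∂μ := by
  have hV : V ≤ mX := hVW₀.trans hW₀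
  refine @Integrable.induction X ℝ W₀ _ (μ.trim hW₀)
    (fun g => ∀ s : Set X, MeasurableSet[W₁] s →
      ∫ x in s, (μ[g|V]) x ∂μ = ∫ x in s, g x ∂μ) ?_ ?_ ?_ ?_ g hg
  · -- indicators
    intro c t ht _ s hs
    have hcind : t.indicator (fun _ => c) = c • t.indicator (fun _ => (1 : ℝ)) := by
      funext x; by_cases hx : x ∈ t <;> simp [hx]
    rw [hcind]
    calc ∫ x in s, (μ[c • t.indicator (fun _ => (1:ℝ))|V]) x ∂μ
        = ∫ x in s, (c • μ[t.indicator (fun _ => (1:ℝ))|V]) x ∂μ :=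
          integral_congr_ae (ae_restrict_of_ae (condExp_smul c _ V))
      _ = c * ∫ x in s, (μ[t.indicator (fun _ => (1:ℝ))|V]) x ∂μ := by
          simp only [Pi.smul_apply, smul_eq_mul, integral_const_mul]
      _ = c * ∫ x in s, t.indicator (fun _ => (1:ℝ)) x ∂μ := by
          rw [key V W₀ W₁ μ hVW₀ hVW₁ hW₀ hW₁ h ht hs]
      _ = ∫ x in s, (c • t.indicator (fun _ => (1:ℝ))) x ∂μ := by
          simp only [Pi.smul_apply, smul_eq_mul, integral_const_mul]
  · -- addition
    intro f g _ hfi hgi hPf hPg s hs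
    have hfi' : Integrable f μ := integrable_of_integrable_trim hW₀ hfi
    have hgi' : Integrable g μ := integrable_of_integrable_trim hW₀ hgi
    calc ∫ x in s, (μ[f + g|V]) x ∂μ
        = ∫ x in s, (μ[f|V] + μ[g|V]) x ∂μ :=
          integral_congr_ae (ae_restrict_of_ae (condExp_add hfi' hgi' V))
      _ = (∫ x in s, (μ[f|V]) x ∂μ) + ∫ x in s, (μ[g|V]) x ∂μ :=
          integral_add (integrable_condExp.integrableOn) (integrable_condExp.integrableOn)
      _ = (∫ x in s, f x ∂μ) + ∫ x in s, g x ∂μ := by rw [hPf s hs, hPg s hs]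
      _ = ∫ x in s, (f + g) x ∂μ :=
          (integral_add hfi'.integrableOn hgi'.integrableOn).symm
  · -- closedness in L¹ of the trimmed measure
    have hcont1 : ∀ s : Set X, Continuous (fun φ : X →₁[μ.trim hW₀] ℝ =>
        ∫ x in s, (μ[(φ : X → ℝ)|V]) x ∂μ) := by
      intro s
      refine (LipschitzWith.of_dist_le_mul (K := 1) ?_).continuous
      intro φ ψ
      have hφ : Integrable (φ : X → ℝ) μ :=
        integrable_of_integrable_trim hW₀ (L1.integrable_coeFn φ)
      have hψ : Integrable (ψ : X → ℝ) μ :=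
        integrable_of_integrable_trim hW₀ (L1.integrable_coeFn ψ)
      have hsub : μ[(φ : X → ℝ)|V] - μ[(ψ : X → ℝ)|V] =ᵐ[μ] μ[(φ : X → ℝ) - (ψ : X → ℝ)|V] :=
        (condExp_sub hφ hψ V).symm
      simp only [NNReal.coe_one, one_mul, Real.dist_eq]
      have h1 : (∫ x in s, (μ[(φ : X → ℝ)|V]) x ∂μ) - ∫ x in s, (μ[(ψ : X → ℝ)|V]) x ∂μ
          = ∫ x in s, (μ[(φ : X → ℝ) - (ψ : X → ℝ)|V]) x ∂μ := by
        rw [← integral_sub integrable_condExp.integrableOn integrable_condExp.integrableOn]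
        exact integral_congr_ae (ae_restrict_of_ae hsub)
      rw [h1]
      have h2 : |∫ x in s, (μ[(φ : X → ℝ) - (ψ : X → ℝ)|V]) x ∂μ|
          ≤ ∫ x, |(μ[(φ : X → ℝ) - (ψ : X → ℝ)|V]) x| ∂μ :=
        by
          have h2a := norm_integral_le_integral_norm (μ := μ.restrict s)
            (fun x => (μ[(φ : X → ℝ) - (ψ : X → ℝ)|V]) x)
          simp only [Real.norm_eq_abs] at h2a
          exact h2a.trans (setIntegral_le_integral integrable_condExp.abs
            (Filter.Eventually.of_forall fun x => abs_nonneg _))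
      have h3 : ∫ x, |(μ[(φ : X → ℝ) - (ψ : X → ℝ)|V]) x| ∂μ
          ≤ ∫ x, |(φ : X → ℝ) x - (ψ : X → ℝ) x| ∂μ := by
        simpa using integral_abs_condExp_le (m := V) (μ := μ) ((φ : X → ℝ) - (ψ : X → ℝ))
      have h4 : ∫ x, |(φ : X → ℝ) x - (ψ : X → ℝ) x| ∂μ = dist φ ψ := by
        have e1 : ∫ a, ‖((φ - ψ : Lp ℝ 1 (μ.trim hW₀)) : X → ℝ) a‖ ∂(μ.trim hW₀)
            = ∫ a, ‖(φ : X → ℝ) a - (ψ : X → ℝ) a‖ ∂(μ.trim hW₀) :=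
          integral_congr_ae ((Lp.coeFn_sub φ ψ).fun_comp norm)
        have e2 : ∫ a, ‖(φ : X → ℝ) a - (ψ : X → ℝ) a‖ ∂(μ.trim hW₀)
            = ∫ a, ‖(φ : X → ℝ) a - (ψ : X → ℝ) a‖ ∂μ :=
          (integral_trim_ae hW₀
            (((Lp.aestronglyMeasurable φ).sub (Lp.aestronglyMeasurable ψ)).norm)).symm
        rw [dist_eq_norm, L1.norm_eq_integral_norm, e1, e2]
        simp [Real.norm_eq_abs]
      exact (h2.trans h3).trans_eq h4
    have hcont2 : ∀ s : Set X, Continuous (fun φ : X →₁[μ.trim hW₀] ℝ =>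
        ∫ x in s, (φ : X → ℝ) x ∂μ) := by
      intro s
      refine (LipschitzWith.of_dist_le_mul (K := 1) ?_).continuous
      intro φ ψ
      have hφ : Integrable (φ : X → ℝ) μ :=
        integrable_of_integrable_trim hW₀ (L1.integrable_coeFn φ)
      have hψ : Integrable (ψ : X → ℝ) μ :=
        integrable_of_integrable_trim hW₀ (L1.integrable_coeFn ψ)
      simp only [NNReal.coe_one, one_mul, Real.dist_eq]
      rw [← integral_sub hφ.integrableOn hψ.integrableOn]
      have h2 : |∫ x in s, ((φ : X → ℝ) x - (ψ : X → ℝ) x) ∂μ|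
          ≤ ∫ x, |(φ : X → ℝ) x - (ψ : X → ℝ) x| ∂μ :=
        by
          have h2a := norm_integral_le_integral_norm (μ := μ.restrict s)
            (fun x => (φ : X → ℝ) x - (ψ : X → ℝ) x)
          simp only [Real.norm_eq_abs] at h2a
          exact h2a.trans (setIntegral_le_integral (hφ.sub hψ).abs
            (Filter.Eventually.of_forall fun x => abs_nonneg _))
      have h4 : ∫ x, |(φ : X → ℝ) x - (ψ : X → ℝ) x| ∂μ = dist φ ψ := by
        have e1 : ∫ a, ‖((φ - ψ : Lp ℝ 1 (μ.trim hW₀)) : X → ℝ) a‖ ∂(μ.trim hW₀)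
            = ∫ a, ‖(φ : X → ℝ) a - (ψ : X → ℝ) a‖ ∂(μ.trim hW₀) :=
          integral_congr_ae ((Lp.coeFn_sub φ ψ).fun_comp norm)
        have e2 : ∫ a, ‖(φ : X → ℝ) a - (ψ : X → ℝ) a‖ ∂(μ.trim hW₀)
            = ∫ a, ‖(φ : X → ℝ) a - (ψ : X → ℝ) a‖ ∂μ :=
          (integral_trim_ae hW₀
            (((Lp.aestronglyMeasurable φ).sub (Lp.aestronglyMeasurable ψ)).norm)).symm
        rw [dist_eq_norm, L1.norm_eq_integral_norm, e1, e2]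
        simp [Real.norm_eq_abs]
      exact h2.trans_eq h4
    have hset : {φ : X →₁[μ.trim hW₀] ℝ | ∀ s : Set X, MeasurableSet[W₁] s →
        ∫ x in s, (μ[(φ : X → ℝ)|V]) x ∂μ = ∫ x in s, (φ : X → ℝ) x ∂μ}
        = ⋂ (s : Set X) (_ : MeasurableSet[W₁] s),
          {φ : X →₁[μ.trim hW₀] ℝ |
            ∫ x in s, (μ[(φ : X → ℝ)|V]) x ∂μ = ∫ x in s, (φ : X → ℝ) x ∂μ} := by
      ext φ; simp [Set.mem_iInter]
    rw [hset]
    exact isClosed_iInter fun s => isClosed_iInter fun _ =>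
      isClosed_eq (hcont1 s) (hcont2 s)
  · -- a.e. congruence
    intro f g hfg _ hPf s hs
    have hfg' : f =ᵐ[μ] g := ae_eq_of_ae_eq_trim hfg
    calc ∫ x in s, (μ[g|V]) x ∂μ
        = ∫ x in s, (μ[f|V]) x ∂μ :=
          integral_congr_ae (ae_restrict_of_ae (condExp_congr_ae hfg'.symm))
      _ = ∫ x in s, f x ∂μ := hPf s hs
      _ = ∫ x in s, g x ∂μ := integral_congr_ae (ae_restrict_of_ae hfg')

lemma backward (hVW₀ : V ≤ W₀) (hVW₁ : V ≤ W₁) (hW₀ : W₀ ≤ mX) (hW₁ : W₁ ≤ mX)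
    (h : ∀ P₀ P₁ : Set X, MeasurableSet[W₀] P₀ → MeasurableSet[W₁] P₁ →
        μ[Set.indicator (P₀ ∩ P₁) (fun _ => (1 : ℝ)) | V]
          =ᵐ[μ] μ[Set.indicator P₀ (fun _ => (1 : ℝ)) | V]
            * μ[Set.indicator P₁ (fun _ => (1 : ℝ)) | V])
    {f : X → ℝ} (hf : Integrable f μ) (hfm : AEStronglyMeasurable[W₀] f μ) :
    μ[f | W₁] =ᵐ[μ] μ[f | V] := by
  set f' := hfm.mk f with hf'def
  have hff' : f =ᵐ[μ] f' := hfm.ae_eq_mk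
  have hf' : Integrable f' μ := hf.congr hff'
  have hf'trim : Integrable f' (μ.trim hW₀) := hf'.trim hW₀ hfm.stronglyMeasurable_mk
  have hP := main V W₀ W₁ μ hVW₀ hVW₁ hW₀ hW₁ h hf'trim
  have keyf : ∀ s : Set X, MeasurableSet[W₁] s →
      ∫ x in s, (μ[f|V]) x ∂μ = ∫ x in s, f x ∂μ := by
    intro s hs
    calc ∫ x in s, (μ[f|V]) x ∂μ
        = ∫ x in s, (μ[f'|V]) x ∂μ :=
          integral_congr_ae (ae_restrict_of_ae (condExp_congr_ae hff'))
      _ = ∫ x in s, f' x ∂μ := hP s hs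
      _ = ∫ x in s, f x ∂μ := integral_congr_ae (ae_restrict_of_ae hff'.symm)
  have := ae_eq_condExp_of_forall_setIntegral_eq hW₁ hf
    (fun s _ _ => integrable_condExp.integrableOn)
    (fun s hs _ => keyf s hs)
    (stronglyMeasurable_condExp.aestronglyMeasurable.mono hVW₁)
  exact this.symm

end Backward

end CondexpStmt6Aux

/-- For sub-σ-algebras `V ⊆ W₀` and `V ⊆ W₁` of a probability space, the
conditional expectations over `W₁` and over `V` agree on all a.e. `W₀`-measurable `Lp`
functions iff the conditional expectation over `V` multiplies on intersections of sets from
`W₀` and `W₁`. -/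
theorem condexp_eq_iff_condexp_inter_mul
    {X : Type*} {mX : MeasurableSpace X} (μ : Measure X) [IsProbabilityMeasure μ]
    (p : ℝ≥0∞) (hp : 1 ≤ p) (hp' : p ≠ ⊤)
    (V W₀ W₁ : MeasurableSpace X) (hVW₀ : V ≤ W₀) (hVW₁ : V ≤ W₁)
    (hW₀ : W₀ ≤ mX) (hW₁ : W₁ ≤ mX) :
    (∀ f : X → ℝ, MemLp f p μ → AEStronglyMeasurable[W₀] f μ →
        μ[f | W₁] =ᵐ[μ] μ[f | V]) ↔
      (∀ P₀ P₁ : Set X, MeasurableSet[W₀] P₀ → MeasurableSet[W₁] P₁ →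
        μ[Set.indicator (P₀ ∩ P₁) (fun _ => (1 : ℝ)) | V]
          =ᵐ[μ] μ[Set.indicator P₀ (fun _ => (1 : ℝ)) | V]
            * μ[Set.indicator P₁ (fun _ => (1 : ℝ)) | V]) := by
  constructor
  · intro h P₀ P₁ hP₀ hP₁
    exact CondexpStmt6Aux.forward p V W₀ W₁ μ hVW₁ hW₀ hW₁ h hP₀ hP₁
  · intro h f hf hfm
    exact CondexpStmt6Aux.Backward.backward V W₀ W₁ μ hVW₀ hVW₁ hW₀ hW₁ h
      (hf.integrable hp) hfm
end

section
/- Fix 1 ≤ p < ∞. Let (X, 𝒜, μ) be a probability space, f ∈ Lp(μ), and B ⊆ 𝒜 a sub-σ-algebra. Then there exists a countably generated sub-σ-algebra C ⊆ B such that μ[g|B] = μ[g|C] a.e. for every g ∈ Lp(μ) that is a.e. equal to a function measurable with respect to the σ-algebra generated by σ(f) ∪ C, where σ(f) is the σ-algebra generated by f. -/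
open MeasureTheory ENNReal Filter Topology

section AuxLemmas

variable {X : Type*}

/-- A measurable function agreeing with the pointwise limit of a sequence of strongly
measurable functions wherever that limit exists. -/
lemma aux_limit [m : MeasurableSpace X] (ψ : ℕ → X → ℝ)
    (hψ : ∀ n, StronglyMeasurable (ψ n)) :
    ∃ Ψ : X → ℝ, StronglyMeasurable Ψ ∧
      ∀ x c, Tendsto (fun n => ψ n x) atTop (𝓝 c) → Ψ x = c := by
  classical
  set E : Set X := {x | ∃ c, Tendsto (fun n => ψ n x) atTop (𝓝 c)} with hE
  have hEm : MeasurableSet E := measurableSet_exists_tendsto (fun n => (hψ n).measurable)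
  refine ⟨fun x => if h : x ∈ E then h.choose else 0, ?_, ?_⟩
  · apply stronglyMeasurable_of_tendsto atTop (f := fun n => E.indicator (ψ n))
      (fun n => (hψ n).indicator hEm)
    rw [tendsto_pi_nhds]
    intro x
    by_cases hx : x ∈ E
    · simp only [hx, dif_pos]
      have h2 : (fun n => E.indicator (ψ n) x) = fun n => ψ n x :=
        funext fun n => Set.indicator_of_mem hx _
      rw [h2]
      exact hx.choose_spec
    · simp only [hx, dif_neg, not_false_iff]
      have h2 : (fun n => E.indicator (ψ n) x) = fun _ => (0 : ℝ) :=
        funext fun n => Set.indicator_of_notMem hx _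
      rw [h2]
      exact tendsto_const_nhds
  · intro x c hc
    have hx : x ∈ E := ⟨c, hc⟩
    simp only [hx, dif_pos]
    exact tendsto_nhds_unique hx.choose_spec hc

/-- A.e. limits of `AEStronglyMeasurable'` functions are `AEStronglyMeasurable'`. -/
lemma aesm'_of_tendsto_ae {mX : MeasurableSpace X} {μ : MeasureTheory.Measure X}
    (m : MeasurableSpace X)
    {φ : ℕ → X → ℝ} {ψ : X → ℝ} (hφ : ∀ n, AEStronglyMeasurable[m] (φ n) μ)
    (h : ∀ᵐ x ∂μ, Tendsto (fun n => φ n x) atTop (𝓝 (ψ x))) :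
    AEStronglyMeasurable[m] ψ μ := by
  obtain ⟨Ψ, hΨm, hΨ⟩ := aux_limit (m := m) (fun n => (hφ n).mk (φ n))
    (fun n => (hφ n).stronglyMeasurable_mk)
  refine ⟨Ψ, hΨm, ?_⟩
  filter_upwards [h, ae_all_iff.2 fun n => (hφ n).ae_eq_mk] with x hx hx2
  exact (hΨ x (ψ x) (hx.congr fun n => hx2 n)).symm

/-- L¹ limits of `AEStronglyMeasurable'` functions are `AEStronglyMeasurable'`. -/
lemma aesm'_of_tendsto_L1 {mX : MeasurableSpace X} {μ : MeasureTheory.Measure X}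
    (m : MeasurableSpace X)
    {φ : ℕ → X → ℝ} {ψ : X → ℝ} (hφm : ∀ n, AEStronglyMeasurable[m] (φ n) μ)
    (hφ : ∀ n, AEStronglyMeasurable[mX] (φ n) μ) (hψ : AEStronglyMeasurable[mX] ψ μ)
    (h : Tendsto (fun n => eLpNorm (φ n - ψ) 1 μ) atTop (𝓝 0)) :
    AEStronglyMeasurable[m] ψ μ := by
  have htm : TendstoInMeasure μ φ atTop ψ :=
    tendstoInMeasure_of_tendsto_eLpNorm one_ne_zero hφ hψ h
  obtain ⟨ns, -, hns⟩ := htm.exists_seq_tendsto_ae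
  exact aesm'_of_tendsto_ae m (fun k => hφm (ns k)) hns

/-- The σ-algebra of sets agreeing with an `m`-measurable set on `{x | P x}`. -/
def agreeOn (m : MeasurableSpace X) (P : X → Prop) : MeasurableSpace X where
  MeasurableSet' s := ∃ s', MeasurableSet[m] s' ∧ ∀ x, P x → (x ∈ s ↔ x ∈ s')
  measurableSet_empty := ⟨∅, MeasurableSet.empty, fun _ _ => Iff.rfl⟩
  measurableSet_compl := fun s hs => by
    obtain ⟨s', hs', h⟩ := hs
    exact ⟨s'ᶜ, hs'.compl, fun x hx => by simp only [Set.mem_compl_iff, h x hx]⟩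
  measurableSet_iUnion := fun u hu => by
    choose s' hs' h using hu
    exact ⟨⋃ i, s' i, MeasurableSet.iUnion hs', fun x hx => by
      simp only [Set.mem_iUnion]
      exact exists_congr fun i => h i x hx⟩

lemma agreeOn_simpleFunc {m : MeasurableSpace X} {P : X → Prop}
    (φ : @SimpleFunc X (agreeOn m P) ℝ) :
    ∃ ψ : X → ℝ, StronglyMeasurable[m] ψ ∧ ∀ x, P x → ψ x = φ x := by
  classical
  have hfib : ∀ c : ℝ, ∃ s', MeasurableSet[m] s' ∧ ∀ x, P x → (x ∈ ⇑φ ⁻¹' {c} ↔ x ∈ s') :=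
    fun c => @SimpleFunc.measurableSet_fiber X ℝ (agreeOn m P) φ c
  choose t ht hht using hfib
  refine ⟨fun x => ∑ c ∈ @SimpleFunc.range X ℝ (agreeOn m P) φ,
    Set.indicator (t c) (fun _ => c) x, ?_, ?_⟩
  · exact (Finset.measurable_sum _ fun c _ =>
      (measurable_const.indicator (ht c))).stronglyMeasurable
  · intro x hx
    show (∑ c ∈ @SimpleFunc.range X ℝ (agreeOn m P) φ, Set.indicator (t c) (fun _ => c) x) = φ x
    have hmem : ∀ c : ℝ, x ∈ t c ↔ φ x = c := by
      intro c
      rw [← hht c x hx]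
      simp [Set.mem_preimage]
    rw [Finset.sum_eq_single_of_mem (φ x) (@SimpleFunc.mem_range_self X ℝ (agreeOn m P) φ x)]
    · rw [Set.indicator_of_mem ((hmem (φ x)).2 rfl)]
    · intro b _ hb
      rw [Set.indicator_of_notMem]
      intro hxb
      exact hb ((hmem b).1 hxb).symm

lemma agreeOn_stronglyMeasurable {m : MeasurableSpace X} {P : X → Prop} {g : X → ℝ}
    (hg : StronglyMeasurable[agreeOn m P] g) :
    ∃ g' : X → ℝ, StronglyMeasurable[m] g' ∧ ∀ x, P x → g' x = g x := by
  choose ψ hψm hψ using fun n => agreeOn_simpleFunc (hg.approx n)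
  obtain ⟨Ψ, hΨm, hΨ⟩ := aux_limit (m := m) ψ hψm
  refine ⟨Ψ, hΨm, fun x hx => ?_⟩
  exact hΨ x (g x) ((hg.tendsto_approx x).congr fun n => (hψ n x hx).symm)

/-- Being a.e. strongly measurable with respect to `comap f borel ⊔ m` only depends on the
a.e. class of `f`. -/
lemma aesm'_comap_congr {mX : MeasurableSpace X} {μ : MeasureTheory.Measure X} {f f' : X → ℝ}
    (hff' : f =ᵐ[μ] f') (m : MeasurableSpace X) {g : X → ℝ}
    (hg : AEStronglyMeasurable[MeasurableSpace.comap f Real.measurableSpace ⊔ m] g μ) :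
    AEStronglyMeasurable[MeasurableSpace.comap f' Real.measurableSpace ⊔ m] g μ := by
  set m₂ := MeasurableSpace.comap f' Real.measurableSpace ⊔ m with hm₂
  have hle : MeasurableSpace.comap f Real.measurableSpace ⊔ m ≤
      agreeOn m₂ (fun x => f x = f' x) := by
    refine sup_le ?_ ?_
    · rintro s ⟨t, ht, rfl⟩
      refine ⟨f' ⁻¹' t, ?_, fun x hx => by simp [Set.mem_preimage, hx]⟩
      exact (le_sup_left : MeasurableSpace.comap f' Real.measurableSpace ≤ m₂) _ ⟨t, ht, rfl⟩
    · intro s hs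
      exact ⟨s, (le_sup_right : m ≤ m₂) _ hs, fun _ _ => Iff.rfl⟩
  obtain ⟨g', hg'm, hg'⟩ := agreeOn_stronglyMeasurable (hg.stronglyMeasurable_mk.mono hle)
  refine ⟨g', hg'm, ?_⟩
  filter_upwards [hff', hg.ae_eq_mk] with x h1 h2
  rw [h2, hg' x h1]

lemma cg_iSup {ι : Type*} [Countable ι] (S : ι → MeasurableSpace X)
    (h : ∀ n, @MeasurableSpace.CountablyGenerated X (S n)) :
    @MeasurableSpace.CountablyGenerated X (⨆ n, S n) := by
  choose b hb1 hb2 using fun n => (h n).isCountablyGenerated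
  exact @MeasurableSpace.CountablyGenerated.mk X (⨆ n, S n)
    ⟨⋃ n, b n, Set.countable_iUnion hb1, by
      rw [← MeasurableSpace.iSup_generateFrom]; exact iSup_congr hb2⟩

/-- A countable L¹-dense family of strongly measurable functions, for a countably generated
σ-algebra and a finite measure. -/
lemma dense_L1 [m : MeasurableSpace X] [MeasurableSpace.CountablyGenerated X]
    (ν : MeasureTheory.Measure X) [IsFiniteMeasure ν] :
    ∃ u : ℕ → X → ℝ, (∀ k, StronglyMeasurable (u k)) ∧ (∀ k, Integrable (u k) ν) ∧
      ∀ g : X → ℝ, StronglyMeasurable g → Integrable g ν → ∀ ε : ℝ, 0 < ε →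
        ∃ k, eLpNorm (g - u k) 1 ν < ENNReal.ofReal ε := by
  haveI : Fact ((1 : ℝ≥0∞) ≤ 1) := ⟨le_rfl⟩
  haveI : Fact ((1 : ℝ≥0∞) ≠ ∞) := ⟨ENNReal.one_ne_top⟩
  haveI : Nonempty (Lp ℝ 1 ν) := ⟨0⟩
  set d : ℕ → Lp ℝ 1 ν := TopologicalSpace.denseSeq (Lp ℝ 1 ν) with hd
  have hdense : DenseRange d := TopologicalSpace.denseRange_denseSeq _
  refine ⟨fun k => (Lp.aestronglyMeasurable (d k)).mk (d k),
    fun k => (Lp.aestronglyMeasurable (d k)).stronglyMeasurable_mk, fun k => ?_, ?_⟩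
  · exact (L1.integrable_coeFn (d k)).congr (Lp.aestronglyMeasurable (d k)).ae_eq_mk
  · intro g hgm hgi ε hε
    have hmem : MemLp g 1 ν := memLp_one_iff_integrable.2 hgi
    obtain ⟨k, hk⟩ := Metric.denseRange_iff.1 hdense (hmem.toLp g) ε hε
    refine ⟨k, ?_⟩
    have h1 : g - (Lp.aestronglyMeasurable (d k)).mk (d k) =ᵐ[ν]
        ⇑(hmem.toLp g) - ⇑(d k) := by
      filter_upwards [hmem.coeFn_toLp, (Lp.aestronglyMeasurable (d k)).ae_eq_mk] with x h1 h2
      simp only [Pi.sub_apply]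
      rw [h1, h2]
    rw [eLpNorm_congr_ae h1, ← eLpNorm_congr_ae (Lp.coeFn_sub (hmem.toLp g) (d k))]
    have hne : eLpNorm (⇑(hmem.toLp g - d k)) 1 ν ≠ ∞ := Lp.eLpNorm_ne_top _
    rw [ENNReal.lt_ofReal_iff_toReal_lt hne]
    have hdd : dist (hmem.toLp g) (d k) = (eLpNorm (⇑(hmem.toLp g - d k)) 1 ν).toReal := by
      rw [Lp.dist_def, eLpNorm_congr_ae (Lp.coeFn_sub (hmem.toLp g) (d k))]
    rw [← hdd]
    exact hk

/-- One step of the construction: given a countably generated `m''`, there is a countably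
generated `C' ≤ B` such that `μ[g|B]` is a.e. `C'`-measurable for every integrable `g` that
is a.e. `m''`-measurable. -/
lemma step_lemma {mX : MeasurableSpace X} (μ : MeasureTheory.Measure X) [IsFiniteMeasure μ]
    (B : MeasurableSpace X) (hB : B ≤ mX) (m'' : MeasurableSpace X) (hm'' : m'' ≤ mX)
    (hcg : @MeasurableSpace.CountablyGenerated X m'') :
    ∃ C' : MeasurableSpace X, C' ≤ B ∧ @MeasurableSpace.CountablyGenerated X C' ∧
      ∀ g : X → ℝ, Integrable g μ → AEStronglyMeasurable[m''] g μ →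
        AEStronglyMeasurable[C'] (μ[g|B]) μ := by
  obtain ⟨u, hu_sm, hu_int, hu_dense⟩ :=
    @dense_L1 X m'' hcg (μ.trim hm'') (isFiniteMeasure_trim hm'')
  have hu_intμ : ∀ k, Integrable (u k) μ := fun k => integrable_of_integrable_trim hm'' (hu_int k)
  set C' : MeasurableSpace X :=
    ⨆ k, MeasurableSpace.comap (μ[u k|B]) Real.measurableSpace with hC'
  have hC'B : C' ≤ B := iSup_le fun k =>
    (stronglyMeasurable_condExp (m := B) (f := u k) (μ := μ)).measurable.comap_le
  have hC'cg : @MeasurableSpace.CountablyGenerated X C' :=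
    cg_iSup _ fun k => MeasurableSpace.CountablyGenerated.comap _
  have hcond_meas : ∀ k, AEStronglyMeasurable[C'] (μ[u k|B]) μ := by
    intro k
    refine AEStronglyMeasurable.mono
      (le_iSup (fun k => MeasurableSpace.comap (μ[u k|B]) Real.measurableSpace) k) ?_
    exact StronglyMeasurable.aestronglyMeasurable
      (Measurable.stronglyMeasurable (comap_measurable _))
  refine ⟨C', hC'B, hC'cg, ?_⟩
  intro g hg_int hg_m
  set g₁ := hg_m.mk g with hg₁
  have hsm₁ : StronglyMeasurable[m''] g₁ := hg_m.stronglyMeasurable_mk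
  have hae₁ : g =ᵐ[μ] g₁ := hg_m.ae_eq_mk
  have hint₁ : Integrable g₁ μ := hg_int.congr hae₁
  have hint₁t : Integrable g₁ (μ.trim hm'') := hint₁.trim hm'' hsm₁
  have hseq : ∀ n : ℕ, ∃ k, eLpNorm (g₁ - u k) 1 (μ.trim hm'') < ENNReal.ofReal (1 / (n + 1)) :=
    fun n => hu_dense g₁ hsm₁ hint₁t (1 / (n + 1)) (by positivity)
  choose κ hκ using hseq
  have hκμ : ∀ n, eLpNorm (g₁ - u (κ n)) 1 μ < ENNReal.ofReal (1 / (n + 1)) := by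
    intro n
    rw [← eLpNorm_trim hm'' (hsm₁.sub (hu_sm (κ n)))]
    exact hκ n
  have hcontr : ∀ n, eLpNorm (μ[u (κ n)|B] - μ[g₁|B]) 1 μ ≤ eLpNorm (u (κ n) - g₁) 1 μ := by
    intro n
    have h1 : μ[u (κ n)|B] - μ[g₁|B] =ᵐ[μ] μ[u (κ n) - g₁|B] :=
      (condExp_sub (hu_intμ (κ n)) hint₁ B).symm
    rw [eLpNorm_congr_ae h1]
    exact eLpNorm_one_condExp_le_eLpNorm _
  have htend : Tendsto (fun n => eLpNorm (μ[u (κ n)|B] - μ[g₁|B]) 1 μ) atTop (𝓝 0) := by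
    have h0 : Tendsto (fun n : ℕ => ENNReal.ofReal (1 / (n + 1))) atTop (𝓝 0) := by
      rw [show (0 : ℝ≥0∞) = ENNReal.ofReal 0 by simp]
      exact (ENNReal.continuous_ofReal.tendsto 0).comp tendsto_one_div_add_atTop_nhds_zero_nat
    refine tendsto_of_tendsto_of_tendsto_of_le_of_le tendsto_const_nhds h0
      (fun n => zero_le) (fun n => ?_)
    refine le_trans (hcontr n) (le_of_lt ?_)
    rw [show u (κ n) - g₁ = -(g₁ - u (κ n)) by ring]
    rw [eLpNorm_neg]
    exact hκμ n
  have hfinal := aesm'_of_tendsto_L1 C' (fun n => hcond_meas (κ n))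
    (fun n => (stronglyMeasurable_condExp.mono hB).aestronglyMeasurable)
    (stronglyMeasurable_condExp.mono hB).aestronglyMeasurable htend
  exact hfinal.congr (condExp_congr_ae hae₁.symm)

end AuxLemmas

/-- Local character. For `f ∈ Lp(μ)` over a probability space and a
sub-σ-algebra `B`, there is a countably generated sub-σ-algebra `C ⊆ B` such that the
conditional expectations over `B` and over `C` agree on all `Lp` functions that are a.e.
measurable with respect to the σ-algebra generated by `σ(f) ∪ C`. -/
theorem exists_countably_generated_condexp_eq
    {X : Type*} {mX : MeasurableSpace X} (μ : Measure X) [IsProbabilityMeasure μ]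
    (p : ℝ≥0∞) (hp : 1 ≤ p) (hp' : p ≠ ⊤)
    (f : X → ℝ) (hf : MemLp f p μ) (B : MeasurableSpace X) (hB : B ≤ mX) :
    ∃ C : MeasurableSpace X, C ≤ B ∧
      (∃ S : Set (Set X), S.Countable ∧ C = MeasurableSpace.generateFrom S) ∧
      ∀ g : X → ℝ, MemLp g p μ →
        AEStronglyMeasurable[MeasurableSpace.comap f Real.measurableSpace ⊔ C] g μ →
        μ[g | B] =ᵐ[μ] μ[g | C] := by
  classical
  obtain ⟨f', hf'm, hff'⟩ : ∃ f', StronglyMeasurable[mX] f' ∧ f =ᵐ[μ] f' :=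
    ⟨hf.aestronglyMeasurable.mk f, hf.aestronglyMeasurable.stronglyMeasurable_mk,
      hf.aestronglyMeasurable.ae_eq_mk⟩
  set mf : MeasurableSpace X := MeasurableSpace.comap f' Real.measurableSpace with hmf
  have hmfX : mf ≤ mX := Measurable.comap_le (StronglyMeasurable.measurable hf'm)
  have hmfcg : @MeasurableSpace.CountablyGenerated X mf :=
    MeasurableSpace.CountablyGenerated.comap _
  -- one step of the recursion, relative to the previous σ-algebra
  have key : ∀ C : MeasurableSpace X, C ≤ B → @MeasurableSpace.CountablyGenerated X C →
      ∃ C' : MeasurableSpace X, C ≤ C' ∧ C' ≤ B ∧ @MeasurableSpace.CountablyGenerated X C' ∧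
        ∀ g : X → ℝ, Integrable g μ → AEStronglyMeasurable[mf ⊔ C] g μ →
          AEStronglyMeasurable[C'] (μ[g|B]) μ := by
    intro C hCB hCcg
    obtain ⟨C'', hC''B, hC''cg, hC''⟩ := step_lemma μ B hB (mf ⊔ C)
      (sup_le hmfX (hCB.trans hB)) (MeasurableSpace.CountablyGenerated.sup hmfcg hCcg)
    exact ⟨C ⊔ C'', le_sup_left, sup_le hCB hC''B,
      MeasurableSpace.CountablyGenerated.sup hCcg hC''cg,
      fun g hgi hgm => (hC'' g hgi hgm).mono le_sup_right⟩
  choose nxt h1 h2 h3 h4 using key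
  have hbotcg : @MeasurableSpace.CountablyGenerated X (⊥ : MeasurableSpace X) :=
    @MeasurableSpace.CountablyGenerated.mk X ⊥
      ⟨∅, Set.countable_empty,
        le_antisymm bot_le (MeasurableSpace.generateFrom_le fun s hs => hs.elim)⟩
  -- iterate the construction
  let base : {C : MeasurableSpace X // C ≤ B ∧ @MeasurableSpace.CountablyGenerated X C} :=
    ⟨⊥, bot_le, hbotcg⟩
  let stepf : {C : MeasurableSpace X // C ≤ B ∧ @MeasurableSpace.CountablyGenerated X C} →
      {C : MeasurableSpace X // C ≤ B ∧ @MeasurableSpace.CountablyGenerated X C} :=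
    fun c => ⟨nxt c.1 c.2.1 c.2.2, h2 c.1 c.2.1 c.2.2, h3 c.1 c.2.1 c.2.2⟩
  let Cn : ℕ → MeasurableSpace X := fun n => (stepf^[n] base).1
  have hCnB : ∀ n, Cn n ≤ B := fun n => (stepf^[n] base).2.1
  have hCncg : ∀ n, @MeasurableSpace.CountablyGenerated X (Cn n) :=
    fun n => (stepf^[n] base).2.2
  have hCn_succ : ∀ n, Cn (n + 1) = nxt (Cn n) (hCnB n) (hCncg n) := by
    intro n
    show (stepf^[n + 1] base).1 = _
    rw [Function.iterate_succ_apply']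
  have hmono : ∀ n, Cn n ≤ Cn (n + 1) := by
    intro n
    rw [hCn_succ n]
    exact h1 (Cn n) (hCnB n) (hCncg n)
  have hprop : ∀ n (g : X → ℝ), Integrable g μ → AEStronglyMeasurable[mf ⊔ Cn n] g μ →
      AEStronglyMeasurable[Cn (n + 1)] (μ[g|B]) μ := by
    intro n g hgi hgm
    rw [hCn_succ n]
    exact h4 (Cn n) (hCnB n) (hCncg n) g hgi hgm
  set C : MeasurableSpace X := ⨆ n, Cn n with hC
  have hCB : C ≤ B := iSup_le fun n => hCnB n
  have hCcg : @MeasurableSpace.CountablyGenerated X C := cg_iSup _ hCncg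
  refine ⟨C, hCB, hCcg.isCountablyGenerated, ?_⟩
  -- the filtration
  have hmono' : Monotone fun n => mf ⊔ Cn n :=
    monotone_nat_of_le_succ fun n => sup_le_sup_left (hmono n) _
  let ℱ : Filtration ℕ mX :=
    ⟨fun n => mf ⊔ Cn n, hmono', fun n => sup_le hmfX ((hCnB n).trans hB)⟩
  have hℱn : ∀ n, ℱ n = mf ⊔ Cn n := fun _ => rfl
  have hsup : (⨆ n, ℱ n) = mf ⊔ C := by
    show (⨆ n, mf ⊔ Cn n) = mf ⊔ ⨆ n, Cn n
    rw [iSup_sup_eq, iSup_const]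
  intro g hgLp hgm
  have hg_int : Integrable g μ := hgLp.integrable hp
  have hgm' : AEStronglyMeasurable[mf ⊔ C] g μ := aesm'_comap_congr hff' C hgm
  set g₂ := hgm'.mk g with hg₂
  have hsm₂ : StronglyMeasurable[mf ⊔ C] g₂ := hgm'.stronglyMeasurable_mk
  have hae₂ : g =ᵐ[μ] g₂ := hgm'.ae_eq_mk
  have hint₂ : Integrable g₂ μ := hg_int.congr hae₂
  have hsm₂' : StronglyMeasurable[⨆ n, ℱ n] g₂ := by rw [hsup]; exact hsm₂
  have htd := hint₂.tendsto_eLpNorm_condExp hsm₂'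
  have hφm : ∀ n, AEStronglyMeasurable[C] (μ[μ[g₂|ℱ n]|B]) μ := by
    intro n
    have hfn : AEStronglyMeasurable[mf ⊔ Cn n] (μ[g₂|ℱ n]) μ := by
      rw [← hℱn n]
      exact stronglyMeasurable_condExp.aestronglyMeasurable
    exact (hprop n _ integrable_condExp hfn).mono (le_iSup Cn (n + 1))
  have hcontr : ∀ n, eLpNorm (μ[μ[g₂|ℱ n]|B] - μ[g₂|B]) 1 μ ≤
      eLpNorm (μ[g₂|ℱ n] - g₂) 1 μ := by
    intro n
    have hd : μ[μ[g₂|ℱ n]|B] - μ[g₂|B] =ᵐ[μ] μ[μ[g₂|ℱ n] - g₂|B] :=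
      (condExp_sub integrable_condExp hint₂ B).symm
    rw [eLpNorm_congr_ae hd]
    exact eLpNorm_one_condExp_le_eLpNorm _
  have hL1 : Tendsto (fun n => eLpNorm (μ[μ[g₂|ℱ n]|B] - μ[g₂|B]) 1 μ) atTop (𝓝 0) :=
    tendsto_of_tendsto_of_tendsto_of_le_of_le tendsto_const_nhds htd
      (fun n => zero_le) hcontr
  have hBmeas : AEStronglyMeasurable[C] (μ[g₂|B]) μ :=
    aesm'_of_tendsto_L1 C hφm
      (fun n => (stronglyMeasurable_condExp.mono hB).aestronglyMeasurable)
      (stronglyMeasurable_condExp.mono hB).aestronglyMeasurable hL1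
  have hgB : AEStronglyMeasurable[C] (μ[g|B]) μ :=
    hBmeas.congr (condExp_congr_ae hae₂.symm)
  have e1 : μ[μ[g|B]|C] =ᵐ[μ] μ[g|C] := condExp_condExp_of_le hCB hB
  have e2 : μ[μ[g|B]|C] =ᵐ[μ] μ[g|B] :=
    condExp_of_aestronglyMeasurable' (hCB.trans hB) hgB integrable_condExp
  exact e2.symm.trans e1
end

section
/- Fix 1 ≤ p < ∞. Let (X, 𝒜, μ) be a probability space, V ⊆ 𝒜 a sub-σ-algebra, f ∈ Lp(μ) with f ≥ 0 a.e., and r ∈ (0,1). Then every g in the norm-closure of S_r(f) in Lp(μ) satisfies ‖g‖_p ≤ r^{-1/p} ‖f‖_p. -/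
open MeasureTheory ENNReal

/-- The set `S_r(f)` of nonnegative, a.e. `V`-measurable elements `g` of `Lp(μ)` such that
`μ[χ_{g ≤ f} | V] ≥ r'` a.e. for some `r' > r`. -/
def SrSet {X : Type*} {_mX : MeasurableSpace X} {μ : Measure X} {p : ℝ≥0∞}
    [Fact (1 ≤ p)] (V : MeasurableSpace X) (f : Lp ℝ p μ) (r : ℝ) : Set (Lp ℝ p μ) :=
  {g | 0 ≤ᵐ[μ] ⇑g ∧ AEStronglyMeasurable[V] (⇑g) μ ∧
    ∃ r' : ℝ, r < r' ∧
      ∀ᵐ x ∂μ, r' ≤ (μ[Set.indicator {y | g y ≤ f y} (fun _ => (1 : ℝ)) | V]) x}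

theorem norm_le_of_mem_SrSet_aux
    {X : Type*} {mX : MeasurableSpace X} (μ : Measure X) [IsProbabilityMeasure μ]
    (p : ℝ≥0∞) [Fact (1 ≤ p)] (hp' : p ≠ ⊤)
    (V : MeasurableSpace X) (hV : V ≤ mX)
    (f : Lp ℝ p μ) (hf : 0 ≤ᵐ[μ] ⇑f) (r : ℝ) (hr : r ∈ Set.Ioo (0 : ℝ) 1) :
    ∀ g ∈ SrSet V f r, ‖g‖ ≤ r ^ (-(1 : ℝ) / p.toReal) * ‖f‖ := by
  intro g hg
  obtain ⟨hg0, hgV, r', hrr', hcond⟩ := hg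
  have hp1 : (1 : ℝ≥0∞) ≤ p := Fact.out
  have hp0 : p ≠ 0 := by intro h; simp [h] at hp1
  have hq : 0 < p.toReal := ENNReal.toReal_pos hp0 hp'
  set q := p.toReal with hq_def
  have hr'pos : 0 < r' := hr.1.trans hrr'
  haveI : SigmaFinite (μ.trim hV) := by infer_instance
  -- integrability
  have hGint : Integrable (fun x => ‖g x‖ ^ q) μ :=
    (Lp.memLp g).integrable_norm_rpow hp0 hp'
  have hFint : Integrable (fun x => ‖f x‖ ^ q) μ :=
    (Lp.memLp f).integrable_norm_rpow hp0 hp'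
  set χ : X → ℝ := Set.indicator {y | g y ≤ f y} (fun _ => (1 : ℝ)) with hχ_def
  have hχ01 : ∀ x, 0 ≤ χ x ∧ χ x ≤ 1 := by
    intro x
    constructor <;> simp only [hχ_def, Set.indicator] <;> split <;> norm_num
  have hχ_aesm : AEStronglyMeasurable[mX] χ μ := by
    obtain ⟨g', hg'm, hgg'⟩ := (Lp.memLp g).aestronglyMeasurable
    obtain ⟨f', hf'm, hff'⟩ := (Lp.memLp f).aestronglyMeasurable
    refine AEStronglyMeasurable.congr
      (f := Set.indicator {y | g' y ≤ f' y} fun _ => (1 : ℝ)) ?_ ?_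
    · exact (stronglyMeasurable_const.indicator
        (measurableSet_le hg'm.measurable hf'm.measurable)).aestronglyMeasurable
    · filter_upwards [hgg', hff'] with x hx1 hx2
      simp only [hχ_def, Set.indicator, Set.mem_setOf_eq, hx1, hx2]
  have hχint : Integrable χ μ := by
    refine Integrable.mono' (integrable_const 1) hχ_aesm ?_
    filter_upwards with x
    rw [Real.norm_eq_abs, abs_of_nonneg (hχ01 x).1]
    exact (hχ01 x).2
  -- H
  have hH : AEStronglyMeasurable[V] (fun x => ‖g x‖ ^ q) μ :=
    (continuous_norm.rpow_const fun t => Or.inr hq.le).comp_aestronglyMeasurable hgV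
  have hH0 : ∀ x, 0 ≤ ‖g x‖ ^ q := fun x => Real.rpow_nonneg (norm_nonneg _) q
  have hHχint : Integrable ((fun x => ‖g x‖ ^ q) * χ) μ := by
    have hHaesm : AEStronglyMeasurable[mX] (fun x => ‖g x‖ ^ q) μ :=
      (hH.stronglyMeasurable_mk.mono hV).aestronglyMeasurable.congr hH.ae_eq_mk.symm
    refine Integrable.mono' hGint (hHaesm.mul hχ_aesm) ?_
    filter_upwards with x
    rw [Pi.mul_apply, Real.norm_eq_abs, abs_of_nonneg (mul_nonneg (hH0 x) (hχ01 x).1)]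
    calc ‖g x‖ ^ q * χ x ≤ ‖g x‖ ^ q * 1 := by
          exact mul_le_mul_of_nonneg_left (hχ01 x).2 (hH0 x)
      _ = ‖g x‖ ^ q := mul_one _
  -- conditional expectation facts
  have hc_le_one : μ[χ|V] ≤ᵐ[μ] fun _ => (1 : ℝ) := by
    refine (condExp_mono hχint (integrable_const 1) ?_).trans ?_
    · filter_upwards with x; exact (hχ01 x).2
    · rw [condExp_const hV]
  have hc_nonneg : 0 ≤ᵐ[μ] μ[χ|V] :=
    condExp_nonneg (Filter.Eventually.of_forall fun x => (hχ01 x).1)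
  have hpull : μ[(fun x => ‖g x‖ ^ q) * χ|V]
      =ᵐ[μ] (fun x => ‖g x‖ ^ q) * μ[χ|V] :=
    condExp_mul_of_aestronglyMeasurable_left hH hHχint hχint
  have hcχ_int : Integrable ((fun x => ‖g x‖ ^ q) * μ[χ|V]) μ := by
    have hHaesm : AEStronglyMeasurable[mX] (fun x => ‖g x‖ ^ q) μ :=
      (hH.stronglyMeasurable_mk.mono hV).aestronglyMeasurable.congr hH.ae_eq_mk.symm
    refine Integrable.mono' hGint
      (hHaesm.mul (stronglyMeasurable_condExp.mono hV).aestronglyMeasurable) ?_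
    filter_upwards [hc_le_one, hc_nonneg] with x h1 h0
    rw [Pi.mul_apply, Real.norm_eq_abs, abs_of_nonneg (mul_nonneg (hH0 x) h0)]
    calc ‖g x‖ ^ q * (μ[χ|V]) x ≤ ‖g x‖ ^ q * 1 :=
          mul_le_mul_of_nonneg_left h1 (hH0 x)
      _ = ‖g x‖ ^ q := mul_one _
  -- step A : r' * ∫ H ≤ ∫ H * c
  have stepA : r' * ∫ x, ‖g x‖ ^ q ∂μ ≤ ∫ x, (‖g x‖ ^ q) * (μ[χ|V]) x ∂μ := by
    rw [mul_comm, ← integral_mul_const]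
    refine integral_mono_ae (hGint.mul_const r') hcχ_int ?_
    filter_upwards [hcond] with x hx
    exact mul_le_mul_of_nonneg_left hx (hH0 x)
  -- step B : ∫ H * c = ∫ H * χ
  have stepB : ∫ x, (‖g x‖ ^ q) * (μ[χ|V]) x ∂μ = ∫ x, (‖g x‖ ^ q) * χ x ∂μ := by
    calc ∫ x, (‖g x‖ ^ q) * (μ[χ|V]) x ∂μ
        = ∫ x, (μ[(fun x => ‖g x‖ ^ q) * χ|V]) x ∂μ := (integral_congr_ae hpull).symm
      _ = ∫ x, ((fun x => ‖g x‖ ^ q) * χ) x ∂μ := integral_condExp hV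
      _ = ∫ x, (‖g x‖ ^ q) * χ x ∂μ := rfl
  -- step C : ∫ H * χ ≤ ∫ ‖f‖^q
  have stepC : ∫ x, (‖g x‖ ^ q) * χ x ∂μ ≤ ∫ x, ‖f x‖ ^ q ∂μ := by
    refine integral_mono_ae hHχint hFint ?_
    filter_upwards [hg0, hf] with x hgx hfx
    by_cases hx : x ∈ {y | g y ≤ f y}
    · simp only [hχ_def, Set.indicator_of_mem hx, mul_one]
      rw [Real.norm_eq_abs, Real.norm_eq_abs, abs_of_nonneg hgx, abs_of_nonneg hfx]
      exact Real.rpow_le_rpow hgx hx hq.le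
    · simp only [hχ_def, Set.indicator_of_notMem hx, mul_zero]
      exact Real.rpow_nonneg (norm_nonneg _) q
  have hr'bound : ∫ x, ‖g x‖ ^ q ∂μ ≤ (∫ x, ‖f x‖ ^ q ∂μ) / r := by
    have h1 : r' * ∫ x, ‖g x‖ ^ q ∂μ ≤ ∫ x, ‖f x‖ ^ q ∂μ :=
      stepA.trans (le_of_eq stepB |>.trans stepC)
    have hIg : 0 ≤ ∫ x, ‖g x‖ ^ q ∂μ := integral_nonneg hH0
    rw [le_div_iff₀ hr.1, mul_comm]
    calc r * ∫ x, ‖g x‖ ^ q ∂μ ≤ r' * ∫ x, ‖g x‖ ^ q ∂μ :=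
          mul_le_mul_of_nonneg_right hrr'.le hIg
      _ ≤ _ := h1
  -- norms
  have hIg : 0 ≤ ∫ x, ‖g x‖ ^ q ∂μ := integral_nonneg hH0
  have hIf : 0 ≤ ∫ x, ‖f x‖ ^ q ∂μ := integral_nonneg fun x => Real.rpow_nonneg (norm_nonneg _) q
  have hng : ‖g‖ = (∫ x, ‖g x‖ ^ q ∂μ) ^ q⁻¹ := by
    rw [Lp.norm_def, MemLp.eLpNorm_eq_integral_rpow_norm hp0 hp' (Lp.memLp g),
      ENNReal.toReal_ofReal (Real.rpow_nonneg hIg _)]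
  have hnf : ‖f‖ = (∫ x, ‖f x‖ ^ q ∂μ) ^ q⁻¹ := by
    rw [Lp.norm_def, MemLp.eLpNorm_eq_integral_rpow_norm hp0 hp' (Lp.memLp f),
      ENNReal.toReal_ofReal (Real.rpow_nonneg hIf _)]
  rw [hng, hnf]
  calc (∫ x, ‖g x‖ ^ q ∂μ) ^ q⁻¹ ≤ ((∫ x, ‖f x‖ ^ q ∂μ) / r) ^ q⁻¹ :=
        Real.rpow_le_rpow hIg hr'bound (inv_nonneg.mpr hq.le)
    _ = r ^ (-(1 : ℝ) / q) * (∫ x, ‖f x‖ ^ q ∂μ) ^ q⁻¹ := by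
        rw [Real.div_rpow hIf hr.1.le, div_eq_mul_inv, mul_comm,
          ← Real.rpow_neg hr.1.le, neg_div, one_div]


/-- Every `g` in the norm-closure of `S_r(f)` satisfies
`‖g‖_p ≤ r^{-1/p} ‖f‖_p`. -/
theorem norm_le_of_mem_closure_SrSet
    {X : Type*} {mX : MeasurableSpace X} (μ : Measure X) [IsProbabilityMeasure μ]
    (p : ℝ≥0∞) [Fact (1 ≤ p)] (hp' : p ≠ ⊤)
    (V : MeasurableSpace X) (hV : V ≤ mX)
    (f : Lp ℝ p μ) (hf : 0 ≤ᵐ[μ] ⇑f) (r : ℝ) (hr : r ∈ Set.Ioo (0 : ℝ) 1) :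
    ∀ g ∈ closure (SrSet V f r), ‖g‖ ≤ r ^ (-(1 : ℝ) / p.toReal) * ‖f‖ := by
  intro g hg
  have hclosed : IsClosed {h : Lp ℝ p μ | ‖h‖ ≤ r ^ (-(1 : ℝ) / p.toReal) * ‖f‖} :=
    isClosed_le continuous_norm continuous_const
  exact closure_minimal
    (fun h hh => norm_le_of_mem_SrSet_aux μ p hp' V hV f hf r hr h hh) hclosed hg
end

section
/- Fix 1 ≤ p < ∞. Let (X, 𝒜, μ) be a probability space, V ⊆ 𝒜 a sub-σ-algebra, f ∈ Lp(μ), and r ∈ [0,1]. Then μ[χ_{{f ≤ 0}} | V] ≥ r a.e. if and only if for every g ∈ Lp(μ) with g ≥ 0 a.e. and g a.e. equal to a V-measurable function, and every n ∈ ℕ, ‖(n·f)⁺ ⊓ g‖_p ≤ (1−r)^{1/p} ‖g‖_p, where (n·f)⁺ ⊓ g denotes the pointwise minimum of the positive part of n·f and g. -/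
open MeasureTheory ENNReal

private theorem indicator_const_integrable {X : Type*} {mX : MeasurableSpace X}
    (μ : Measure X) [IsFiniteMeasure μ] {S : Set X} (hS : MeasurableSet S) :
    Integrable (S.indicator fun _ => (1 : ℝ)) μ :=
  (integrable_const 1).indicator hS

private theorem memLp_indicator_one {X : Type*} {mX : MeasurableSpace X}
    (μ : Measure X) [IsFiniteMeasure μ] {A : Set X} (hA : MeasurableSet A) (p : ℝ≥0∞) :
    MemLp (A.indicator fun _ => (1 : ℝ)) p μ :=
  memLp_indicator_const p hA 1 (Or.inr (measure_ne_top μ A))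

private theorem eLpNorm_indicator_one {X : Type*} {mX : MeasurableSpace X}
    {μ : Measure X} {A : Set X} (hA : MeasurableSet A) {p : ℝ≥0∞} (hp0 : p ≠ 0)
    (hp' : p ≠ ⊤) :
    eLpNorm (A.indicator fun _ => (1 : ℝ)) p μ = μ A ^ (1 / p.toReal) := by
  rw [eLpNorm_indicator_const hA hp0 hp']
  simp

private theorem setIntegral_indicator_one {X : Type*} {mX : MeasurableSpace X}
    {μ : Measure X} {A S : Set X} (hS : MeasurableSet S) :
    ∫ x in A, S.indicator (fun _ => (1 : ℝ)) x ∂μ = ((μ.restrict A) S).toReal := by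
  rw [integral_indicator hS, setIntegral_const, smul_eq_mul, mul_one, measureReal_def]

private theorem meas_helper {X : Type*} {mX : MeasurableSpace X} {φ : X → ℝ}
    (hφ : Measurable φ) (q : ℝ) : Measurable fun x => (‖φ x‖₊ : ℝ≥0∞) ^ q :=
  ENNReal.continuous_rpow_const.measurable.comp hφ.nnnorm.coe_nnreal_ennreal

private theorem setIntegral_le_const {X : Type*} {mX : MeasurableSpace X}
    {μ : Measure X} [IsFiniteMeasure μ] {c : X → ℝ} (hc : Integrable c μ)
    {A : Set X} (hA : MeasurableSet A) {b : ℝ} (hb : ∀ x ∈ A, c x ≤ b) :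
    ∫ x in A, c x ∂μ ≤ b * (μ A).toReal := by
  have hmono := setIntegral_mono_on hc.integrableOn
    (integrableOn_const (measure_ne_top μ A)) hA hb
  calc ∫ x in A, c x ∂μ ≤ ∫ _ in A, b ∂μ := hmono
    _ = (μ A).toReal • b := setIntegral_const _
    _ = b * (μ A).toReal := by rw [smul_eq_mul]; ring

private theorem aux_forward
    {X : Type*} {mX : MeasurableSpace X} (μ : Measure X) [IsProbabilityMeasure μ]
    (p : ℝ≥0∞) (hp : 1 ≤ p) (hp' : p ≠ ⊤)
    (V : MeasurableSpace X) (hV : V ≤ mX)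
    (f : X → ℝ) (hf : MemLp f p μ) (hfm : Measurable[mX] f)
    (r : ℝ) (hr : r ∈ Set.Icc (0 : ℝ) 1)
    (hge : ∀ᵐ x ∂μ, r ≤ (μ[Set.indicator {y | f y ≤ 0} (fun _ => (1 : ℝ)) | V]) x)
    (g : X → ℝ) (hg : MemLp g p μ) (hg0 : 0 ≤ᵐ[μ] g) (hgV : AEStronglyMeasurable[V] g μ)
    (n : ℕ) :
    eLpNorm (fun x => min (max ((n : ℝ) * f x) 0) (g x)) p μ
      ≤ ENNReal.ofReal ((1 - r) ^ (1 / p.toReal)) * eLpNorm g p μ := by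
  have hp0 : p ≠ 0 := (lt_of_lt_of_le zero_lt_one hp).ne'
  set q : ℝ := p.toReal with hq_def
  have hq1 : 1 ≤ q := by
    rw [hq_def, ← ENNReal.toReal_one]
    exact ENNReal.toReal_mono hp' hp
  have hq0 : 0 < q := lt_of_lt_of_le zero_lt_one hq1
  haveI : SigmaFinite (μ.trim hV) := by
    haveI : IsFiniteMeasure (μ.trim hV) := isFiniteMeasure_trim hV
    infer_instance
  set S : Set X := {y | f y ≤ 0} with hS_def
  have hS : MeasurableSet[mX] S := hfm measurableSet_Iic
  set χS : X → ℝ := S.indicator (fun _ => (1 : ℝ)) with hχS_def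
  have hχS_int : Integrable χS μ := indicator_const_integrable μ hS
  set χT : X → ℝ := Sᶜ.indicator (fun _ => (1 : ℝ)) with hχT_def
  have hχT_int : Integrable χT μ := indicator_const_integrable μ hS.compl
  have hχT_eq : ∀ x, χT x = 1 - χS x := by
    intro x
    by_cases hx : x ∈ S <;> simp [hχS_def, hχT_def, hx]
  have hχT01 : ∀ x, 0 ≤ χT x ∧ χT x ≤ 1 := by
    intro x
    by_cases hx : x ∈ Sᶜ <;> simp [hχT_def, hx]
  -- χT's conditional expectation is at most 1 - r a.e.
  have hcT_le : ∀ᵐ x ∂μ, (μ[χT|V]) x ≤ 1 - r := by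
    have heq : χT = (fun _ => (1 : ℝ)) - χS := funext fun x => by
      rw [hχT_eq x]; rfl
    have h1 : μ[χT|V] =ᵐ[μ] μ[fun _ => (1 : ℝ)|V] - μ[χS|V] := by
      rw [heq]; exact condExp_sub (integrable_const 1) hχS_int V
    have h2 : μ[fun _ => (1 : ℝ)|V] = fun _ => (1 : ℝ) := condExp_const hV 1
    filter_upwards [h1, hge] with x hx1 hx2
    rw [hx1, h2]
    simp only [Pi.sub_apply]
    linarith
  set G : X → ℝ := fun x => ‖g x‖ ^ q with hG_def
  have hG_int : Integrable G μ := hg.integrable_norm_rpow hp0 hp'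
  have hG_nonneg : ∀ x, 0 ≤ G x := fun x => Real.rpow_nonneg (norm_nonneg _) _
  have hGV : AEStronglyMeasurable[V] G μ := by
    have : Continuous fun t : ℝ => ‖t‖ ^ q :=
      continuous_norm.rpow_const fun t => Or.inr hq0.le
    exact this.comp_aestronglyMeasurable hgV
  have h_int_mul : Integrable (G * χT) μ := by
    refine hG_int.mono' (hG_int.aestronglyMeasurable.mul hχT_int.aestronglyMeasurable) ?_
    filter_upwards with x
    have h01 := hχT01 x
    rw [Pi.mul_apply, Real.norm_eq_abs, abs_mul, abs_of_nonneg (hG_nonneg x),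
      abs_of_nonneg h01.1]
    calc G x * χT x ≤ G x * 1 := by
          exact mul_le_mul_of_nonneg_left h01.2 (hG_nonneg x)
      _ = G x := mul_one _
  have h_pull : μ[G * χT|V] =ᵐ[μ] G * μ[χT|V] :=
    condExp_mul_of_aestronglyMeasurable_left hGV h_int_mul hχT_int
  -- key real integral inequality
  have key : ∫ x, χT x * G x ∂μ ≤ (1 - r) * ∫ x, G x ∂μ := by
    have h1 : ∫ x, G x * χT x ∂μ = ∫ x, G x * (μ[χT|V]) x ∂μ :=
      calc ∫ x, G x * χT x ∂μ = ∫ x, (G * χT) x ∂μ := rfl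
        _ = ∫ x, (μ[G * χT|V]) x ∂μ := (integral_condExp hV).symm
        _ = ∫ x, (G * μ[χT|V]) x ∂μ := integral_congr_ae h_pull
        _ = ∫ x, G x * (μ[χT|V]) x ∂μ := rfl
    have h_int2 : Integrable (fun x => G x * (μ[χT|V]) x) μ :=
      integrable_condExp.congr h_pull
    have h2 : ∫ x, G x * (μ[χT|V]) x ∂μ ≤ ∫ x, (1 - r) * G x ∂μ := by
      refine integral_mono_ae h_int2 (hG_int.const_mul _) ?_
      filter_upwards [hcT_le] with x hx
      calc G x * (μ[χT|V]) x ≤ G x * (1 - r) :=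
            mul_le_mul_of_nonneg_left hx (hG_nonneg x)
        _ = (1 - r) * G x := mul_comm _ _
    calc ∫ x, χT x * G x ∂μ = ∫ x, G x * χT x ∂μ := by
          simp_rw [mul_comm]
      _ = ∫ x, G x * (μ[χT|V]) x ∂μ := h1
      _ ≤ ∫ x, (1 - r) * G x ∂μ := h2
      _ = (1 - r) * ∫ x, G x ∂μ := integral_const_mul _ _
  -- pointwise bound
  have h_ptwise : ∀ᵐ x ∂μ,
      ‖min (max ((n : ℝ) * f x) 0) (g x)‖ ^ q ≤ χT x * G x := by
    filter_upwards [hg0] with x hgx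
    by_cases hfx : f x ≤ 0
    · have h1 : max ((n : ℝ) * f x) 0 = 0 :=
        max_eq_right (mul_nonpos_iff.mpr (Or.inl ⟨Nat.cast_nonneg n, hfx⟩))
      have h2 : min (0 : ℝ) (g x) = 0 := min_eq_left hgx
      have hxS : x ∈ S := hfx
      rw [h1, h2, hχT_def, Set.indicator_of_notMem (by simpa using hxS), zero_mul,
        norm_zero, Real.zero_rpow hq0.ne']
    · have hxT : x ∈ Sᶜ := hfx
      have h0 : 0 ≤ min (max ((n : ℝ) * f x) 0) (g x) := le_min (le_max_right _ _) hgx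
      have h1 : min (max ((n : ℝ) * f x) 0) (g x) ≤ g x := min_le_right _ _
      rw [hχT_def, Set.indicator_of_mem hxT, one_mul, hG_def]
      refine Real.rpow_le_rpow (norm_nonneg _) ?_ hq0.le
      rw [Real.norm_of_nonneg h0, Real.norm_of_nonneg (le_trans h0 h1)]
      exact h1
  -- lintegral chain
  have h_lint_g : ∫⁻ x, (‖g x‖₊ : ℝ≥0∞) ^ q ∂μ = ENNReal.ofReal (∫ x, G x ∂μ) := by
    rw [ofReal_integral_eq_lintegral_ofReal hG_int (Filter.Eventually.of_forall hG_nonneg)]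
    refine lintegral_congr fun x => ?_
    rw [hG_def, ← ENNReal.ofReal_rpow_of_nonneg (norm_nonneg _) hq0.le,
      ofReal_norm, enorm_eq_nnnorm]
  have h_lint_h : ∫⁻ x, (‖min (max ((n : ℝ) * f x) 0) (g x)‖₊ : ℝ≥0∞) ^ q ∂μ
      ≤ ENNReal.ofReal ((1 - r) * ∫ x, G x ∂μ) := by
    have hstep : ∫⁻ x, (‖min (max ((n : ℝ) * f x) 0) (g x)‖₊ : ℝ≥0∞) ^ q ∂μ
        ≤ ∫⁻ x, ENNReal.ofReal (χT x * G x) ∂μ := by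
      refine lintegral_mono_ae ?_
      filter_upwards [h_ptwise] with x hx
      rw [← enorm_eq_nnnorm, ← ofReal_norm, ENNReal.ofReal_rpow_of_nonneg (norm_nonneg _) hq0.le]
      exact ENNReal.ofReal_le_ofReal hx
    have h_int3 : Integrable (fun x => χT x * G x) μ := by
      refine (integrable_congr ?_).mp h_int_mul
      filter_upwards with x
      rw [Pi.mul_apply, mul_comm]
    have heq2 : ∫⁻ x, ENNReal.ofReal (χT x * G x) ∂μ
        = ENNReal.ofReal (∫ x, χT x * G x ∂μ) := by
      rw [ofReal_integral_eq_lintegral_ofReal h_int3 ?_]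
      filter_upwards with x
      exact mul_nonneg (hχT01 x).1 (hG_nonneg x)
    calc _ ≤ ∫⁻ x, ENNReal.ofReal (χT x * G x) ∂μ := hstep
      _ = ENNReal.ofReal (∫ x, χT x * G x ∂μ) := heq2
      _ ≤ ENNReal.ofReal ((1 - r) * ∫ x, G x ∂μ) := ENNReal.ofReal_le_ofReal key
  -- assemble
  have h1r : (0 : ℝ) ≤ 1 - r := by linarith [hr.2]
  have hIG : (0 : ℝ) ≤ ∫ x, G x ∂μ := integral_nonneg hG_nonneg
  rw [eLpNorm_eq_lintegral_rpow_enorm_toReal hp0 hp', eLpNorm_eq_lintegral_rpow_enorm_toReal hp0 hp',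
    ← hq_def]
  simp only [enorm_eq_nnnorm]
  rw [h_lint_g]
  calc (∫⁻ x, (‖min (max ((n : ℝ) * f x) 0) (g x)‖₊ : ℝ≥0∞) ^ q ∂μ) ^ (1 / q)
      ≤ (ENNReal.ofReal ((1 - r) * ∫ x, G x ∂μ)) ^ (1 / q) :=
        ENNReal.rpow_le_rpow h_lint_h (by positivity)
    _ = ENNReal.ofReal ((1 - r) ^ (1 / q)) * (ENNReal.ofReal (∫ x, G x ∂μ)) ^ (1 / q) := by
        rw [ENNReal.ofReal_mul h1r, ENNReal.mul_rpow_of_nonneg _ _ (by positivity),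
          ENNReal.ofReal_rpow_of_nonneg h1r (by positivity)]

private theorem aux_reverse
    {X : Type*} {mX : MeasurableSpace X} (μ : Measure X) [IsProbabilityMeasure μ]
    (p : ℝ≥0∞) (hp : 1 ≤ p) (hp' : p ≠ ⊤)
    (V : MeasurableSpace X) (hV : V ≤ mX)
    (f : X → ℝ) (hfm : Measurable[mX] f)
    (r : ℝ) (hr : r ∈ Set.Icc (0 : ℝ) 1)
    (hb : ∀ g : X → ℝ, MemLp g p μ → 0 ≤ᵐ[μ] g → AEStronglyMeasurable[V] g μ →
        ∀ n : ℕ,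
          eLpNorm (fun x => min (max ((n : ℝ) * f x) 0) (g x)) p μ
            ≤ ENNReal.ofReal ((1 - r) ^ (1 / p.toReal)) * eLpNorm g p μ) :
    ∀ᵐ x ∂μ, r ≤ (μ[Set.indicator {y | f y ≤ 0} (fun _ => (1 : ℝ)) | V]) x := by
  have hp0 : p ≠ 0 := (lt_of_lt_of_le zero_lt_one hp).ne'
  set q : ℝ := p.toReal with hq_def
  have hq1 : 1 ≤ q := by
    rw [hq_def, ← ENNReal.toReal_one]
    exact ENNReal.toReal_mono hp' hp
  have hq0 : 0 < q := lt_of_lt_of_le zero_lt_one hq1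
  haveI : SigmaFinite (μ.trim hV) := by
    haveI : IsFiniteMeasure (μ.trim hV) := isFiniteMeasure_trim hV
    infer_instance
  have h1r : (0 : ℝ) ≤ 1 - r := by linarith [hr.2]
  set S : Set X := {y | f y ≤ 0} with hS_def
  have hS : MeasurableSet[mX] S := hfm measurableSet_Iic
  set χS : X → ℝ := S.indicator (fun _ => (1 : ℝ)) with hχS_def
  have hχS_int : Integrable χS μ := indicator_const_integrable μ hS
  set c : X → ℝ := μ[χS|V] with hc_def
  have hcm : StronglyMeasurable[V] c := stronglyMeasurable_condExp
  have hA_null : ∀ k : ℕ, μ {x | c x ≤ r - 1 / ((k : ℝ) + 1)} = 0 := by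
    intro k
    set δ : ℝ := 1 / ((k : ℝ) + 1) with hδ_def
    have hδ : 0 < δ := by positivity
    set A : Set X := {x | c x ≤ r - δ} with hA_def
    have hAV : MeasurableSet[V] A := hcm.measurable measurableSet_Iic
    have hA : MeasurableSet[mX] A := hV _ hAV
    have hμA : μ A ≠ ⊤ := measure_ne_top μ A
    set g : X → ℝ := A.indicator (fun _ => (1 : ℝ)) with hg_def
    have hg : MemLp g p μ := memLp_indicator_one μ hA p
    have hg0' : ∀ x, 0 ≤ g x := fun x => Set.indicator_nonneg (fun _ _ => zero_le_one) x
    have hg0 : 0 ≤ᵐ[μ] g := Filter.Eventually.of_forall hg0'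
    have hgV : AEStronglyMeasurable[V] g μ :=
      StronglyMeasurable.aestronglyMeasurable
        (stronglyMeasurable_const.indicator hAV)
    set h : ℕ → X → ℝ := fun n x => min (max ((n : ℝ) * f x) 0) (g x) with hh_def
    have hh_nonneg : ∀ n x, 0 ≤ h n x := fun n x => le_min (le_max_right _ _) (hg0' x)
    have hco : ∀ n x, (‖h n x‖₊ : ℝ≥0∞) = ENNReal.ofReal (h n x) := fun n x => by
      rw [← enorm_eq_nnnorm, ← ofReal_norm, Real.norm_of_nonneg (hh_nonneg n x)]
    -- measurability
    have hgm : Measurable[mX] g := measurable_const.indicator hA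
    have hhm : ∀ n : ℕ, Measurable[mX] (h n) := fun n =>
      ((measurable_const.mul hfm).max measurable_const).min hgm
    have h_meas : ∀ n : ℕ, Measurable[mX] fun x => (‖h n x‖₊ : ℝ≥0∞) ^ q := fun n =>
      meas_helper (hhm n) q
    -- monotonicity
    have h_mono : ∀ x, Monotone fun n : ℕ => (‖h n x‖₊ : ℝ≥0∞) ^ q := by
      intro x i j hij
      have hle : h i x ≤ h j x := by
        refine min_le_min ?_ le_rfl
        rcases le_or_gt (f x) 0 with hfx | hfx
        · rw [max_eq_right (mul_nonpos_iff.mpr (Or.inl ⟨Nat.cast_nonneg i, hfx⟩)),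
            max_eq_right (mul_nonpos_iff.mpr (Or.inl ⟨Nat.cast_nonneg j, hfx⟩))]
        · exact max_le_max (mul_le_mul_of_nonneg_right (Nat.cast_le.mpr hij) hfx.le) le_rfl
      show (‖h i x‖₊ : ℝ≥0∞) ^ q ≤ (‖h j x‖₊ : ℝ≥0∞) ^ q
      rw [hco i x, hco j x]
      exact ENNReal.rpow_le_rpow (ENNReal.ofReal_le_ofReal hle) hq0.le
    -- pointwise supremum
    have h_sup : ∀ x, (⨆ n : ℕ, (‖h n x‖₊ : ℝ≥0∞) ^ q)
        = (A ∩ Sᶜ).indicator (fun _ => (1 : ℝ≥0∞)) x := by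
      intro x
      by_cases hfx : f x ≤ 0
      · have hzero : ∀ n : ℕ, h n x = 0 := fun n => by
          rw [hh_def]
          simp only
          rw [max_eq_right (mul_nonpos_iff.mpr (Or.inl ⟨Nat.cast_nonneg n, hfx⟩)),
            min_eq_left (hg0' x)]
        have hxS : x ∈ S := hfx
        rw [Set.indicator_of_notMem (fun hmem => hmem.2 hxS)]
        simp only [hzero, nnnorm_zero, ENNReal.coe_zero]
        rw [ENNReal.zero_rpow_of_pos hq0]
        simp
      · by_cases hxA : x ∈ A
        · have hmem : x ∈ A ∩ Sᶜ := ⟨hxA, hfx⟩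
          have hgx : g x = 1 := Set.indicator_of_mem hxA _
          rw [Set.indicator_of_mem hmem]
          refine le_antisymm (iSup_le fun n => ?_) ?_
          · rw [hco n x]
            have hle1 : h n x ≤ 1 := by rw [← hgx]; exact min_le_right _ _
            calc (ENNReal.ofReal (h n x)) ^ q ≤ (1 : ℝ≥0∞) ^ q := by
                  refine ENNReal.rpow_le_rpow ?_ hq0.le
                  rw [← ENNReal.ofReal_one]
                  exact ENNReal.ofReal_le_ofReal hle1
              _ = 1 := ENNReal.one_rpow q
          · have hfx' : 0 < f x := lt_of_not_ge hfx
            obtain ⟨m, hm⟩ := exists_nat_ge (1 / f x)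
            have h2 : (1 : ℝ) ≤ (m : ℝ) * f x := by
              rw [div_le_iff₀ hfx'] at hm
              linarith
            have hhm1 : h m x = 1 := by
              rw [hh_def]
              simp only
              rw [hgx, max_eq_left (le_trans zero_le_one h2),
                min_eq_right h2]
            refine le_trans ?_ (le_iSup (fun n : ℕ => (‖h n x‖₊ : ℝ≥0∞) ^ q) m)
            rw [hhm1]
            simp [ENNReal.one_rpow]
        · have hzero : ∀ n : ℕ, h n x = 0 := fun n => by
            have hgx : g x = 0 := Set.indicator_of_notMem hxA _
            rw [hh_def]
            simp only
            rw [hgx, min_eq_right (le_max_right _ _)]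
          rw [Set.indicator_of_notMem (fun hmem => hxA hmem.1)]
          simp only [hzero, nnnorm_zero, ENNReal.coe_zero]
          rw [ENNReal.zero_rpow_of_pos hq0]
          simp
    -- monotone convergence
    have h_lim : μ (A ∩ Sᶜ) = ⨆ n : ℕ, ∫⁻ x, (‖h n x‖₊ : ℝ≥0∞) ^ q ∂μ := by
      rw [← lintegral_indicator_one (hA.inter hS.compl),
        ← lintegral_iSup h_meas (fun i j hij => fun x => h_mono x hij)]
      exact lintegral_congr fun x => (h_sup x).symm
    -- bound each term
    have h_bound : ∀ n : ℕ, ∫⁻ x, (‖h n x‖₊ : ℝ≥0∞) ^ q ∂μ ≤ ENNReal.ofReal (1 - r) * μ A := by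
      intro n
      have hb' := hb g hg hg0 hgV n
      have hgnorm : eLpNorm g p μ = μ A ^ (1 / q) := by
        rw [hg_def, eLpNorm_indicator_one hA hp0 hp']
      rw [eLpNorm_eq_lintegral_rpow_enorm_toReal hp0 hp', hgnorm] at hb'
      simp only [enorm_eq_nnnorm] at hb'
      have hb2 := ENNReal.rpow_le_rpow hb' hq0.le
      have hL : ((∫⁻ x, (‖h n x‖₊ : ℝ≥0∞) ^ q ∂μ) ^ (1 / q)) ^ q
          = ∫⁻ x, (‖h n x‖₊ : ℝ≥0∞) ^ q ∂μ := by
        rw [← ENNReal.rpow_mul, one_div_mul_cancel hq0.ne', ENNReal.rpow_one]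
      have hR : (ENNReal.ofReal ((1 - r) ^ (1 / q)) * μ A ^ (1 / q)) ^ q
          = ENNReal.ofReal (1 - r) * μ A := by
        rw [ENNReal.mul_rpow_of_nonneg _ _ hq0.le,
          ENNReal.ofReal_rpow_of_nonneg (Real.rpow_nonneg h1r _) hq0.le,
          ← Real.rpow_mul h1r, one_div_mul_cancel hq0.ne', Real.rpow_one,
          ← ENNReal.rpow_mul, one_div_mul_cancel hq0.ne', ENNReal.rpow_one]
      rw [hL, hR] at hb2
      exact hb2
    have h_ineq1 : μ (A ∩ Sᶜ) ≤ ENNReal.ofReal (1 - r) * μ A := by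
      rw [h_lim]
      exact iSup_le h_bound
    -- conditional expectation set integral
    have h_setint : ∫ x in A, c x ∂μ = ∫ x in A, χS x ∂μ :=
      setIntegral_condExp hV hχS_int hAV
    have h_intχS : ∫ x in A, χS x ∂μ = (μ (S ∩ A)).toReal := by
      rw [hχS_def, setIntegral_indicator_one hS, Measure.restrict_apply hS]
    have hc_int : Integrable c μ := integrable_condExp
    have h_le1 : ∫ x in A, c x ∂μ ≤ (r - δ) * (μ A).toReal :=
      setIntegral_le_const hc_int hA (fun x (hx : x ∈ A) => hx)
    have h_s : (μ (S ∩ A)).toReal ≤ (r - δ) * (μ A).toReal := by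
      rw [← h_intχS, ← h_setint]; exact h_le1
    have h_t : (μ (A ∩ Sᶜ)).toReal ≤ (1 - r) * (μ A).toReal := by
      have hmono := ENNReal.toReal_mono
        (ENNReal.mul_ne_top ENNReal.ofReal_ne_top hμA) h_ineq1
      rwa [ENNReal.toReal_mul, ENNReal.toReal_ofReal h1r] at hmono
    have h_split : (μ (A ∩ S)).toReal + (μ (A ∩ Sᶜ)).toReal = (μ A).toReal := by
      rw [← ENNReal.toReal_add (measure_ne_top _ _) (measure_ne_top _ _)]
      congr 1
      rw [show A ∩ Sᶜ = A \ S from (Set.diff_eq A S).symm]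
      exact measure_inter_add_diff A hS
    have hAa : (0 : ℝ) ≤ (μ A).toReal := ENNReal.toReal_nonneg
    have hcomm : (μ (A ∩ S)).toReal = (μ (S ∩ A)).toReal := by rw [Set.inter_comm]
    have hda : δ * (μ A).toReal ≤ 0 := by nlinarith
    have ha0 : (μ A).toReal = 0 := by
      have hle0 : (μ A).toReal ≤ 0 := by
        by_contra hcon
        push_neg at hcon
        nlinarith [mul_pos hδ hcon]
      linarith
    exact ((ENNReal.toReal_eq_zero_iff _).mp ha0).resolve_right hμA
  -- conclude
  rw [Filter.eventually_iff, mem_ae_iff]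
  have hsub : {x | r ≤ c x}ᶜ ⊆ ⋃ k : ℕ, {x | c x ≤ r - 1 / ((k : ℝ) + 1)} := by
    intro x hx
    simp only [Set.mem_compl_iff, Set.mem_setOf_eq, not_le] at hx
    obtain ⟨k, hk⟩ := exists_nat_one_div_lt (sub_pos.mpr hx)
    exact Set.mem_iUnion.mpr ⟨k, by simp only [Set.mem_setOf_eq]; linarith⟩
  exact measure_mono_null hsub (measure_iUnion_null hA_null)

/-- For `f ∈ Lp(μ)` over a probability space and `r ∈ [0,1]`,
`μ[χ_{f ≤ 0} | V] ≥ r` a.e. iff for every nonnegative a.e. `V`-measurable `g ∈ Lp(μ)` and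
every `n ∈ ℕ`, `‖(n·f)⁺ ⊓ g‖_p ≤ (1 - r)^{1/p} ‖g‖_p`. -/
theorem condexp_indicator_le_iff_norm_min_le
    {X : Type*} {mX : MeasurableSpace X} (μ : Measure X) [IsProbabilityMeasure μ]
    (p : ℝ≥0∞) (hp : 1 ≤ p) (hp' : p ≠ ⊤)
    (V : MeasurableSpace X) (hV : V ≤ mX)
    (f : X → ℝ) (hf : MemLp f p μ) (r : ℝ) (hr : r ∈ Set.Icc (0 : ℝ) 1) :
    (∀ᵐ x ∂μ, r ≤ (μ[Set.indicator {y | f y ≤ 0} (fun _ => (1 : ℝ)) | V]) x) ↔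
      (∀ g : X → ℝ, MemLp g p μ → 0 ≤ᵐ[μ] g → AEStronglyMeasurable[V] g μ →
        ∀ n : ℕ,
          eLpNorm (fun x => min (max ((n : ℝ) * f x) 0) (g x)) p μ
            ≤ ENNReal.ofReal ((1 - r) ^ (1 / p.toReal)) * eLpNorm g p μ) := by
  obtain ⟨f', hf'm, hff'⟩ := hf.aestronglyMeasurable
  have hf'meas : Measurable[mX] f' := hf'm.measurable
  have hf' : MemLp f' p μ := (memLp_congr_ae hff').mp hf
  have hind : Set.indicator {y | f y ≤ 0} (fun _ => (1 : ℝ))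
      =ᵐ[μ] Set.indicator {y | f' y ≤ 0} (fun _ => (1 : ℝ)) := by
    filter_upwards [hff'] with x hx
    simp only [Set.indicator_apply, Set.mem_setOf_eq, hx]
  have hcond : (μ[Set.indicator {y | f y ≤ 0} (fun _ => (1 : ℝ)) | V])
      =ᵐ[μ] (μ[Set.indicator {y | f' y ≤ 0} (fun _ => (1 : ℝ)) | V]) :=
    condExp_congr_ae hind
  constructor
  · intro hge g hg hg0 hgV n
    have hge' : ∀ᵐ x ∂μ, r ≤ (μ[Set.indicator {y | f' y ≤ 0} (fun _ => (1 : ℝ)) | V]) x := by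
      filter_upwards [hge, hcond] with x h1 h2
      rw [← h2]; exact h1
    have hres := aux_forward μ p hp hp' V hV f' hf' hf'meas r hr hge' g hg hg0 hgV n
    have heq : (fun x => min (max ((n : ℝ) * f x) 0) (g x))
        =ᵐ[μ] fun x => min (max ((n : ℝ) * f' x) 0) (g x) := by
      filter_upwards [hff'] with x hx; rw [hx]
    rwa [eLpNorm_congr_ae heq]
  · intro hb
    have hb' : ∀ g : X → ℝ, MemLp g p μ → 0 ≤ᵐ[μ] g → AEStronglyMeasurable[V] g μ →
        ∀ n : ℕ, eLpNorm (fun x => min (max ((n : ℝ) * f' x) 0) (g x)) p μ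
          ≤ ENNReal.ofReal ((1 - r) ^ (1 / p.toReal)) * eLpNorm g p μ := by
      intro g hg hg0 hgV n
      have heq : (fun x => min (max ((n : ℝ) * f' x) 0) (g x))
          =ᵐ[μ] fun x => min (max ((n : ℝ) * f x) 0) (g x) := by
        filter_upwards [hff'] with x hx; rw [hx]
      rw [eLpNorm_congr_ae heq]
      exact hb g hg hg0 hgV n
    have hres := aux_reverse μ p hp hp' V hV f' hf'meas r hr hb'
    filter_upwards [hres, hcond] with x h1 h2
    rw [h2]; exact h1
end

section
/- Fix 1 ≤ p < ∞. Let (X, 𝒜, μ) be a probability space, V ⊆ 𝒜 a sub-σ-algebra, f ∈ Lp(μ) with f ≥ 0 a.e., t ≥ 0, and r ∈ (0,1). Then the set {x ∈ X : μ[χ_{{f ≥ t}} | V](x) ≥ r} equals, up to a μ-null set, the intersection over all rational r' ∈ (0, r) of the sets {x ∈ X : 𝕊_{r'}(f/V)(x) ≥ t}. -/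
open MeasureTheory ENNReal Filter


/-- `s` is the conditional `r`-slice `𝕊_r(f/V)` of a (nonnegative) `f`: the greatest element,
in the a.e. pointwise order, of the norm-closure of `S_r(f)`. -/
def IsCondSliceOfNonneg {X : Type*} {_mX : MeasurableSpace X} {μ : Measure X} {p : ℝ≥0∞}
    [Fact (1 ≤ p)] (V : MeasurableSpace X) (f : Lp ℝ p μ) (r : ℝ) (s : Lp ℝ p μ) : Prop :=
  s ∈ closure (SrSet V f r) ∧ ∀ g ∈ closure (SrSet V f r), ⇑g ≤ᵐ[μ] ⇑s

section Aux

variable {X : Type*} {mX : MeasurableSpace X} {μ : Measure X} [IsProbabilityMeasure μ]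
  {p : ℝ≥0∞} [Fact (1 ≤ p)] {V : MeasurableSpace X}

lemma indInt {S : Set X} (hS : MeasurableSet[mX] S) :
    Integrable (S.indicator (fun _ => (1 : ℝ))) μ :=
  (integrable_const (1 : ℝ)).indicator hS

/-- Key lemma: if `q' ≤ μ[χ_{g ≤ f}|V]` a.e. and `c ≤ g` a.e. on a `V`-measurable set `B`,
then `q' ≤ μ[χ_{c ≤ f}|V]` a.e. on `B`. -/
lemma key_on_set (hV : V ≤ mX) (f g : Lp ℝ p μ) {B : Set X} (hB : MeasurableSet[V] B)
    {q' c : ℝ}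
    (hq : ∀ᵐ x ∂μ, q' ≤ (μ[Set.indicator {y | g y ≤ f y} (fun _ => (1 : ℝ)) | V]) x)
    (hBg : ∀ᵐ x ∂μ, x ∈ B → c ≤ g x) :
    ∀ᵐ x ∂μ, x ∈ B → q' ≤ (μ[Set.indicator {y | c ≤ f y} (fun _ => (1 : ℝ)) | V]) x := by
  haveI : SigmaFinite (μ.trim hV) := (isFiniteMeasure_trim hV).toSigmaFinite
  set S : Set X := {y | g y ≤ f y} with hSdef
  have hS : MeasurableSet[mX] S :=
    measurableSet_le (Lp.stronglyMeasurable g).measurable (Lp.stronglyMeasurable f).measurable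
  set T : Set X := {y | c ≤ f y} with hTdef
  have hT : MeasurableSet[mX] T :=
    measurableSet_le measurable_const (Lp.stronglyMeasurable f).measurable
  have hintS : Integrable (S.indicator fun _ => (1 : ℝ)) μ := indInt hS
  have hintT : Integrable (T.indicator fun _ => (1 : ℝ)) μ := indInt hT
  have hintBS : Integrable (B.indicator (S.indicator fun _ => (1 : ℝ))) μ := by
    rw [Set.indicator_indicator]
    exact indInt ((hV B hB).inter hS)
  have h1 : B.indicator (S.indicator fun _ => (1 : ℝ)) ≤ᵐ[μ] T.indicator fun _ => (1 : ℝ) := by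
    filter_upwards [hBg] with x hx
    by_cases hxB : x ∈ B
    · by_cases hxS : x ∈ S
      · have hxT : x ∈ T := le_trans (hx hxB) hxS
        simp [Set.indicator_of_mem, hxB, hxS, hxT]
      · simp only [Set.indicator_of_mem hxB, Set.indicator_of_notMem hxS]
        exact Set.indicator_nonneg (fun _ _ => zero_le_one) x
    · simp only [Set.indicator_of_notMem hxB]
      exact Set.indicator_nonneg (fun _ _ => zero_le_one) x
  have h2 : μ[B.indicator (S.indicator fun _ => (1 : ℝ))|V]
      =ᵐ[μ] B.indicator (μ[S.indicator fun _ => (1 : ℝ)|V]) :=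
    condExp_indicator hintS hB
  have h3 : μ[B.indicator (S.indicator fun _ => (1 : ℝ))|V]
      ≤ᵐ[μ] μ[T.indicator fun _ => (1 : ℝ)|V] :=
    condExp_mono hintBS hintT h1
  filter_upwards [hq, h2, h3] with x hqx h2x h3x hxB
  calc q' ≤ (μ[S.indicator fun _ => (1 : ℝ)|V]) x := hqx
    _ = B.indicator (μ[S.indicator fun _ => (1 : ℝ)|V]) x := (Set.indicator_of_mem hxB _).symm
    _ = (μ[B.indicator (S.indicator fun _ => (1 : ℝ))|V]) x := h2x.symm
    _ ≤ (μ[T.indicator fun _ => (1 : ℝ)|V]) x := h3x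

end Aux

section Fwd

variable {X : Type*} {mX : MeasurableSpace X} {μ : Measure X} [IsProbabilityMeasure μ]
  {p : ℝ≥0∞} [Fact (1 ≤ p)] {V : MeasurableSpace X}

/-- Forward direction: a.e. on `{r ≤ μ[χ_{t ≤ f}|V]}`, any conditional `q`-slice with `q < r`
is at least `t`. -/
lemma fwd_lemma (hV : V ≤ mX) (f : Lp ℝ p μ) (hf : 0 ≤ᵐ[μ] ⇑f) {t : ℝ} (ht : 0 ≤ t)
    {r q : ℝ} (hr1 : r < 1) (hqr : q < r) (s : Lp ℝ p μ)
    (hslice : IsCondSliceOfNonneg V f q s) :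
    ∀ᵐ x ∂μ, r ≤ (μ[Set.indicator {y | t ≤ f y} (fun _ => (1 : ℝ)) | V]) x → t ≤ s x := by
  haveI : SigmaFinite (μ.trim hV) := (isFiniteMeasure_trim hV).toSigmaFinite
  set E : X → ℝ := μ[Set.indicator {y | t ≤ f y} (fun _ => (1 : ℝ)) | V] with hE
  set A : Set X := {x | r ≤ E x} with hA
  have hAmeas : MeasurableSet[V] A :=
    measurableSet_le measurable_const stronglyMeasurable_condExp.measurable
  set g : Lp ℝ p μ := indicatorConstLp p (hV A hAmeas) (measure_ne_top μ A) t with hg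
  have hg_coe : ⇑g =ᵐ[μ] A.indicator (fun _ => t) := indicatorConstLp_coeFn
  have hTmeas : MeasurableSet[mX] {y | t ≤ f y} :=
    measurableSet_le measurable_const (Lp.stronglyMeasurable f).measurable
  have hSmeas : MeasurableSet[mX] {y | g y ≤ f y} :=
    measurableSet_le (Lp.stronglyMeasurable g).measurable (Lp.stronglyMeasurable f).measurable
  have hintT : Integrable (Set.indicator {y | t ≤ f y} fun _ => (1 : ℝ)) μ := indInt hTmeas
  have hintS : Integrable (Set.indicator {y | g y ≤ f y} fun _ => (1 : ℝ)) μ := indInt hSmeas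
  have hintAT : Integrable (A.indicator (Set.indicator {y | t ≤ f y} fun _ => (1 : ℝ))) μ := by
    rw [Set.indicator_indicator]
    exact indInt ((hV A hAmeas).inter hTmeas)
  have hintAc : Integrable (Aᶜ.indicator fun _ => (1 : ℝ)) μ := indInt (hV A hAmeas).compl
  -- the comparison of indicators
  have hle : A.indicator (Set.indicator {y | t ≤ f y} fun _ => (1 : ℝ))
        + Aᶜ.indicator (fun _ => (1 : ℝ))
      ≤ᵐ[μ] Set.indicator {y | g y ≤ f y} fun _ => (1 : ℝ) := by
    filter_upwards [hg_coe, hf] with x hgx hfx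
    by_cases hxA : x ∈ A
    · have hxAc : x ∉ Aᶜ := fun h => h hxA
      simp only [Pi.add_apply, Set.indicator_of_mem hxA, Set.indicator_of_notMem hxAc, add_zero]
      by_cases hxT : x ∈ {y | t ≤ f y}
      · have hxS : x ∈ {y | g y ≤ f y} := by
          show g x ≤ f x
          rw [hgx, Set.indicator_of_mem hxA]
          exact hxT
        simp [Set.indicator_of_mem, hxT, hxS]
      · simp only [Set.indicator_of_notMem hxT]
        exact Set.indicator_nonneg (fun _ _ => zero_le_one) x
    · have hxS : x ∈ {y | g y ≤ f y} := by
        show g x ≤ f x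
        rw [hgx, Set.indicator_of_notMem hxA]
        exact hfx
      rw [Pi.add_apply, Set.indicator_of_notMem hxA, Set.indicator_of_mem hxS,
        Set.indicator_of_mem (Set.mem_compl hxA), zero_add]
  -- condexp computations
  have c1 : μ[A.indicator (Set.indicator {y | t ≤ f y} fun _ => (1 : ℝ))
        + Aᶜ.indicator (fun _ => (1 : ℝ))|V]
      =ᵐ[μ] μ[A.indicator (Set.indicator {y | t ≤ f y} fun _ => (1 : ℝ))|V]
        + μ[Aᶜ.indicator (fun _ => (1 : ℝ))|V] := condExp_add hintAT hintAc V
  have c2 : μ[A.indicator (Set.indicator {y | t ≤ f y} fun _ => (1 : ℝ))|V]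
      =ᵐ[μ] A.indicator E := condExp_indicator hintT hAmeas
  have c3 : μ[Aᶜ.indicator (fun _ => (1 : ℝ))|V] = Aᶜ.indicator (fun _ => (1 : ℝ)) :=
    condExp_of_stronglyMeasurable hV
      ((@stronglyMeasurable_const X ℝ V _ 1).indicator hAmeas.compl) hintAc
  have c4 : μ[A.indicator (Set.indicator {y | t ≤ f y} fun _ => (1 : ℝ))
        + Aᶜ.indicator (fun _ => (1 : ℝ))|V]
      ≤ᵐ[μ] μ[Set.indicator {y | g y ≤ f y} fun _ => (1 : ℝ)|V] :=
    condExp_mono (hintAT.add hintAc) hintS hle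
  have hcond : ∀ᵐ x ∂μ, r ≤ (μ[Set.indicator {y | g y ≤ f y} (fun _ => (1 : ℝ)) | V]) x := by
    filter_upwards [c1, c2, c4] with x h1x h2x h4x
    have step : r ≤ A.indicator E x + Aᶜ.indicator (fun _ => (1 : ℝ)) x := by
      by_cases hxA : x ∈ A
      · have hxAc : x ∉ Aᶜ := fun h => h hxA
        rw [Set.indicator_of_mem hxA, Set.indicator_of_notMem hxAc, add_zero]
        exact hxA
      · rw [Set.indicator_of_notMem hxA, Set.indicator_of_mem (Set.mem_compl hxA), zero_add]
        exact hr1.le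
    calc r ≤ A.indicator E x + Aᶜ.indicator (fun _ => (1 : ℝ)) x := step
      _ = (μ[A.indicator (Set.indicator {y | t ≤ f y} fun _ => (1 : ℝ))|V]) x
          + (μ[Aᶜ.indicator (fun _ => (1 : ℝ))|V]) x := by rw [h2x, c3]
      _ = (μ[A.indicator (Set.indicator {y | t ≤ f y} fun _ => (1 : ℝ))
            + Aᶜ.indicator (fun _ => (1 : ℝ))|V]) x := by rw [h1x]; rfl
      _ ≤ _ := h4x
  -- membership of g in SrSet
  have hgmem : g ∈ SrSet V f q := by
    refine ⟨?_, ⟨A.indicator (fun _ => t),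
      (@stronglyMeasurable_const X ℝ V _ t).indicator hAmeas, hg_coe⟩, r, hqr, hcond⟩
    filter_upwards [hg_coe] with x hx
    rw [Pi.zero_apply, hx]
    exact Set.indicator_nonneg (fun _ _ => ht) x
  have hgs : ⇑g ≤ᵐ[μ] ⇑s := hslice.2 g (subset_closure hgmem)
  filter_upwards [hgs, hg_coe] with x h1 h2 hrx
  have hxA : x ∈ A := hrx
  calc t = A.indicator (fun _ => t) x := (Set.indicator_of_mem hxA (fun _ => t)).symm
    _ = g x := h2.symm
    _ ≤ s x := h1

end Fwd

section Bwd

variable {X : Type*} {mX : MeasurableSpace X} {μ : Measure X} [IsProbabilityMeasure μ]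
  {p : ℝ≥0∞} [Fact (1 ≤ p)] {V : MeasurableSpace X}

set_option synthInstance.maxHeartbeats 1000000 in
/-- Backward direction: a.e. on `{t ≤ s}`, where `s` is the conditional `q`-slice of `f`,
we have `q ≤ μ[χ_{t ≤ f}|V]`. -/
lemma bwd_lemma (hV : V ≤ mX) (f : Lp ℝ p μ) (t : ℝ) {q : ℝ} (s : Lp ℝ p μ)
    (hslice : IsCondSliceOfNonneg V f q s) :
    ∀ᵐ x ∂μ, t ≤ s x → q ≤ (μ[Set.indicator {y | t ≤ f y} (fun _ => (1 : ℝ)) | V]) x := by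
  haveI : SigmaFinite (μ.trim hV) := (isFiniteMeasure_trim hV).toSigmaFinite
  obtain ⟨g, hgmem, hgtend⟩ := mem_closure_iff_seq_limit.1 hslice.1
  obtain ⟨ns, -, hns⟩ := (tendstoInMeasure_of_tendsto_Lp hgtend).exists_seq_tendsto_ae
  set ε : ℕ → ℝ := fun k => (k + 1 : ℝ)⁻¹ with hεdef
  have hεpos : ∀ k, 0 < ε k := fun k => by positivity
  have hεlim : Filter.Tendsto ε Filter.atTop (nhds 0) := by
    simpa [hεdef, one_div] using tendsto_one_div_add_atTop_nhds_zero_nat (𝕜 := ℝ)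
  set G : ℕ → X → ℝ := fun n => ((hgmem n).2.1).mk ⇑(g n) with hGdef
  have hGmeas : ∀ n, StronglyMeasurable[V] (G n) := fun n => ((hgmem n).2.1).stronglyMeasurable_mk
  have hGeq : ∀ n, ⇑(g n) =ᵐ[μ] G n := fun n => ((hgmem n).2.1).ae_eq_mk
  -- the family of conditional expectations
  set E : ℕ → X → ℝ :=
    fun k => μ[Set.indicator {y | t - ε k ≤ f y} (fun _ => (1 : ℝ)) | V] with hEdef
  have hkey : ∀ n k : ℕ, ∀ᵐ x ∂μ, t - ε k ≤ G n x → q ≤ E k x := by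
    intro n k
    obtain ⟨q', hqq', hcond⟩ := (hgmem n).2.2
    have hB : MeasurableSet[V] {x | t - ε k ≤ G n x} :=
      measurableSet_le measurable_const (hGmeas n).measurable
    have hBg : ∀ᵐ x ∂μ, x ∈ {x | t - ε k ≤ G n x} → t - ε k ≤ g n x := by
      filter_upwards [hGeq n] with x hx hxB
      rw [hx]; exact hxB
    filter_upwards [key_on_set hV f (g n) hB hcond hBg] with x hx hxB
    exact hqq'.le.trans (hx hxB)
  have hae1 : ∀ᵐ x ∂μ, ∀ n k : ℕ, t - ε k ≤ G n x → q ≤ E k x :=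
    ae_all_iff.2 fun n => ae_all_iff.2 fun k => hkey n k
  have hae2 : ∀ᵐ x ∂μ, ∀ n, g n x = G n x := ae_all_iff.2 fun n => hGeq n
  have step1 : ∀ᵐ x ∂μ, t ≤ s x → ∀ k, q ≤ E k x := by
    filter_upwards [hae1, hae2, hns] with x h1 h2 h3 hts k
    have hev : ∀ᶠ i in Filter.atTop, t - ε k ≤ g (ns i) x :=
      h3.eventually (eventually_ge_nhds (by linarith [hεpos k] : t - ε k < s x))
    obtain ⟨i, hi⟩ := hev.exists
    exact h1 (ns i) k (by rw [← h2 (ns i)]; exact hi)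
  -- convergence of the conditional expectations
  set fs : ℕ → X → ℝ := fun k => Set.indicator {y | t - ε k ≤ f y} (fun _ => (1 : ℝ)) with hfs
  set flim : X → ℝ := Set.indicator {y | t ≤ f y} (fun _ => (1 : ℝ)) with hflim
  have hfsmeas : ∀ k, MeasurableSet[mX] {y | t - ε k ≤ f y} := fun k =>
    measurableSet_le measurable_const (Lp.stronglyMeasurable f).measurable
  have hpt : ∀ x, Filter.Tendsto (fun k => fs k x) Filter.atTop (nhds (flim x)) := by
    intro x
    by_cases hx : t ≤ f x
    · have hmem : ∀ k, x ∈ {y | t - ε k ≤ f y} := fun k => by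
        show t - ε k ≤ f x; linarith [hεpos k]
      have h1 : ∀ k, fs k x = 1 := fun k => Set.indicator_of_mem (hmem k) _
      have h2 : flim x = 1 :=
        Set.indicator_of_mem (show x ∈ {y | t ≤ f y} from hx) (fun _ => (1 : ℝ))
      simp only [h1, h2]
      exact tendsto_const_nhds
    · push_neg at hx
      have h2 : flim x = 0 := Set.indicator_of_notMem (by simpa using hx.not_ge) _
      have hev : ∀ᶠ k in Filter.atTop, fs k x = 0 := by
        filter_upwards [hεlim.eventually (eventually_lt_nhds (by linarith : (0:ℝ) < t - f x))]
          with k hk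
        exact Set.indicator_of_notMem (by simp only [Set.mem_setOf_eq]; linarith) _
      rw [h2]
      exact Filter.Tendsto.congr' (hev.mono fun k hk => hk.symm) tendsto_const_nhds
  have hbound : ∀ k, ∀ᵐ x ∂μ, ‖fs k x‖ ≤ (1 : ℝ) := by
    intro k
    refine Filter.Eventually.of_forall fun x => ?_
    simp only [hfs]
    by_cases hx : x ∈ {y | t - ε k ≤ f y}
    · rw [Set.indicator_of_mem hx]; norm_num
    · rw [Set.indicator_of_notMem hx]; norm_num
  have hL1 : Filter.Tendsto (fun k => condExpL1 hV μ (fs k)) Filter.atTop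
      (nhds (condExpL1 hV μ flim)) :=
    tendsto_condExpL1_of_dominated_convergence hV (fun _ => (1 : ℝ))
      (fun k => (indInt (hfsmeas k)).aestronglyMeasurable) (integrable_const 1)
      hbound (Filter.Eventually.of_forall hpt)
  haveI : Fact ((1 : ℝ≥0∞) ≤ 1) := ⟨le_rfl⟩
  obtain ⟨ks, -, hks⟩ := (tendstoInMeasure_of_tendsto_Lp hL1).exists_seq_tendsto_ae
  have hv : ∀ᵐ x ∂μ, ∀ k, (E k) x = condExpL1 hV μ (fs k) x :=
    ae_all_iff.2 fun k => condExp_ae_eq_condExpL1 hV (fs k)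
  have hv0 : μ[flim|V] =ᵐ[μ] condExpL1 hV μ flim := condExp_ae_eq_condExpL1 hV flim
  filter_upwards [step1, hks, hv, hv0] with x h1 h2 h3 h4 hts
  have hqj : ∀ j, q ≤ condExpL1 hV μ (fs (ks j)) x := fun j => by
    rw [← h3 (ks j)]; exact h1 hts (ks j)
  have : q ≤ condExpL1 hV μ flim x := ge_of_tendsto' h2 hqj
  show q ≤ (μ[flim|V]) x
  rw [h4]; exact this

end Bwd

/-- For nonnegative `f ∈ Lp(μ)`, `t ≥ 0` and `r ∈ (0,1)`, the set
`{x : μ[χ_{f ≥ t}|V](x) ≥ r}` coincides, up to a null set, with the intersection over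
rational `r' ∈ (0,r)` of the sets `{x : 𝕊_{r'}(f/V)(x) ≥ t}`. -/
theorem condexp_indicator_level_set_ae_eq_iInter_slices
    {X : Type*} {mX : MeasurableSpace X} (μ : Measure X) [IsProbabilityMeasure μ]
    (p : ℝ≥0∞) [Fact (1 ≤ p)] (hp' : p ≠ ⊤)
    (V : MeasurableSpace X) (hV : V ≤ mX)
    (f : Lp ℝ p μ) (hf : 0 ≤ᵐ[μ] ⇑f) (t : ℝ) (ht : 0 ≤ t)
    (r : ℝ) (hr : r ∈ Set.Ioo (0 : ℝ) 1)
    (s : ℝ → Lp ℝ p μ)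
    (hs : ∀ r' ∈ Set.Ioo (0 : ℝ) 1, IsCondSliceOfNonneg V f r' (s r')) :
    {x | r ≤ (μ[Set.indicator {y | t ≤ f y} (fun _ => (1 : ℝ)) | V]) x}
      =ᵐ[μ] ⋂ (q : ℚ) (_ : (q : ℝ) ∈ Set.Ioo (0 : ℝ) r), {x | t ≤ s (q : ℝ) x} := by
  have hfwd : ∀ᵐ x ∂μ, ∀ q : ℚ, (q : ℝ) ∈ Set.Ioo (0 : ℝ) r →
      (r ≤ (μ[Set.indicator {y | t ≤ f y} (fun _ => (1 : ℝ)) | V]) x → t ≤ s (q : ℝ) x) := by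
    rw [ae_all_iff]
    intro q
    by_cases hq : (q : ℝ) ∈ Set.Ioo (0 : ℝ) r
    · filter_upwards [fwd_lemma hV f hf ht hr.2 hq.2 (s (q : ℝ))
        (hs (q : ℝ) ⟨hq.1, hq.2.trans hr.2⟩)] with x hx
      exact fun _ => hx
    · exact Filter.Eventually.of_forall fun x h => absurd h hq
  have hbwd : ∀ᵐ x ∂μ, ∀ q : ℚ, (q : ℝ) ∈ Set.Ioo (0 : ℝ) r →
      (t ≤ s (q : ℝ) x → (q : ℝ) ≤ (μ[Set.indicator {y | t ≤ f y} (fun _ => (1 : ℝ)) | V]) x) := by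
    rw [ae_all_iff]
    intro q
    by_cases hq : (q : ℝ) ∈ Set.Ioo (0 : ℝ) r
    · filter_upwards [bwd_lemma hV f t (s (q : ℝ)) (hs (q : ℝ) ⟨hq.1, hq.2.trans hr.2⟩)] with x hx
      exact fun _ => hx
    · exact Filter.Eventually.of_forall fun x h => absurd h hq
  rw [Filter.eventuallyEq_set]
  filter_upwards [hfwd, hbwd] with x h1 h2
  constructor
  · intro hx
    rw [Set.mem_iInter₂]
    exact fun q hq => h1 q hq hx
  · intro hx
    rw [Set.mem_iInter₂] at hx
    show r ≤ (μ[Set.indicator {y | t ≤ f y} (fun _ => (1 : ℝ)) | V]) x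
    by_contra hcon
    push_neg at hcon
    obtain ⟨q, hq1, hq2⟩ := exists_rat_btwn
      (max_lt hcon hr.1 :
        max ((μ[Set.indicator {y | t ≤ f y} (fun _ => (1 : ℝ)) | V]) x) 0 < r)
    have hqIoo : (q : ℝ) ∈ Set.Ioo (0 : ℝ) r := ⟨(le_max_right _ _).trans_lt hq1, hq2⟩
    have := h2 q hqIoo (hx q hqIoo)
    exact absurd this (not_le.2 ((le_max_left _ _).trans_lt hq1))
end
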